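/- arXiv:1911.04603 — 5 statements merged into one kernel-verified Lean document; each statement's English description precedes it below -/
import Mathlib

section
/- Let H be a planar triangulation on s ≥ 3 vertices, and let G be obtained from H by inserting, into each of the 2s − 4 triangular faces {u,v,w}, three new vertices each adjacent to all of u, v, w. Then G has n = 7s − 12 vertices, minimum degree 3, and taking S = V(H), the number of odd components of G \ S exceeds |S| by 5s − 12; consequently every matching of G has size at most (n + 12)/7. -/
open SimpleGraph





/-- Number of odd connected components of the graph induced on the complement of `S`. -/
noncomputable def oddComp {V : Type*} (G : SimpleGraph V) (S : Set V) : ℕ :=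
  Nat.card {c : (G.induce Sᶜ).ConnectedComponent // Odd (Nat.card c.supp)}

/-- A 1-planar drawing of a graph: vertices are points in the plane, edges are
simple curves between their endpoints avoiding other vertices, and every edge
contains at most one crossing point with other edges. -/
structure OnePlanarDrawing {V : Type*} (G : SimpleGraph V) where
  vert : V → ℝ × ℝ
  vert_inj : Function.Injective vert
  curve : G.edgeSet → ℝ → ℝ × ℝ
  curve_cont : ∀ e, ContinuousOn (curve e) (Set.Icc 0 1)
  curve_inj : ∀ e, Set.InjOn (curve e) (Set.Icc 0 1)
  curve_ends : ∀ (e : G.edgeSet) (u v : V), (e : Sym2 V) = s(u, v) →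
    ({curve e 0, curve e 1} : Set (ℝ × ℝ)) = {vert u, vert v}
  interior_avoid : ∀ (e : G.edgeSet), ∀ t ∈ Set.Ioo (0:ℝ) 1, ∀ v, curve e t ≠ vert v
  one_cross : ∀ e : G.edgeSet,
    Set.Subsingleton {p : ℝ × ℝ | ∃ f : G.edgeSet, f ≠ e ∧
      p ∈ curve e '' Set.Ioo (0:ℝ) 1 ∧ p ∈ curve f '' Set.Ioo (0:ℝ) 1}

/-- A graph is 1-planar if it admits a 1-planar drawing. -/
def OnePlanar {V : Type*} (G : SimpleGraph V) : Prop := Nonempty (OnePlanarDrawing G)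

/-- An edge is crossed in a drawing if its interior meets the interior of another edge. -/
def OnePlanarDrawing.Crossed {V : Type*} {G : SimpleGraph V} (D : OnePlanarDrawing G)
    (e : G.edgeSet) : Prop :=
  ∃ f : G.edgeSet, f ≠ e ∧
    (D.curve e '' Set.Ioo (0:ℝ) 1 ∩ D.curve f '' Set.Ioo (0:ℝ) 1).Nonempty


lemma edgeless_supp {W : Type*} {K : SimpleGraph W} (hK : ∀ a b, ¬ K.Adj a b) (v : W) :
    (K.connectedComponentMk v).supp = {v} := by
  ext w
  simp only [ConnectedComponent.mem_supp_iff, Set.mem_singleton_iff, ConnectedComponent.eq]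
  constructor
  · rintro ⟨p⟩
    cases p with
    | nil => rfl
    | cons h _ => exact absurd h (hK _ _)
  · rintro rfl; exact Reachable.refl _

lemma edgeless_oddcard {W : Type*} {K : SimpleGraph W} (hK : ∀ a b, ¬ K.Adj a b) :
    Nat.card {c : K.ConnectedComponent // Odd (Nat.card c.supp)} = Nat.card W := by
  symm
  apply Nat.card_eq_of_bijective
    (fun v => ⟨K.connectedComponentMk v, by
      rw [edgeless_supp hK]
      simp [Nat.card_coe_set_eq]⟩)
  constructor
  · intro v w h
    have h1 : K.connectedComponentMk v = K.connectedComponentMk w := congrArg Subtype.val h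
    have h2 := congrArg ConnectedComponent.supp h1
    rw [edgeless_supp hK, edgeless_supp hK] at h2
    exact Set.singleton_eq_singleton_iff.mp h2
  · rintro ⟨c, hc⟩
    refine c.ind (fun v _ => ⟨v, rfl⟩) hc

theorem stmt4 {V : Type*} [Fintype V] (s : ℕ) (hs : 3 ≤ s)
    (hcard : Fintype.card V = s)
    (H : SimpleGraph V)
    (hplanar : ∃ D : OnePlanarDrawing H, ∀ e, ¬ D.Crossed e)
    (htriang : Nat.card H.edgeSet = 3 * s - 6)
    (F : Type*) [Fintype F] (hF : Fintype.card F = 2 * s - 4)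
    (tri : F → Finset V)
    (htri : ∀ f, (tri f).card = 3 ∧ ∀ u ∈ tri f, ∀ v ∈ tri f, u ≠ v → H.Adj u v)
    (hcover : ∀ v : V, ∃ f, v ∈ tri f)
    (G : SimpleGraph (V ⊕ F × Fin 3))
    (hG : ∀ a b, G.Adj a b ↔
      ((∃ u v, a = Sum.inl u ∧ b = Sum.inl v ∧ H.Adj u v)
        ∨ (∃ u f i, a = Sum.inl u ∧ b = Sum.inr (f, i) ∧ u ∈ tri f)
        ∨ (∃ u f i, b = Sum.inl u ∧ a = Sum.inr (f, i) ∧ u ∈ tri f))) :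
    Fintype.card (V ⊕ F × Fin 3) = 7 * s - 12 ∧
    (∀ x, 3 ≤ Nat.card (G.neighborSet x)) ∧
    (∃ x, Nat.card (G.neighborSet x) = 3) ∧
    (oddComp G (Set.range Sum.inl) : ℤ) - Nat.card (Set.range (Sum.inl : V → V ⊕ F × Fin 3))
      = 5 * (s : ℤ) - 12 ∧
    ∀ M : G.Subgraph, M.IsMatching →
      (M.edgeSet.ncard : ℚ) ≤ ((Fintype.card (V ⊕ F × Fin 3) : ℚ) + 12) / 7 := by
  have hVne : Nonempty V := Fintype.card_pos_iff.mp (by omega)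
  have hcardSum : Fintype.card (V ⊕ F × Fin 3) = 7 * s - 12 := by
    simp only [Fintype.card_sum, Fintype.card_prod, Fintype.card_fin, hcard, hF]
    omega
  -- degree of an inr vertex is 3
  have hinr : ∀ (f : F) (i : Fin 3),
      Nat.card (G.neighborSet (Sum.inr (f, i))) = 3 := by
    intro f i
    have hset : G.neighborSet (Sum.inr (f, i)) = Sum.inl '' (tri f : Set V) := by
      ext a
      simp only [mem_neighborSet, hG, Set.mem_image, Finset.mem_coe]
      constructor
      · rintro (⟨u, v, h1, -⟩ | ⟨u, f', i', h1, -⟩ | ⟨u, f', i', h1, h2, h3⟩)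
        · exact absurd h1 (by simp)
        · exact absurd h1 (by simp)
        · obtain ⟨hf, -⟩ := Prod.mk.injEq .. ▸ (Sum.inr.injEq .. ▸ h2)
          exact ⟨u, hf ▸ h3, h1.symm⟩
      · rintro ⟨u, hu, rfl⟩
        exact Or.inr (Or.inr ⟨u, f, i, rfl, rfl, hu⟩)
    rw [hset, Nat.card_coe_set_eq,
      Set.ncard_image_of_injective _ Sum.inl_injective, Set.ncard_coe_finset,
      (htri f).1]
  have hdeg : ∀ x, 3 ≤ Nat.card (G.neighborSet x) := by
    rintro (u | ⟨f, i⟩)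
    · obtain ⟨f, hf⟩ := hcover u
      have hinj : Function.Injective
          (fun i : Fin 3 => (⟨Sum.inr (f, i), by
            simp only [mem_neighborSet, hG]
            exact Or.inr (Or.inl ⟨u, f, i, rfl, rfl, hf⟩)⟩ :
            G.neighborSet (Sum.inl u))) := by
        intro i j h
        have := congrArg Subtype.val h
        simpa using this
      calc 3 = Nat.card (Fin 3) := by simp
        _ ≤ _ := Nat.card_le_card_of_injective _ hinj
    · exact (hinr f i).ge
  -- odd components
  have hScard : Nat.card (Set.range (Sum.inl : V → V ⊕ F × Fin 3)) = s := by
    rw [Nat.card_range_of_injective Sum.inl_injective, Nat.card_eq_fintype_card, hcard]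
  have hodd : oddComp G (Set.range Sum.inl) = 6 * s - 12 := by
    have hK : ∀ a b : ↥(Set.range (Sum.inl : V → V ⊕ F × Fin 3))ᶜ,
        ¬ (G.induce (Set.range Sum.inl)ᶜ).Adj a b := by
      rintro ⟨a, ha⟩ ⟨b, hb⟩ hadj
      have : G.Adj a b := hadj
      rw [hG] at this
      rcases this with ⟨u, v, h1, h2, -⟩ | ⟨u, f, i, h1, h2, -⟩ | ⟨u, f, i, h1, h2, -⟩
      · exact ha (h1 ▸ ⟨u, rfl⟩)
      · exact ha (h1 ▸ ⟨u, rfl⟩)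
      · exact hb (h1 ▸ ⟨u, rfl⟩)
    rw [oddComp, edgeless_oddcard hK]
    have : (Set.range (Sum.inl : V → V ⊕ F × Fin 3))ᶜ = Set.range Sum.inr := by
      ext x; cases x <;> simp
    simp only [this]
    rw [Nat.card_range_of_injective Sum.inr_injective, Nat.card_eq_fintype_card,
      Fintype.card_prod, Fintype.card_fin, hF]
    omega
  refine ⟨hcardSum, hdeg, ?_, ?_, ?_⟩
  · have hFne : Nonempty F := by
      obtain ⟨f, -⟩ := hcover (Classical.arbitrary V)
      exact ⟨f⟩
    exact ⟨Sum.inr (Classical.arbitrary F, 0), hinr _ _⟩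
  · rw [hodd, hScard]; omega
  · intro M hM
    -- every matching edge contains an inl vertex
    have hex : ∀ e ∈ M.edgeSet, ∃ u : V, Sum.inl u ∈ e := by
      intro e he
      induction e using Sym2.ind with
      | _ a b =>
        have : G.Adj a b := M.adj_sub (Subgraph.mem_edgeSet.mp he)
        rw [hG] at this
        rcases this with ⟨u, v, h1, -, -⟩ | ⟨u, f, i, h1, -, -⟩ | ⟨u, f, i, h1, -, -⟩
        · exact ⟨u, h1 ▸ Sym2.mem_mk_left a b⟩
        · exact ⟨u, h1 ▸ Sym2.mem_mk_left a b⟩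
        · exact ⟨u, h1 ▸ Sym2.mem_mk_right a b⟩
    classical
    set pick : Sym2 (V ⊕ F × Fin 3) → V := fun e =>
      if h : ∃ u : V, Sum.inl u ∈ e then h.choose else Classical.arbitrary V with hpick
    have hpickmem : ∀ e ∈ M.edgeSet, Sum.inl (pick e) ∈ e := by
      intro e he
      have h := hex e he
      simp only [hpick, dif_pos h]
      exact h.choose_spec
    have hinjOn : Set.InjOn pick M.edgeSet := by
      intro e he f hf hef
      have he' := hpickmem e he
      have hf' := hpickmem f hf
      rw [hef] at he'
      obtain ⟨x, hxe⟩ := Sym2.mem_iff_exists.mp he'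
      obtain ⟨y, hyf⟩ := Sym2.mem_iff_exists.mp hf'
      have hax : M.Adj (Sum.inl (pick f)) x := Subgraph.mem_edgeSet.mp (hxe ▸ he)
      have hay : M.Adj (Sum.inl (pick f)) y := Subgraph.mem_edgeSet.mp (hyf ▸ hf)
      obtain ⟨w, -, huniq⟩ := hM (M.edge_vert hax)
      have hxy : x = y := (huniq x hax).trans (huniq y hay).symm
      rw [hxy] at hxe
      exact hxe.trans hyf.symm
    have hle : M.edgeSet.ncard ≤ s := by
      have := Set.ncard_le_ncard_of_injOn pick (fun e _ => Set.mem_univ (pick e))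
        hinjOn (Set.finite_univ)
      rwa [Set.ncard_univ, Nat.card_eq_fintype_card, hcard] at this
    rw [hcardSum]
    have h7 : ((7 * s - 12 : ℕ) : ℚ) = 7 * s - 12 := by
      rw [Nat.cast_sub (by omega : 12 ≤ 7 * s)]
      push_cast; ring
    rw [h7]
    rw [le_div_iff₀ (by norm_num : (0:ℚ) < 7)]
    have : (M.edgeSet.ncard : ℚ) ≤ s := by exact_mod_cast hle
    linarith
end

section
/- For k ≥ 1, the graph G obtained by gluing k copies of the complete graph K5 along a common edge has n = 3k + 2 vertices, minimum degree 4, is 1-planar, and every matching of G has size at most (n + 4)/3. -/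
open SimpleGraph

/-- `k` copies of `K₅` glued along a common edge: the two vertices of `Fin 2` are the
shared (adjacent) vertices, and each group `{i} × Fin 3` together with them induces `K₅`;
vertices in different groups are non-adjacent. -/
def glueK5 (k : ℕ) : SimpleGraph (Fin 2 ⊕ Fin k × Fin 3) :=
  SimpleGraph.fromRel (fun a b => ∀ i j x y, a = Sum.inr (i, x) → b = Sum.inr (j, y) → i = j)


noncomputable section
namespace GlueAux
open Complex

/-- Möbius map to the z-plane. -/
def mo (w : ℂ) : ℂ := w / (1 + w)

lemma mo_inj {w w' : ℂ} (h1 : 1 + w ≠ 0) (h2 : 1 + w' ≠ 0) (h : mo w = mo w') : w = w' := by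
  unfold mo at h
  field_simp at h
  linear_combination h

lemma mo_im (w : ℂ) : (mo w).im = w.im / normSq (1 + w) := by
  unfold mo
  rw [Complex.div_im]
  have : (1 + w).re = 1 + w.re := by simp
  have h2 : (1 + w).im = w.im := by simp
  rw [this, h2]; ring

lemma mo_eq_zero {w : ℂ} (h1 : 1 + w ≠ 0) : mo w = 0 ↔ w = 0 := by
  unfold mo; constructor
  · intro h; field_simp at h; simpa using h
  · intro h; simp [h]

lemma mo_ne_one (w : ℂ) : mo w ≠ 1 := by
  unfold mo; intro h
  rcases eq_or_ne (1 + w) 0 with h0 | h0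
  · simp [h0] at h
  · field_simp at h
    exact one_ne_zero (by linear_combination -h : (1:ℂ) = 0)

def epi (θ : ℝ) : ℂ := Complex.exp (θ * I)

lemma epi_im (θ : ℝ) : (epi θ).im = Real.sin θ := by
  simp [epi, Complex.exp_ofReal_mul_I_im]

lemma epi_re (θ : ℝ) : (epi θ).re = Real.cos θ := by
  simp [epi, Complex.exp_ofReal_mul_I_re]

lemma epi_abs (θ : ℝ) : ‖epi θ‖ = 1 := by
  simp [epi, Complex.norm_exp]

lemma epi_ne_zero (θ : ℝ) : epi θ ≠ 0 := Complex.exp_ne_zero _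

lemma epi_inj {θ θ' : ℝ} (h : θ ∈ Set.Ioo 0 Real.pi) (h' : θ' ∈ Set.Ioo 0 Real.pi)
    (he : epi θ = epi θ') : θ = θ' := by
  unfold epi at he
  rw [Complex.exp_eq_exp_iff_exists_int] at he
  obtain ⟨n, hn⟩ := he
  have h2 : ((θ : ℂ)) * I = ((θ' : ℂ) + n * (2 * Real.pi)) * I := by
    push_cast at hn ⊢; linear_combination hn
  have h3 := mul_right_cancel₀ Complex.I_ne_zero h2
  have hr : θ = θ' + n * (2 * Real.pi) := by exact_mod_cast h3
  have hpi := Real.pi_pos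
  have hn0 : n = 0 := by
    by_contra hne
    have h1 : (1 : ℝ) ≤ |(n : ℝ)| := by
      have := Int.one_le_abs hne
      calc (1:ℝ) ≤ (|n| : ℤ) := by exact_mod_cast this
        _ = |(n:ℝ)| := by push_cast; rfl
    have hb : |θ - θ'| < Real.pi := by
      rw [abs_sub_lt_iff]; constructor <;> nlinarith [h.1, h.2, h'.1, h'.2]
    have : |θ - θ'| = |(n:ℝ)| * (2 * Real.pi) := by
      rw [hr]; rw [show θ' + ↑n * (2 * Real.pi) - θ' = ↑n * (2*Real.pi) by ring]
      rw [abs_mul, abs_of_pos (by positivity : (0:ℝ) < 2 * Real.pi)]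
    nlinarith
  rw [hr, hn0]; push_cast; ring

lemma polar_inj {ρ ρ' θ θ' : ℝ} (hρ : 0 < ρ) (hρ' : 0 < ρ')
    (h : θ ∈ Set.Ioo 0 Real.pi) (h' : θ' ∈ Set.Ioo 0 Real.pi)
    (he : (ρ : ℂ) * epi θ = ρ' * epi θ') : ρ = ρ' ∧ θ = θ' := by
  have habs : ρ = ρ' := by
    have := congrArg (‖·‖) he
    simpa [norm_mul, Complex.norm_real, Real.norm_eq_abs, epi_abs, abs_of_pos hρ, abs_of_pos hρ'] using this
  subst habs
  refine ⟨rfl, epi_inj h h' ?_⟩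
  have : (ρ : ℂ) ≠ 0 := by exact_mod_cast hρ.ne'
  exact mul_left_cancel₀ this he


lemma im_pos_ne_neg_one {w : ℂ} (h : 0 < w.im) : 1 + w ≠ 0 := by
  intro h0
  have : w = -1 := by linear_combination h0
  rw [this] at h; simp at h

lemma pw_im (ρ θ : ℝ) : ((ρ : ℂ) * epi θ).im = ρ * Real.sin θ := by
  rw [Complex.mul_im]; simp [epi_im, epi_re]

lemma pw_im_pos {ρ θ : ℝ} (hρ : 0 < ρ) (hθ : θ ∈ Set.Ioo 0 Real.pi) :
    0 < ((ρ : ℂ) * epi θ).im := by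
  rw [pw_im]; exact mul_pos hρ (Real.sin_pos_of_pos_of_lt_pi hθ.1 hθ.2)

lemma pw_ne_neg_one {ρ θ : ℝ} (hρ : 0 ≤ ρ) (hθ : θ ∈ Set.Ioo 0 Real.pi) :
    1 + (ρ : ℂ) * epi θ ≠ 0 := by
  rcases eq_or_lt_of_le hρ with h | h
  · simp [← h]
  · exact im_pos_ne_neg_one (pw_im_pos h hθ)

/-- normalized grid angle -/
def angN (k n : ℕ) : ℝ := Real.pi * n / (3 * k + 2)

lemma angN_lt {k n m : ℕ} (h : n < m) : angN k n < angN k m := by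
  unfold angN
  have hd : (0:ℝ) < 3*(k:ℝ)+2 := by positivity
  have hpi := Real.pi_pos
  rw [div_lt_div_iff₀ hd hd]
  have hnm : (n:ℝ) < m := by exact_mod_cast h
  have := mul_lt_mul_of_pos_right (mul_lt_mul_of_pos_left hnm hpi) hd
  linarith

lemma angN_inj {k n m : ℕ} (h : angN k n = angN k m) : n = m := by
  rcases lt_trichotomy n m with hl | he | hl
  · exact absurd h (angN_lt hl).ne
  · exact he
  · exact absurd h.symm (angN_lt hl).ne

lemma angN_mem {k n : ℕ} (h1 : 1 ≤ n) (h2 : n ≤ 3*k+1) : angN k n ∈ Set.Ioo 0 Real.pi := by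
  unfold angN
  have hd : (0:ℝ) < 3*(k:ℝ)+2 := by positivity
  have hpi := Real.pi_pos
  have hn1 : (1:ℝ) ≤ n := by exact_mod_cast h1
  have hn2 : (n:ℝ) ≤ 3*k+1 := by exact_mod_cast h2
  constructor
  · positivity
  · rw [div_lt_iff₀ hd]; nlinarith


def toPair (z : ℂ) : ℝ × ℝ := (z.re, z.im)

lemma toPair_inj : Function.Injective toPair := by
  intro a b h
  unfold toPair at h
  exact Complex.ext (congrArg Prod.fst h) (congrArg Prod.snd h)

def cuv : ℝ → ℂ := fun t => (t : ℂ)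
def cu (θ : ℝ) : ℝ → ℂ := fun t => mo ((t : ℂ) * epi θ)
def cv (θ : ℝ) : ℝ → ℂ := fun t => epi θ / (((1 - t : ℝ) : ℂ) + epi θ)
def rad (κ t : ℝ) : ℝ := 1 + 4 * κ * t * (1 - t)
def cE (κ α β : ℝ) : ℝ → ℂ := fun t => mo (((rad κ t : ℝ) : ℂ) * epi (α + t * (β - α)))

lemma cv_eq {θ t : ℝ} (hθ : θ ∈ Set.Ioo 0 Real.pi) (ht : t < 1) :
    cv θ t = mo ((((1 - t)⁻¹ : ℝ) : ℂ) * epi θ) := by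
  have hu : (0:ℝ) < 1 - t := by linarith
  have hsin := Real.sin_pos_of_pos_of_lt_pi hθ.1 hθ.2
  have hd1 : ((1 - t : ℝ) : ℂ) + epi θ ≠ 0 := by
    intro h0
    have := congrArg Complex.im h0
    simp [epi_im] at this
    linarith
  have huc : ((1 - t : ℝ) : ℂ) ≠ 0 := by exact_mod_cast hu.ne'
  have hd2 := pw_ne_neg_one (by positivity : (0:ℝ) ≤ (1 - t)⁻¹) hθ
  unfold cv mo
  rw [div_eq_div_iff hd1 hd2]
  have huc2 : (1:ℂ) - (t:ℂ) ≠ 0 := by push_cast at huc; exact huc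
  push_cast
  field_simp

lemma mo_polar_inj {ρ₁ ρ₂ φ₁ φ₂ : ℝ} (h1 : 0 < ρ₁) (h2 : 0 < ρ₂)
    (m1 : φ₁ ∈ Set.Ioo 0 Real.pi) (m2 : φ₂ ∈ Set.Ioo 0 Real.pi)
    (h : mo ((ρ₁ : ℂ) * epi φ₁) = mo ((ρ₂ : ℂ) * epi φ₂)) : ρ₁ = ρ₂ ∧ φ₁ = φ₂ :=
  polar_inj h1 h2 m1 m2 (mo_inj (pw_ne_neg_one h1.le m1) (pw_ne_neg_one h2.le m2) h)

abbrev V (k : ℕ) := Fin 2 ⊕ Fin k × Fin 3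

def vang (k : ℕ) (i : Fin k) (x : Fin 3) : ℝ := angN k (3 * i + x + 1)

lemma vang_mem {k : ℕ} (i : Fin k) (x : Fin 3) : vang k i x ∈ Set.Ioo 0 Real.pi := by
  apply angN_mem
  · omega
  · have := i.isLt
    have := x.isLt
    omega

def raw (k : ℕ) : V k → V k → ℝ → ℂ
  | Sum.inl _, Sum.inl _ => cuv
  | Sum.inl s, Sum.inr (i, x) => if s = 0 then cu (vang k i x) else cv (vang k i x)
  | Sum.inr (i, x), Sum.inl s => if s = 0 then cu (vang k i x) else cv (vang k i x)
  | Sum.inr (i, x), Sum.inr (j, y) =>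
      if i = j ∧ x ≠ y then
        cE ((max (x : ℕ) (y : ℕ) : ℕ) - (min (x : ℕ) (y : ℕ)) - 1)
          (angN k (3 * i + min (x : ℕ) (y : ℕ) + 1)) (angN k (3 * i + max (x : ℕ) (y : ℕ) + 1))
      else fun _ => 0

lemma raw_symm (k : ℕ) (a b : V k) : raw k a b = raw k b a := by
  rcases a with s | ⟨i, x⟩ <;> rcases b with t | ⟨j, y⟩
  · rfl
  · rfl
  · rfl
  · simp only [raw]
    rcases eq_or_ne i j with rfl | hij
    · rcases eq_or_ne x y with rfl | hxy
      · simp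
      · simp only [hxy, hxy.symm, ne_eq, not_false_iff, and_true, if_pos rfl]
        rw [min_comm (y:ℕ) (x:ℕ), max_comm (y:ℕ) (x:ℕ)]
    · simp [hij, hij.symm]

def vert (k : ℕ) : V k → ℝ × ℝ
  | Sum.inl s => ((s : ℕ), 0)
  | Sum.inr (i, x) => toPair (mo (epi (vang k i x)))

def crv {k : ℕ} (e : (glueK5 k).edgeSet) : ℝ → ℝ × ℝ :=
  fun t => toPair (Sym2.lift ⟨raw k, raw_symm k⟩ e.val t)

lemma adj_iff {k : ℕ} {a b : V k} : (glueK5 k).Adj a b ↔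
    a ≠ b ∧ ∀ i j x y, a = Sum.inr (i, x) → b = Sum.inr (j, y) → i = j := by
  unfold glueK5
  rw [SimpleGraph.fromRel_adj]
  constructor
  · rintro ⟨hne, h | h⟩
    · exact ⟨hne, h⟩
    · exact ⟨hne, fun i j x y ha hb => (h j i y x hb ha).symm⟩
  · rintro ⟨hne, h⟩
    exact ⟨hne, Or.inl h⟩

lemma edge_desc {k : ℕ} (e : (glueK5 k).edgeSet) :
    e.val = s(Sum.inl 0, Sum.inl 1) ∨
    (∃ (s : Fin 2) (i : Fin k) (x : Fin 3), e.val = s(Sum.inl s, Sum.inr (i, x))) ∨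
    (∃ (i : Fin k) (x y : Fin 3), x < y ∧ e.val = s(Sum.inr (i, x), Sum.inr (i, y))) := by
  obtain ⟨e, he⟩ := e
  induction e with
  | _ a b =>
    simp only [SimpleGraph.mem_edgeSet, adj_iff] at he
    obtain ⟨hne, hc⟩ := he
    rcases a with s | ⟨i, x⟩ <;> rcases b with t | ⟨j, y⟩
    · left
      fin_cases s <;> fin_cases t <;> first
        | (exfalso; exact hne rfl)
        | rfl
        | (exact Sym2.eq_swap)
    · right; left; exact ⟨s, j, y, rfl⟩
    · right; left; exact ⟨t, i, x, Sym2.eq_swap⟩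
    · have hij : i = j := hc i j x y rfl rfl
      subst hij
      have hxy : x ≠ y := by rintro rfl; exact hne rfl
      right; right
      rcases lt_or_gt_of_ne hxy with h | h
      · exact ⟨i, x, y, h, rfl⟩
      · exact ⟨i, y, x, h, Sym2.eq_swap⟩

lemma crv_mk {k : ℕ} (e : (glueK5 k).edgeSet) {a b : V k} (h : e.val = s(a, b)) :
    crv e = fun t => toPair (raw k a b t) := by
  unfold crv
  rw [h]
  rfl


def angR (k : ℕ) (r : ℝ) : ℝ := Real.pi * r / (3 * k + 2)

lemma angN_eq_angR (k n : ℕ) : angN k n = angR k n := rfl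

lemma angR_inj {k : ℕ} {r r' : ℝ} (h : angR k r = angR k r') : r = r' := by
  unfold angR at h
  have hd : (0:ℝ) < 3*(k:ℝ)+2 := by positivity
  rw [div_eq_div_iff hd.ne' hd.ne'] at h
  have hpi := Real.pi_ne_zero
  have := mul_right_cancel₀ hd.ne' h
  exact mul_left_cancel₀ hpi this

lemma angR_mem {k : ℕ} {r : ℝ} (h0 : 0 < r) (h1 : r < 3*(k:ℝ)+2) :
    angR k r ∈ Set.Ioo 0 Real.pi := by
  unfold angR
  have hd : (0:ℝ) < 3*(k:ℝ)+2 := by positivity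
  have hpi := Real.pi_pos
  constructor
  · positivity
  · rw [div_lt_iff₀ hd]
    nlinarith

lemma vang_inj {k : ℕ} {i j : Fin k} {x y : Fin 3} (h : vang k i x = vang k j y) :
    i = j ∧ x = y := by
  have := angN_inj h
  have hx := x.isLt
  have hy := y.isLt
  have h1 : (i:ℕ) = j ∧ (x:ℕ) = y := by omega
  exact ⟨Fin.ext h1.1, Fin.ext h1.2⟩

lemma cE_angle (k : ℕ) (i : Fin k) (x y : Fin 3) (t : ℝ) :
    vang k i x + t * (vang k i y - vang k i x)
      = angR k (((3*(i:ℕ)+(x:ℕ)+1 : ℕ) : ℝ) + t * (((y:ℕ) : ℝ) - ((x:ℕ) : ℝ))) := by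
  unfold vang angN angR
  push_cast
  ring

lemma one_le_rad {κ t : ℝ} (hκ : 0 ≤ κ) (h0 : 0 ≤ t) (h1 : t ≤ 1) : 1 ≤ rad κ t := by
  unfold rad
  nlinarith [mul_nonneg (mul_nonneg (by linarith : (0:ℝ) ≤ 4*κ) h0) (by linarith : (0:ℝ) ≤ 1 - t)]

lemma rad_zero (κ : ℝ) : rad κ 0 = 1 := by unfold rad; ring
lemma rad_one (κ : ℝ) : rad κ 1 = 1 := by unfold rad; ring
lemma rad_k0 (t : ℝ) : rad 0 t = 1 := by unfold rad; ring
lemma one_lt_rad1 {t : ℝ} (h0 : 0 < t) (h1 : t < 1) : 1 < rad 1 t := by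
  unfold rad; nlinarith

lemma cont_toPair : Continuous toPair :=
  Complex.continuous_re.prodMk Complex.continuous_im

lemma cont_epi {f : ℝ → ℝ} (hf : Continuous f) : Continuous fun t => epi (f t) :=
  Complex.continuous_exp.comp ((Complex.continuous_ofReal.comp hf).mul continuous_const)

lemma cont_mo {f : ℝ → ℂ} {S : Set ℝ} (hf : ContinuousOn f S)
    (h : ∀ t ∈ S, 1 + f t ≠ 0) : ContinuousOn (fun t => mo (f t)) S := by
  unfold mo
  exact hf.div (continuousOn_const.add hf) h

-- raw reduction lemmas
lemma raw_uv (k : ℕ) (s t : Fin 2) : raw k (Sum.inl s) (Sum.inl t) = cuv := rfl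

lemma raw_u (k : ℕ) (i : Fin k) (x : Fin 3) :
    raw k (Sum.inl 0) (Sum.inr (i, x)) = cu (vang k i x) := by
  simp [raw]

lemma raw_v (k : ℕ) (i : Fin k) (x : Fin 3) :
    raw k (Sum.inl 1) (Sum.inr (i, x)) = cv (vang k i x) := by
  simp only [raw]
  norm_num

lemma raw_E (k : ℕ) (i : Fin k) {x y : Fin 3} (hxy : x < y) :
    raw k (Sum.inr (i, x)) (Sum.inr (i, y)) =
      cE ((((y:ℕ) : ℝ)) - (((x:ℕ) : ℝ)) - 1)
        (angN k (3 * i + (x:ℕ) + 1)) (angN k (3 * i + (y:ℕ) + 1)) := by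
  have hxy' : (x:ℕ) < (y:ℕ) := hxy
  have hne : x ≠ y := ne_of_lt hxy
  simp only [raw]
  rw [if_pos (show True ∧ ¬x = y from ⟨trivial, hne⟩)]
  rw [min_eq_left hxy'.le, max_eq_right hxy'.le]


lemma one_add_epi_ne {θ : ℝ} (hθ : θ ∈ Set.Ioo 0 Real.pi) : 1 + epi θ ≠ 0 := by
  have h := pw_ne_neg_one (zero_le_one (α := ℝ)) hθ
  simpa using h

lemma angN_interp (k a b : ℕ) (t : ℝ) :
    angN k a + t * (angN k b - angN k a) = angR k (a + t * ((b:ℝ) - a)) := by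
  unfold angN angR
  ring

lemma cE_form {k : ℕ} (a b : ℕ) (κ t : ℝ) :
    cE κ (angN k a) (angN k b) t
      = mo ((rad κ t : ℝ) * epi (angR k (a + t * ((b:ℝ) - a)))) := by
  unfold cE
  rw [angN_interp]

lemma mo_pw_im_pos {ρ θ : ℝ} (hρ : 0 < ρ) (hθ : θ ∈ Set.Ioo 0 Real.pi) :
    0 < (mo ((ρ:ℂ) * epi θ)).im := by
  rw [mo_im]
  exact div_pos (pw_im_pos hρ hθ) (Complex.normSq_pos.mpr (pw_ne_neg_one hρ.le hθ))

lemma snd_crv {z : ℂ} : (toPair z).2 = z.im := rfl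
lemma fst_crv {z : ℂ} : (toPair z).1 = z.re := rfl


lemma vert_r (k : ℕ) (i : Fin k) (x : Fin 3) :
    vert k (Sum.inr (i, x)) = toPair (mo (epi (vang k i x))) := rfl

lemma vert_inl_im (k : ℕ) (s : Fin 2) : (vert k (Sum.inl s)).2 = 0 := rfl

lemma vert_r_im_pos (k : ℕ) (i : Fin k) (x : Fin 3) : 0 < (vert k (Sum.inr (i, x))).2 := by
  rw [vert_r, snd_crv]
  have h := mo_pw_im_pos one_pos (vang_mem i x)
  simpa using h

lemma vert_inj (k : ℕ) : Function.Injective (vert k) := by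
  intro a b h
  rcases a with s | ⟨i, x⟩ <;> rcases b with t | ⟨j, y⟩
  · have h1 : ((s:ℕ):ℝ) = ((t:ℕ):ℝ) := congrArg Prod.fst h
    have h2 : (s:ℕ) = (t:ℕ) := by exact_mod_cast h1
    exact congrArg Sum.inl (Fin.ext h2)
  · exfalso
    have h2 := congrArg Prod.snd h
    rw [vert_inl_im] at h2
    have h3 := vert_r_im_pos k j y
    rw [← h2] at h3; exact lt_irrefl _ h3
  · exfalso
    have h2 := congrArg Prod.snd h
    rw [vert_inl_im] at h2
    have h3 := vert_r_im_pos k i x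
    rw [h2] at h3; exact lt_irrefl _ h3
  · rw [vert_r, vert_r] at h
    have h1 := toPair_inj h
    have h2 := mo_inj (one_add_epi_ne (vang_mem i x)) (one_add_epi_ne (vang_mem j y)) h1
    have h3 := epi_inj (vang_mem i x) (vang_mem j y) h2
    obtain ⟨rfl, rfl⟩ := vang_inj h3
    rfl

lemma crv_uv_eq {k : ℕ} (e : (glueK5 k).edgeSet)
    (he : e.val = s(Sum.inl 0, Sum.inl 1)) :
    crv e = fun t : ℝ => toPair ((t : ℂ)) := by
  rw [crv_mk e he, raw_uv]; rfl

lemma crv_u_eq {k : ℕ} (e : (glueK5 k).edgeSet) {i : Fin k} {x : Fin 3}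
    (he : e.val = s(Sum.inl 0, Sum.inr (i, x))) :
    crv e = fun t : ℝ => toPair (mo ((t:ℂ) * epi (vang k i x))) := by
  rw [crv_mk e he, raw_u]; rfl

lemma crv_v_eq {k : ℕ} (e : (glueK5 k).edgeSet) {i : Fin k} {x : Fin 3}
    (he : e.val = s(Sum.inl 1, Sum.inr (i, x))) :
    crv e = fun t => toPair (cv (vang k i x) t) := by
  rw [crv_mk e he, raw_v]

lemma crv_E_eq {k : ℕ} (e : (glueK5 k).edgeSet) {i : Fin k} {x y : Fin 3}
    (hxy : x < y) (he : e.val = s(Sum.inr (i, x), Sum.inr (i, y))) :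
    crv e = fun t => toPair (mo (((rad (((y:ℕ):ℝ) - ((x:ℕ):ℝ) - 1) t : ℝ)) *
      epi (angR k (((3*(i:ℕ)+(x:ℕ)+1 : ℕ) : ℝ) +
        t * (((3*(i:ℕ)+(y:ℕ)+1 : ℕ) : ℝ) - ((3*(i:ℕ)+(x:ℕ)+1 : ℕ) : ℝ)))))) := by
  rw [crv_mk e he, raw_E k i hxy]
  funext t
  rw [cE_form]

lemma E_kappa_nonneg {x y : Fin 3} (hxy : x < y) : (0:ℝ) ≤ ((y:ℕ):ℝ) - ((x:ℕ):ℝ) - 1 := by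
  have h : (x:ℕ) + 1 ≤ (y:ℕ) := hxy
  have h' : ((x:ℕ):ℝ) + 1 ≤ ((y:ℕ):ℝ) := by exact_mod_cast h
  linarith

lemma E_ab_bounds {k : ℕ} (i : Fin k) (x y : Fin 3) :
    1 ≤ 3*(i:ℕ)+(x:ℕ)+1 ∧ 3*(i:ℕ)+(y:ℕ)+1 ≤ 3*k := by
  have := i.isLt; have := x.isLt; have := y.isLt
  omega

lemma E_ang_mem {k : ℕ} {a b : ℕ} (ha : 1 ≤ a) (hb : b ≤ 3*k) (hab : a ≤ b) {t : ℝ}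
    (h0 : 0 ≤ t) (h1 : t ≤ 1) :
    angR k ((a:ℝ) + t * ((b:ℝ) - (a:ℝ))) ∈ Set.Ioo 0 Real.pi := by
  have hab' : (a:ℝ) ≤ b := Nat.cast_le.mpr hab
  have ha' : (1:ℝ) ≤ a := by exact_mod_cast ha
  have hb' : (b:ℝ) ≤ 3*(k:ℝ) := by exact_mod_cast hb
  apply angR_mem
  · nlinarith
  · nlinarith

lemma rad_pos {κ t : ℝ} (hκ : 0 ≤ κ) (h0 : 0 ≤ t) (h1 : t ≤ 1) : 0 < rad κ t :=
  lt_of_lt_of_le one_pos (one_le_rad hκ h0 h1)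

lemma cvden_ne {θ : ℝ} (hθ : θ ∈ Set.Ioo 0 Real.pi) (t : ℝ) :
    ((1 - t : ℝ) : ℂ) + epi θ ≠ 0 := by
  intro h0
  have h1 := congrArg Complex.im h0
  simp [epi_im] at h1
  have h2 := Real.sin_pos_of_pos_of_lt_pi hθ.1 hθ.2
  linarith

lemma crv_cont {k : ℕ} (e : (glueK5 k).edgeSet) : ContinuousOn (crv e) (Set.Icc 0 1) := by
  rcases edge_desc e with he | ⟨sE, i, x, he⟩ | ⟨i, x, y, hxy, he⟩
  · rw [crv_uv_eq e he]
    exact (cont_toPair.comp Complex.continuous_ofReal).continuousOn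
  · fin_cases sE
    · rw [crv_u_eq e he]
      apply cont_toPair.comp_continuousOn
      apply cont_mo
      · exact (Complex.continuous_ofReal.mul continuous_const).continuousOn
      · intro t htm
        exact pw_ne_neg_one htm.1 (vang_mem i x)
    · rw [crv_v_eq e he]
      apply Continuous.continuousOn
      apply cont_toPair.comp
      unfold cv
      apply Continuous.div continuous_const
      · exact (Complex.continuous_ofReal.comp (continuous_const.sub continuous_id)).add
          continuous_const
      · exact cvden_ne (vang_mem i x)
  · rw [crv_E_eq e hxy he]
    apply cont_toPair.comp_continuousOn
    apply cont_mo
    · apply Continuous.continuousOn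
      apply Continuous.mul
      · apply Complex.continuous_ofReal.comp
        unfold rad
        continuity
      · apply cont_epi
        unfold angR
        continuity
    · intro t htm
      apply pw_ne_neg_one (rad_pos (E_kappa_nonneg hxy) htm.1 htm.2).le
      exact E_ang_mem (E_ab_bounds i x y).1 (E_ab_bounds i x y).2
        (by have : (x:ℕ) ≤ y := le_of_lt hxy; omega) htm.1 htm.2


lemma crv_injOn {k : ℕ} (e : (glueK5 k).edgeSet) : Set.InjOn (crv e) (Set.Icc 0 1) := by
  intro t htm s hsm h
  rcases edge_desc e with he | ⟨sE, i, x, he⟩ | ⟨i, x, y, hxy, he⟩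
  · rw [crv_uv_eq e he] at h
    have h1 : ((t:ℂ)) = s := toPair_inj h
    exact_mod_cast h1
  · fin_cases sE
    · rw [crv_u_eq e he] at h
      have h1 := toPair_inj h
      have h2 := mo_inj (pw_ne_neg_one htm.1 (vang_mem i x))
        (pw_ne_neg_one hsm.1 (vang_mem i x)) h1
      have h3 := mul_right_cancel₀ (epi_ne_zero _) h2
      exact_mod_cast h3
    · rw [crv_v_eq e he] at h
      have h1 := toPair_inj h
      unfold cv at h1
      rw [div_eq_div_iff (cvden_ne (vang_mem i x) t) (cvden_ne (vang_mem i x) s)] at h1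
      have h2 := mul_left_cancel₀ (epi_ne_zero (vang k i x)) h1
      have h3 : ((1 - s : ℝ) : ℂ) = ((1 - t : ℝ) : ℂ) := add_right_cancel h2
      have h4 : (1 - s : ℝ) = 1 - t := by exact_mod_cast h3
      linarith
  · rw [crv_E_eq e hxy he] at h
    have h1 := toPair_inj h
    have hk := E_kappa_nonneg hxy
    have hab := E_ab_bounds i x y
    have hle : 3*(i:ℕ)+(x:ℕ)+1 ≤ 3*(i:ℕ)+(y:ℕ)+1 := by
      have : (x:ℕ) ≤ (y:ℕ) := le_of_lt hxy
      omega
    have h2 := mo_polar_inj (rad_pos hk htm.1 htm.2) (rad_pos hk hsm.1 hsm.2)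
      (E_ang_mem hab.1 hab.2 hle htm.1 htm.2) (E_ang_mem hab.1 hab.2 hle hsm.1 hsm.2) h1
    have h4 := angR_inj h2.2
    set A : ℝ := ((3*(i:ℕ)+(x:ℕ)+1 : ℕ) : ℝ)
    set B : ℝ := ((3*(i:ℕ)+(y:ℕ)+1 : ℕ) : ℝ)
    have hD : (1:ℝ) ≤ B - A := by
      have hc : ((3*(i:ℕ)+(x:ℕ)+1 : ℕ) : ℝ) + 1 ≤ ((3*(i:ℕ)+(y:ℕ)+1 : ℕ) : ℝ) := by
        exact_mod_cast (by omega : 3*(i:ℕ)+(x:ℕ)+1 + 1 ≤ 3*(i:ℕ)+(y:ℕ)+1)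
      linarith
    have h5 : t * (B - A) = s * (B - A) := by linarith
    exact mul_right_cancel₀ (by linarith : B - A ≠ 0) h5

lemma cv_zero {θ : ℝ} : cv θ 0 = mo (epi θ) := by
  unfold cv mo; norm_num

lemma cv_one {θ : ℝ} : cv θ 1 = 1 := by
  unfold cv
  norm_num [div_self (epi_ne_zero θ)]

lemma vang_eq_angR (k : ℕ) (i : Fin k) (x : Fin 3) :
    vang k i x = angR k ((3*(i:ℕ)+(x:ℕ)+1 : ℕ) : ℝ) := rfl

lemma crv_ends {k : ℕ} (e : (glueK5 k).edgeSet) (u' v' : V k) (h' : e.val = s(u', v')) :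
    ({crv e 0, crv e 1} : Set (ℝ × ℝ)) = {vert k u', vert k v'} := by
  suffices H : ∃ a b : V k, e.val = s(a, b) ∧ crv e 0 = vert k a ∧ crv e 1 = vert k b by
    obtain ⟨a, b, he, h0, h1⟩ := H
    rw [he] at h'
    rw [Sym2.eq_iff] at h'
    rcases h' with ⟨rfl, rfl⟩ | ⟨rfl, rfl⟩
    · rw [h0, h1]
    · rw [h0, h1, Set.pair_comm]
  rcases edge_desc e with he | ⟨sE, i, x, he⟩ | ⟨i, x, y, hxy, he⟩
  · refine ⟨_, _, he, ?_, ?_⟩ <;>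
      simp [crv_uv_eq e he, toPair, vert]
  · fin_cases sE
    · refine ⟨_, _, he, ?_, ?_⟩
      · rw [crv_u_eq e he]
        simp [mo, toPair, vert]
      · rw [crv_u_eq e he]
        show toPair (mo (((1:ℝ):ℂ) * epi (vang k i x))) = _
        rw [vert_r]
        norm_num
    · refine ⟨Sum.inr (i, x), Sum.inl 1, he.trans (Sym2.eq_swap), ?_, ?_⟩
      · rw [crv_v_eq e he]
        show toPair (cv (vang k i x) 0) = _
        rw [cv_zero, vert_r]
      · rw [crv_v_eq e he]
        show toPair (cv (vang k i x) 1) = _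
        rw [cv_one]
        simp [toPair, vert]
  · refine ⟨_, _, he, ?_, ?_⟩
    · rw [crv_E_eq e hxy he, vert_r]
      show toPair (mo (((rad _ 0 : ℝ) : ℂ) * epi (angR k _))) = _
      rw [rad_zero]
      rw [vang_eq_angR]
      norm_num
    · rw [crv_E_eq e hxy he, vert_r]
      show toPair (mo (((rad _ 1 : ℝ) : ℂ) * epi (angR k _))) = _
      rw [rad_one]
      rw [vang_eq_angR]
      norm_num
      congr 2
      ring

lemma rad_eq_one {κ t : ℝ} (h : rad κ t = 1) (h0 : 0 < t) (h1 : t < 1) : κ = 0 := by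
  unfold rad at h
  have h2 : κ * (t * (1 - t)) = 0 := by linarith
  rcases mul_eq_zero.mp h2 with h3 | h3
  · exact h3
  · nlinarith

lemma crv_avoid {k : ℕ} (e : (glueK5 k).edgeSet) {t : ℝ} (ht : t ∈ Set.Ioo 0 1)
    (v : V k) : crv e t ≠ vert k v := by
  intro h
  rcases edge_desc e with he | ⟨sE, i, x, he⟩ | ⟨i, x, y, hxy, he⟩
  · rw [crv_uv_eq e he] at h
    rcases v with s | ⟨j, y⟩
    · have h2 : t = ((s:ℕ):ℝ) := congrArg Prod.fst h
      fin_cases s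
      · norm_num at h2
        exact ht.1.ne' h2
      · norm_num at h2
        exact ht.2.ne h2
    · have h1 := congrArg Prod.snd h
      have h2 : (0:ℝ) = (vert k (Sum.inr (j, y))).2 := h1
      have := vert_r_im_pos k j y
      linarith [this]
  · fin_cases sE
    · rw [crv_u_eq e he] at h
      rcases v with s | ⟨j, y⟩
      · have h1 : (mo ((t:ℂ) * epi (vang k i x))).im = 0 := by
          have := congrArg Prod.snd h
          rw [snd_crv] at this
          rw [this, vert_inl_im]
        have h2 := mo_pw_im_pos ht.1 (vang_mem i x)
        linarith
      · rw [vert_r] at h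
        have h1 := toPair_inj h
        have h2 := mo_inj (pw_ne_neg_one ht.1.le (vang_mem i x))
          (one_add_epi_ne (vang_mem j y)) h1
        have h3 := congrArg (‖·‖) h2
        rw [norm_mul, Complex.norm_real, Real.norm_eq_abs, epi_abs, epi_abs, abs_of_pos ht.1] at h3
        simp at h3
        exact ht.2.ne h3
    · rw [crv_v_eq e he] at h
      have h' : toPair (cv (vang k i x) t) = vert k v := h
      rw [cv_eq (vang_mem i x) ht.2] at h'
      clear h
      have h := h'
      have hinv : (0:ℝ) < (1 - t)⁻¹ := by
        have : (0:ℝ) < 1 - t := by linarith [ht.2]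
        positivity
      rcases v with s | ⟨j, y⟩
      · have h1 : (mo (((1 - t)⁻¹ : ℝ) * epi (vang k i x))).im = 0 := by
          have := congrArg Prod.snd h
          rw [snd_crv] at this
          rw [this, vert_inl_im]
        have h2 := mo_pw_im_pos hinv (vang_mem i x)
        linarith
      · rw [vert_r] at h
        have h1 := toPair_inj h
        have h2 := mo_inj (pw_ne_neg_one hinv.le (vang_mem i x))
          (one_add_epi_ne (vang_mem j y)) h1
        have h3 := congrArg (‖·‖) h2
        rw [norm_mul, Complex.norm_real, Real.norm_eq_abs, epi_abs, epi_abs, abs_of_pos hinv] at h3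
        simp only [mul_one] at h3
        rw [inv_eq_one] at h3
        linarith [ht.1]
  · rw [crv_E_eq e hxy he] at h
    have hk := E_kappa_nonneg hxy
    have hab := E_ab_bounds i x y
    have hle : 3*(i:ℕ)+(x:ℕ)+1 ≤ 3*(i:ℕ)+(y:ℕ)+1 := by
      have : (x:ℕ) ≤ (y:ℕ) := le_of_lt hxy
      omega
    have hrp := rad_pos hk ht.1.le ht.2.le
    have ham := E_ang_mem hab.1 hab.2 hle ht.1.le ht.2.le
    rcases v with s | ⟨j, w⟩
    · have h1 : (mo (((rad (((y:ℕ):ℝ) - ((x:ℕ):ℝ) - 1) t : ℝ) : ℂ) *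
          epi (angR k (((3*(i:ℕ)+(x:ℕ)+1 : ℕ) : ℝ) +
            t * (((3*(i:ℕ)+(y:ℕ)+1 : ℕ) : ℝ) - ((3*(i:ℕ)+(x:ℕ)+1 : ℕ) : ℝ)))))).im = 0 := by
        have h2 := congrArg Prod.snd h
        rw [snd_crv] at h2
        rw [h2, vert_inl_im]
      have h2 := mo_pw_im_pos hrp ham
      linarith
    · rw [vert_r, vang_eq_angR] at h
      have h1 := toPair_inj h
      have h1' : mo (((rad (((y:ℕ):ℝ) - ((x:ℕ):ℝ) - 1) t : ℝ) : ℂ) *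
          epi (angR k (((3*(i:ℕ)+(x:ℕ)+1 : ℕ) : ℝ) +
            t * (((3*(i:ℕ)+(y:ℕ)+1 : ℕ) : ℝ) - ((3*(i:ℕ)+(x:ℕ)+1 : ℕ) : ℝ)))))
          = mo (((1:ℝ):ℂ) * epi (angR k ((3*(j:ℕ)+(w:ℕ)+1 : ℕ) : ℝ))) := by
        rw [h1]
        norm_num
      have hwm : angR k ((3*(j:ℕ)+(w:ℕ)+1 : ℕ) : ℝ) ∈ Set.Ioo 0 Real.pi := by
        rw [← vang_eq_angR]
        exact vang_mem j w
      have h2 := mo_polar_inj hrp one_pos ham hwm h1'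
      have hk0 : ((y:ℕ):ℝ) - ((x:ℕ):ℝ) - 1 = 0 := rad_eq_one h2.1 ht.1 ht.2
      have h3 := angR_inj h2.2
      -- y = x + 1 as naturals
      have hyx : (y:ℕ) = (x:ℕ) + 1 := by
        have : ((y:ℕ):ℝ) = ((x:ℕ):ℝ) + 1 := by linarith
        exact_mod_cast this
    -- A + t * (B - A) = M with B = A + 1
      set A := 3*(i:ℕ)+(x:ℕ)+1 with hA
      set M := 3*(j:ℕ)+(w:ℕ)+1 with hM
      have hB : ((3*(i:ℕ)+(y:ℕ)+1 : ℕ) : ℝ) = (A:ℝ) + 1 := by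
        rw [hyx]; push_cast [hA]; ring
      rw [hB] at h3
      have h4 : (A:ℝ) + t = (M:ℝ) := by linarith [h3]
      have h5 : (A:ℝ) < M := by linarith [ht.1]
      have h6 : (M:ℝ) < (A:ℝ) + 1 := by linarith [ht.2]
      have h5' : A < M := by exact_mod_cast h5
      have h6' : M < A + 1 := by exact_mod_cast h6
      omega


lemma int_gap_eq {a b : ℕ} {t s : ℝ} (h : (a:ℝ) + t = (b:ℝ) + s)
    (ht : t ∈ Set.Ioo 0 1) (hs : s ∈ Set.Ioo 0 1) : a = b := by
  have h1 : (a:ℝ) < (b:ℝ) + 1 := by linarith [ht.1, hs.2]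
  have h2 : (b:ℝ) < (a:ℝ) + 1 := by linarith [ht.2, hs.1]
  have h1' : a < b + 1 := by exact_mod_cast h1
  have h2' : b < a + 1 := by exact_mod_cast h2
  omega

lemma half_of {m n : ℕ} {s : ℝ} (h : (m:ℝ) = (n:ℝ) + 2*s) (hs : s ∈ Set.Ioo 0 1) :
    s = 1/2 ∧ m = n + 1 := by
  have h1 : (n:ℝ) < m := by linarith [hs.1]
  have h2 : (m:ℝ) < (n:ℝ) + 2 := by linarith [hs.2]
  have h1' : n < m := by exact_mod_cast h1
  have h2' : m < n + 2 := by exact_mod_cast h2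
  have h3 : m = n + 1 := by omega
  refine ⟨?_, h3⟩
  have h4 : (m:ℝ) = (n:ℝ) + 1 := by exact_mod_cast h3
  linarith

lemma inv_mem_gt_one {s : ℝ} (hs : s ∈ Set.Ioo 0 1) : 1 < (1 - s)⁻¹ := by
  have h1 : 0 < 1 - s := by linarith [hs.2]
  have h2 : (1 - s) * (1 - s)⁻¹ = 1 := mul_inv_cancel₀ h1.ne'
  nlinarith [inv_pos.mpr h1, hs.1]

lemma fin3_cases {x y : Fin 3} (hxy : x < y) :
    ((x:ℕ) = 0 ∧ (y:ℕ) = 1) ∨ ((x:ℕ) = 1 ∧ (y:ℕ) = 2) ∨ ((x:ℕ) = 0 ∧ (y:ℕ) = 2) := by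
  have h1 : (x:ℕ) < (y:ℕ) := hxy
  have h2 := x.isLt
  have h3 := y.isLt
  omega


lemma crv_uv_form {k : ℕ} (e : (glueK5 k).edgeSet)
    (he : e.val = s(Sum.inl 0, Sum.inl 1)) (t : ℝ) :
    crv e t = toPair ((t:ℂ)) := by rw [crv_uv_eq e he]

lemma crv_u_form {k : ℕ} (e : (glueK5 k).edgeSet) {i : Fin k} {x : Fin 3}
    (he : e.val = s(Sum.inl 0, Sum.inr (i, x))) (t : ℝ) :
    crv e t = toPair (mo ((t:ℂ) * epi (vang k i x))) := by rw [crv_u_eq e he]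

lemma crv_v_form {k : ℕ} (e : (glueK5 k).edgeSet) {i : Fin k} {x : Fin 3}
    (he : e.val = s(Sum.inl 1, Sum.inr (i, x))) {t : ℝ} (ht : t < 1) :
    crv e t = toPair (mo ((((1 - t)⁻¹ : ℝ):ℂ) * epi (vang k i x))) := by
  rw [crv_v_eq e he]
  show toPair (cv (vang k i x) t) = _
  rw [cv_eq (vang_mem i x) ht]

lemma crv_E_form {k : ℕ} (e : (glueK5 k).edgeSet) {i : Fin k} {x y : Fin 3}
    (hxy : x < y) (he : e.val = s(Sum.inr (i, x), Sum.inr (i, y))) (t : ℝ) :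
    crv e t = toPair (mo (((rad (((y:ℕ):ℝ) - ((x:ℕ):ℝ) - 1) t : ℝ) : ℂ) *
      epi (angR k (((3*(i:ℕ)+(x:ℕ)+1 : ℕ) : ℝ) +
        t * (((3*(i:ℕ)+(y:ℕ)+1 : ℕ) : ℝ) - ((3*(i:ℕ)+(x:ℕ)+1 : ℕ) : ℝ)))))) := by
  rw [crv_E_eq e hxy he]

lemma uv_clash {ρ θ t : ℝ} (hρ : 0 < ρ) (hθ : θ ∈ Set.Ioo 0 Real.pi)
    (h : toPair ((t:ℂ)) = toPair (mo (((ρ:ℝ):ℂ) * epi θ))) : False := by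
  have h1 := congrArg Prod.snd h
  rw [snd_crv, snd_crv, Complex.ofReal_im] at h1
  have h2 := mo_pw_im_pos hρ hθ
  linarith

lemma E_ang_mem' {k : ℕ} (i : Fin k) {x y : Fin 3} (hxy : x < y) {t : ℝ}
    (h0 : 0 ≤ t) (h1 : t ≤ 1) :
    angR k (((3*(i:ℕ)+(x:ℕ)+1 : ℕ) : ℝ) +
      t * (((3*(i:ℕ)+(y:ℕ)+1 : ℕ) : ℝ) - ((3*(i:ℕ)+(x:ℕ)+1 : ℕ) : ℝ)))
      ∈ Set.Ioo 0 Real.pi := by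
  have hab := E_ab_bounds i x y
  have hle : 3*(i:ℕ)+(x:ℕ)+1 ≤ 3*(i:ℕ)+(y:ℕ)+1 := by
    have : (x:ℕ) ≤ (y:ℕ) := le_of_lt hxy
    omega
  exact E_ang_mem hab.1 hab.2 hle h0 h1

lemma cross_half {k : ℕ} (e f : (glueK5 k).edgeSet) (hef : e.val ≠ f.val) {t s : ℝ}
    (ht : t ∈ Set.Ioo 0 1) (hs : s ∈ Set.Ioo 0 1) (h : crv e t = crv f s) : t = 1/2 := by
  have hinvt : (0:ℝ) < (1 - t)⁻¹ := inv_pos.mpr (by linarith [ht.2])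
  have hinvs : (0:ℝ) < (1 - s)⁻¹ := inv_pos.mpr (by linarith [hs.2])
  rcases edge_desc e with he | ⟨sE, i, x, he⟩ | ⟨i, x, y, hxy, he⟩
  · -- e is uv
    exfalso
    rcases edge_desc f with hf | ⟨sF, j, w, hf⟩ | ⟨j, w, z, hwz, hf⟩
    · exact hef (he.trans hf.symm)
    · fin_cases sF
      · rw [crv_uv_form e he, crv_u_form f hf] at h
        exact uv_clash hs.1 (vang_mem j w) h
      · rw [crv_uv_form e he, crv_v_form f hf hs.2] at h
        exact uv_clash hinvs (vang_mem j w) h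
    · rw [crv_uv_form e he, crv_E_form f hwz hf] at h
      exact uv_clash (rad_pos (E_kappa_nonneg hwz) hs.1.le hs.2.le)
        (E_ang_mem' j hwz hs.1.le hs.2.le) h
  · -- e is inl sE -- inr (i, x)
    fin_cases sE
    · -- e is a u-ray
      exfalso
      rcases edge_desc f with hf | ⟨sF, j, w, hf⟩ | ⟨j, w, z, hwz, hf⟩
      · rw [crv_uv_form f hf, crv_u_form e he] at h
        exact uv_clash ht.1 (vang_mem i x) h.symm
      · fin_cases sF
        · rw [crv_u_form e he, crv_u_form f hf] at h
          obtain ⟨hρ, hθ⟩ := mo_polar_inj ht.1 hs.1 (vang_mem i x) (vang_mem j w)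
            (toPair_inj h)
          obtain ⟨rfl, rfl⟩ := vang_inj hθ
          exact hef (he.trans hf.symm)
        · rw [crv_u_form e he, crv_v_form f hf hs.2] at h
          obtain ⟨hρ, hθ⟩ := mo_polar_inj ht.1 hinvs (vang_mem i x) (vang_mem j w)
            (toPair_inj h)
          have := inv_mem_gt_one hs
          linarith [ht.2]
      · rw [crv_u_form e he, crv_E_form f hwz hf] at h
        obtain ⟨hρ, hθ⟩ := mo_polar_inj ht.1 (rad_pos (E_kappa_nonneg hwz) hs.1.le hs.2.le)
          (vang_mem i x) (E_ang_mem' j hwz hs.1.le hs.2.le) (toPair_inj h)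
        have := one_le_rad (E_kappa_nonneg hwz) hs.1.le hs.2.le
        linarith [ht.2]
    · -- e is a v-ray
      rcases edge_desc f with hf | ⟨sF, j, w, hf⟩ | ⟨j, w, z, hwz, hf⟩
      · exfalso
        rw [crv_uv_form f hf, crv_v_form e he ht.2] at h
        exact uv_clash hinvt (vang_mem i x) h.symm
      · exfalso
        fin_cases sF
        · rw [crv_v_form e he ht.2, crv_u_form f hf] at h
          obtain ⟨hρ, hθ⟩ := mo_polar_inj hinvt hs.1 (vang_mem i x) (vang_mem j w)
            (toPair_inj h)
          have := inv_mem_gt_one ht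
          linarith [hs.2]
        · rw [crv_v_form e he ht.2, crv_v_form f hf hs.2] at h
          obtain ⟨hρ, hθ⟩ := mo_polar_inj hinvt hinvs (vang_mem i x) (vang_mem j w)
            (toPair_inj h)
          obtain ⟨rfl, rfl⟩ := vang_inj hθ
          exact hef (he.trans hf.symm)
      · -- v-ray vs E-curve : the crossing case
        rw [crv_v_form e he ht.2, crv_E_form f hwz hf] at h
        obtain ⟨hρ, hθ⟩ := mo_polar_inj hinvt (rad_pos (E_kappa_nonneg hwz) hs.1.le hs.2.le)
          (vang_mem i x) (E_ang_mem' j hwz hs.1.le hs.2.le) (toPair_inj h)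
        rw [vang_eq_angR] at hθ
        have Hr := angR_inj hθ
        rcases fin3_cases hwz with ⟨hw, hz⟩ | ⟨hw, hz⟩ | ⟨hw, hz⟩
        · exfalso
          rw [hw, hz] at hρ
          unfold rad at hρ
          norm_num at hρ
          linarith [ht.1]
        · exfalso
          rw [hw, hz] at hρ
          unfold rad at hρ
          norm_num at hρ
          linarith [ht.1]
        · rw [hw, hz] at Hr hρ
          push_cast at Hr
          have h2s : ((3*(i:ℕ)+(x:ℕ)+1 : ℕ):ℝ) = ((3*(j:ℕ)+1 : ℕ):ℝ) + 2*s := by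
            push_cast
            linarith [Hr]
          obtain ⟨hs2, _⟩ := half_of h2s hs
          have hρ2 : (1 - t)⁻¹ = 2 := by
            rw [hρ, hs2]
            unfold rad
            norm_num
          have h3 := congrArg Inv.inv hρ2
          rw [inv_inv] at h3
          rw [show t = 1 - (1 - t) by ring, h3]
          norm_num
  · -- e is an E-curve
    rcases edge_desc f with hf | ⟨sF, j, w, hf⟩ | ⟨j, w, z, hwz, hf⟩
    · exfalso
      rw [crv_uv_form f hf, crv_E_form e hxy he] at h
      exact uv_clash (rad_pos (E_kappa_nonneg hxy) ht.1.le ht.2.le)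
        (E_ang_mem' i hxy ht.1.le ht.2.le) h.symm
    · fin_cases sF
      · exfalso
        rw [crv_E_form e hxy he, crv_u_form f hf] at h
        obtain ⟨hρ, hθ⟩ := mo_polar_inj (rad_pos (E_kappa_nonneg hxy) ht.1.le ht.2.le)
          hs.1 (E_ang_mem' i hxy ht.1.le ht.2.le) (vang_mem j w) (toPair_inj h)
        have := one_le_rad (E_kappa_nonneg hxy) ht.1.le ht.2.le
        linarith [hs.2]
      · -- E-curve vs v-ray : the crossing case
        rw [crv_E_form e hxy he, crv_v_form f hf hs.2] at h
        obtain ⟨hρ, hθ⟩ := mo_polar_inj (rad_pos (E_kappa_nonneg hxy) ht.1.le ht.2.le)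
          hinvs (E_ang_mem' i hxy ht.1.le ht.2.le) (vang_mem j w) (toPair_inj h)
        rw [vang_eq_angR] at hθ
        have Hr := angR_inj hθ
        rcases fin3_cases hxy with ⟨hx, hy⟩ | ⟨hx, hy⟩ | ⟨hx, hy⟩
        · exfalso
          rw [hx, hy] at hρ
          unfold rad at hρ
          norm_num at hρ
          linarith [hs.1]
        · exfalso
          rw [hx, hy] at hρ
          unfold rad at hρ
          norm_num at hρ
          linarith [hs.1]
        · rw [hx, hy] at Hr
          push_cast at Hr
          have h2t : ((3*(j:ℕ)+(w:ℕ)+1 : ℕ):ℝ) = ((3*(i:ℕ)+1 : ℕ):ℝ) + 2*t := by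
            push_cast
            linarith [Hr]
          exact (half_of h2t ht).1
    · -- E vs E
      exfalso
      rw [crv_E_form e hxy he, crv_E_form f hwz hf] at h
      obtain ⟨hρ, hθ⟩ := mo_polar_inj (rad_pos (E_kappa_nonneg hxy) ht.1.le ht.2.le)
        (rad_pos (E_kappa_nonneg hwz) hs.1.le hs.2.le)
        (E_ang_mem' i hxy ht.1.le ht.2.le) (E_ang_mem' j hwz hs.1.le hs.2.le) (toPair_inj h)
      have Hr := angR_inj hθ
      have hts01 : (0:ℝ) < t ∧ t < 1 ∧ 0 < s ∧ s < 1 := ⟨ht.1, ht.2, hs.1, hs.2⟩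
      obtain ⟨ht1, ht2, hs1, hs2⟩ := hts01
      rcases fin3_cases hxy with ⟨hx, hy⟩ | ⟨hx, hy⟩ | ⟨hx, hy⟩ <;>
        rcases fin3_cases hwz with ⟨hw, hz⟩ | ⟨hw, hz⟩ | ⟨hw, hz⟩ <;>
        rw [hx, hy, hw, hz] at Hr hρ <;>
        unfold rad at hρ <;> push_cast at Hr hρ <;> norm_num at Hr hρ ⊢
      -- 9 remaining goals
      · -- (01)(01)
        have b1 : (3*(i:ℕ) : ℝ) < 3*(j:ℕ) + 1 := by nlinarith [Hr]
        have b2 : (3*(j:ℕ) : ℝ) < 3*(i:ℕ) + 1 := by nlinarith [Hr]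
        have b1' : 3*(i:ℕ) < 3*(j:ℕ) + 1 := by exact_mod_cast b1
        have b2' : 3*(j:ℕ) < 3*(i:ℕ) + 1 := by exact_mod_cast b2
        have hij : i = j := Fin.ext (by omega)
        subst hij
        obtain rfl : x = w := Fin.ext (by omega)
        obtain rfl : y = z := Fin.ext (by omega)
        exact hef (he.trans hf.symm)
      · -- (01)(12)
        have b1 : (3*(i:ℕ) : ℝ) < 3*(j:ℕ) + 2 := by nlinarith [Hr]
        have b2 : (3*(j:ℕ) + 1 : ℝ) < 3*(i:ℕ) + 1 := by nlinarith [Hr]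
        have b1' : 3*(i:ℕ) < 3*(j:ℕ) + 2 := by exact_mod_cast b1
        have b2' : 3*(j:ℕ) + 1 < 3*(i:ℕ) + 1 := by exact_mod_cast b2
        omega
      · -- (01)(02) rad clash
        rcases hρ with h0 | h0 <;> linarith
      · -- (12)(01)
        have b1 : (3*(i:ℕ) + 1 : ℝ) < 3*(j:ℕ) + 1 := by nlinarith [Hr]
        have b2 : (3*(j:ℕ) : ℝ) < 3*(i:ℕ) + 2 := by nlinarith [Hr]
        have b1' : 3*(i:ℕ) + 1 < 3*(j:ℕ) + 1 := by exact_mod_cast b1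
        have b2' : 3*(j:ℕ) < 3*(i:ℕ) + 2 := by exact_mod_cast b2
        omega
      · -- (12)(12)
        have b1 : (3*(i:ℕ) : ℝ) < 3*(j:ℕ) + 1 := by nlinarith [Hr]
        have b2 : (3*(j:ℕ) : ℝ) < 3*(i:ℕ) + 1 := by nlinarith [Hr]
        have b1' : 3*(i:ℕ) < 3*(j:ℕ) + 1 := by exact_mod_cast b1
        have b2' : 3*(j:ℕ) < 3*(i:ℕ) + 1 := by exact_mod_cast b2
        have hij : i = j := Fin.ext (by omega)
        subst hij
        obtain rfl : x = w := Fin.ext (by omega)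
        obtain rfl : y = z := Fin.ext (by omega)
        exact hef (he.trans hf.symm)
      · -- (12)(02) rad clash
        rcases hρ with h0 | h0 <;> linarith
      · -- (02)(01) rad clash
        rcases hρ with h0 | h0 <;> linarith
      · -- (02)(12) rad clash
        rcases hρ with h0 | h0 <;> linarith
      · -- (02)(02)
        have b1 : (3*(i:ℕ) : ℝ) < 3*(j:ℕ) + 2 := by nlinarith [Hr]
        have b2 : (3*(j:ℕ) : ℝ) < 3*(i:ℕ) + 2 := by nlinarith [Hr]
        have b1' : 3*(i:ℕ) < 3*(j:ℕ) + 2 := by exact_mod_cast b1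
        have b2' : 3*(j:ℕ) < 3*(i:ℕ) + 2 := by exact_mod_cast b2
        have hij : i = j := Fin.ext (by omega)
        subst hij
        obtain rfl : x = w := Fin.ext (by omega)
        obtain rfl : y = z := Fin.ext (by omega)
        exact hef (he.trans hf.symm)


noncomputable def drawing (k : ℕ) : OnePlanarDrawing (glueK5 k) where
  vert := vert k
  vert_inj := vert_inj k
  curve := crv
  curve_cont := crv_cont
  curve_inj := crv_injOn
  curve_ends := fun e u' v' h => crv_ends e u' v' h
  interior_avoid := fun e t ht v => crv_avoid e ht v
  one_cross := by
    intro e p hp q hq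
    obtain ⟨f, hfe, ⟨t, ht, hpt⟩, ⟨sp, hsp, hps⟩⟩ := hp
    obtain ⟨g, hge, ⟨t', ht', hqt⟩, ⟨sq, hsq, hqs⟩⟩ := hq
    have hef : e.val ≠ f.val := fun hv => hfe (Subtype.ext hv.symm)
    have heg : e.val ≠ g.val := fun hv => hge (Subtype.ext hv.symm)
    have h1 : t = 1/2 := cross_half e f hef ht hsp (hpt.trans hps.symm)
    have h2 : t' = 1/2 := cross_half e g heg ht' hsq (hqt.trans hqs.symm)
    rw [← hpt, ← hqt, h1, h2]


lemma nbhd_inl (k : ℕ) (s : Fin 2) :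
    (glueK5 k).neighborSet (Sum.inl s) = {Sum.inl s}ᶜ := by
  ext b
  simp only [SimpleGraph.mem_neighborSet, Set.mem_compl_iff, Set.mem_singleton_iff]
  rw [adj_iff]
  constructor
  · rintro ⟨h1, -⟩ h2
    exact h1 h2.symm
  · intro h1
    refine ⟨fun h => h1 h.symm, fun i j x y ha hb => ?_⟩
    exact absurd ha (by simp)

lemma card_nbhd_inl (k : ℕ) (s : Fin 2) :
    Nat.card ((glueK5 k).neighborSet (Sum.inl s)) = 3 * k + 1 := by
  rw [Nat.card_coe_set_eq, nbhd_inl]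
  have h1 := Set.ncard_add_ncard_compl ({Sum.inl s} : Set (V k))
  rw [Set.ncard_singleton] at h1
  have h2 : Nat.card (V k) = 3 * k + 2 := by
    rw [Nat.card_eq_fintype_card]
    simp [Fintype.card_sum, Fintype.card_prod]
    ring
  omega

lemma fin3_ne_iff : ∀ x y : Fin 3, (y = x + 1 ∨ y = x + 2) ↔ y ≠ x := by decide

lemma nbhd_inr (k : ℕ) (i : Fin k) (x : Fin 3) :
    (glueK5 k).neighborSet (Sum.inr (i, x)) =
      {Sum.inl 0, Sum.inl 1, Sum.inr (i, x + 1), Sum.inr (i, x + 2)} := by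
  ext b
  simp only [SimpleGraph.mem_neighborSet, Set.mem_insert_iff, Set.mem_singleton_iff]
  rw [adj_iff]
  rcases b with t | ⟨j, y⟩
  · constructor
    · intro
      fin_cases t
      · left; rfl
      · right; left; rfl
    · intro h
      refine ⟨by simp, fun i' j' x' y' ha hb => ?_⟩
      exact absurd hb (by simp)
  · constructor
    · rintro ⟨hne, hc⟩
      have hij : i = j := hc i j x y rfl rfl
      subst hij
      have hxy : y ≠ x := by
        intro h
        subst h
        exact hne rfl
      rcases (fin3_ne_iff x y).mpr hxy with h | h
      · right; right; left; rw [h]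
      · right; right; right; rw [h]
    · intro h
      have h' : j = i ∧ (y = x + 1 ∨ y = x + 2) := by
        rcases h with h | h | h | h
        · exact absurd h (by simp)
        · exact absurd h (by simp)
        · have := Sum.inr.inj h
          exact ⟨(Prod.mk.injEq _ _ _ _ ▸ this).1, Or.inl (Prod.mk.injEq _ _ _ _ ▸ this).2⟩
        · have := Sum.inr.inj h
          exact ⟨(Prod.mk.injEq _ _ _ _ ▸ this).1, Or.inr (Prod.mk.injEq _ _ _ _ ▸ this).2⟩
      obtain ⟨hji, hy⟩ := h'
      have hyx : y ≠ x := (fin3_ne_iff x y).mp hy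
      constructor
      · intro hcon
        apply hyx
        have h1 := Sum.inr.inj hcon
        rw [Prod.mk.injEq] at h1
        exact h1.2.symm
      · intro i' j' x' y' ha hb
        have h1 := Sum.inr.inj ha
        have h2 := Sum.inr.inj hb
        rw [Prod.mk.injEq] at h1 h2
        rw [← h1.1, ← h2.1, hji]

lemma fin3_add12 : ∀ x : Fin 3, x + 1 ≠ x + 2 := by decide
lemma fin3_add1 : ∀ x : Fin 3, x + 1 ≠ x := by decide
lemma fin3_add2 : ∀ x : Fin 3, x + 2 ≠ x := by decide

lemma card_nbhd_inr (k : ℕ) (i : Fin k) (x : Fin 3) :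
    Nat.card ((glueK5 k).neighborSet (Sum.inr (i, x))) = 4 := by
  rw [Nat.card_coe_set_eq, nbhd_inr]
  rw [Set.ncard_insert_of_notMem (by simp)]
  rw [Set.ncard_insert_of_notMem (by simp)]
  rw [Set.ncard_insert_of_notMem (by simp [fin3_add12 x])]
  rw [Set.ncard_singleton]


def slot {k : ℕ} : V k → V k → Fin 2 ⊕ Fin k
  | Sum.inl a, Sum.inl b => Sum.inl (min a b)
  | Sum.inl a, Sum.inr _ => Sum.inl a
  | Sum.inr _, Sum.inl b => Sum.inl b
  | Sum.inr (i, _), Sum.inr (j, _) => Sum.inr (min i j)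

lemma slot_symm {k : ℕ} (a b : V k) : slot a b = slot b a := by
  rcases a with a | ⟨i, x⟩ <;> rcases b with b | ⟨j, y⟩ <;> simp [slot, min_comm]

def eslot {k : ℕ} : Sym2 (V k) → Fin 2 ⊕ Fin k := Sym2.lift ⟨slot, slot_symm⟩

lemma slot_inl {k : ℕ} {a b : V k} {s : Fin 2} (h : slot a b = Sum.inl s) :
    Sum.inl s = a ∨ Sum.inl s = b := by
  rcases a with a | ⟨i, x⟩ <;> rcases b with b | ⟨j, y⟩ <;> simp [slot] at h
  · rcases min_cases a b with ⟨h1, -⟩ | ⟨h1, -⟩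
    · left; rw [← h, h1]
    · right; rw [← h, h1]
  · left; rw [h]
  · right; rw [h]

lemma slot_inr {k : ℕ} {a b : V k} {i : Fin k} (hadj : (glueK5 k).Adj a b)
    (h : slot a b = Sum.inr i) :
    ∃ x y, a = Sum.inr (i, x) ∧ b = Sum.inr (i, y) := by
  rcases a with a | ⟨i', x⟩ <;> rcases b with b | ⟨j', y⟩ <;> simp [slot] at h
  have hij : i' = j' := (adj_iff.mp hadj).2 i' j' x y rfl rfl
  subst hij
  simp only [min_self] at h
  subst h
  exact ⟨x, y, rfl, rfl⟩

lemma matching_partner_unique {k : ℕ} {M : (glueK5 k).Subgraph} (hM : M.IsMatching)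
    {v b d : V k} (h1 : M.Adj v b) (h2 : M.Adj v d) : b = d :=
  ((hM (M.edge_vert h1)).unique h1 h2)

lemma matching_card_le {k : ℕ} (M : (glueK5 k).Subgraph) (hM : M.IsMatching) :
    M.edgeSet.ncard ≤ k + 2 := by
  have hinj : Function.Injective (fun e : M.edgeSet => eslot e.val) := by
    rintro ⟨E1, hE1⟩ ⟨E2, hE2⟩ hsl
    simp only [Subtype.mk_eq_mk]
    induction E1 with
    | _ a b =>
      induction E2 with
      | _ c d =>
        rw [SimpleGraph.Subgraph.mem_edgeSet] at hE1 hE2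
        simp only at hsl
        have hsl' : slot a b = slot c d := hsl
        rcases hv : slot a b with s | i
        · rw [hv] at hsl'
          rcases slot_inl hv with rfl | rfl <;>
            rcases slot_inl hsl'.symm with rfl | rfl
          · rw [matching_partner_unique hM hE1 hE2]
          · rw [matching_partner_unique hM hE1 hE2.symm, Sym2.eq_swap]
          · rw [Sym2.eq_swap, matching_partner_unique hM hE1.symm hE2]
          · rw [Sym2.eq_swap, matching_partner_unique hM hE1.symm hE2.symm, Sym2.eq_swap]
        · rw [hv] at hsl'
          obtain ⟨x1, y1, rfl, rfl⟩ := slot_inr (M.adj_sub hE1) hv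
          obtain ⟨x2, y2, rfl, rfl⟩ := slot_inr (M.adj_sub hE2) hsl'.symm
          have hne1 : x1 ≠ y1 := by
            intro h; apply (M.adj_sub hE1).ne; rw [h]
          have hne2 : x2 ≠ y2 := by
            intro h; apply (M.adj_sub hE2).ne; rw [h]
          rcases eq_or_ne x1 x2 with rfl | h12
          · have hp := matching_partner_unique hM hE1 hE2
            rw [hp]
          · rcases eq_or_ne x1 y2 with rfl | h13
            · have hp := matching_partner_unique hM hE1 hE2.symm
              rw [hp, Sym2.eq_swap]
            · rcases eq_or_ne y1 x2 with rfl | h14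
              · have hp := matching_partner_unique hM hE1.symm hE2
                rw [Sym2.eq_swap, hp]
              · rcases eq_or_ne y1 y2 with rfl | h15
                · have hp := matching_partner_unique hM hE1.symm hE2.symm
                  rw [hp]
                · exfalso
                  have d1 : (x1:ℕ) ≠ x2 := fun h => h12 (Fin.ext h)
                  have d2 : (x1:ℕ) ≠ y2 := fun h => h13 (Fin.ext h)
                  have d3 : (y1:ℕ) ≠ x2 := fun h => h14 (Fin.ext h)
                  have d4 : (y1:ℕ) ≠ y2 := fun h => h15 (Fin.ext h)
                  have d5 : (x1:ℕ) ≠ y1 := fun h => hne1 (Fin.ext h)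
                  have d6 : (x2:ℕ) ≠ y2 := fun h => hne2 (Fin.ext h)
                  have b1 := x1.isLt
                  have b2 := y1.isLt
                  have b3 := x2.isLt
                  have b4 := y2.isLt
                  omega
  have h1 : Nat.card M.edgeSet ≤ Nat.card (Fin 2 ⊕ Fin k) :=
    Nat.card_le_card_of_injective _ hinj
  rw [Nat.card_coe_set_eq, Nat.card_eq_fintype_card] at h1
  simpa [Fintype.card_sum, Nat.add_comm] using h1

end GlueAux
theorem stmt6 (k : ℕ) (hk : 1 ≤ k) :
    Fintype.card (Fin 2 ⊕ Fin k × Fin 3) = 3 * k + 2 ∧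
    (∀ v, 4 ≤ Nat.card ((glueK5 k).neighborSet v)) ∧
    (∃ v, Nat.card ((glueK5 k).neighborSet v) = 4) ∧
    OnePlanar (glueK5 k) ∧
    ∀ M : (glueK5 k).Subgraph, M.IsMatching →
      (M.edgeSet.ncard : ℚ) ≤ (((3 * k + 2 : ℕ) : ℚ) + 4) / 3 := by
  refine ⟨?_, ?_, ?_, ?_, ?_⟩
  · simp [Fintype.card_sum, Fintype.card_prod]
    ring
  · intro v
    rcases v with s | ⟨i, x⟩
    · rw [GlueAux.card_nbhd_inl]
      omega
    · rw [GlueAux.card_nbhd_inr]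
  · exact ⟨Sum.inr (⟨0, hk⟩, 0), GlueAux.card_nbhd_inr k _ _⟩
  · exact ⟨GlueAux.drawing k⟩
  · intro M hM
    have h1 := GlueAux.matching_card_le M hM
    have h2 : (M.edgeSet.ncard : ℚ) ≤ (k : ℚ) + 2 := by exact_mod_cast h1
    push_cast
    linarith
end
end

section
/- For every N there exists a simple 1-planar graph G with minimum degree 5 and n ≥ N vertices such that every matching of G has size at most (2n + 3)/5. -/
open SimpleGraph

namespace OP


/-- straight segment parameterization in ℝ² -/
def seg (a b : ℝ × ℝ) (t : ℝ) : ℝ × ℝ := ((1-t)*a.1 + t*b.1, (1-t)*a.2 + t*b.2)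

lemma seg_zero (a b : ℝ × ℝ) : seg a b 0 = a := by simp [seg]
lemma seg_one (a b : ℝ × ℝ) : seg a b 1 = b := by simp [seg]

lemma seg_cont (a b : ℝ × ℝ) : ContinuousOn (seg a b) (Set.Icc 0 1) := by
  unfold seg; fun_prop

lemma seg_inj {a b : ℝ × ℝ} (hab : a ≠ b) : Function.Injective (seg a b) := by
  intro t s h
  have h1 : (1-t)*a.1 + t*b.1 = (1-s)*a.1 + s*b.1 := congrArg Prod.fst h
  have h2 : (1-t)*a.2 + t*b.2 = (1-s)*a.2 + s*b.2 := congrArg Prod.snd h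
  by_contra hts
  apply hab
  have e1 : a.1 = b.1 := by
    have : (t - s) * (b.1 - a.1) = 0 := by linarith
    rcases mul_eq_zero.1 this with h' | h'
    · exact absurd (by linarith) hts
    · linarith
  have e2 : a.2 = b.2 := by
    have : (t - s) * (b.2 - a.2) = 0 := by linarith
    rcases mul_eq_zero.1 this with h' | h'
    · exact absurd (by linarith) hts
    · linarith
  exact Prod.ext e1 e2

/-- open segment (interior) -/
def oseg (a b : ℝ × ℝ) : Set (ℝ × ℝ) := seg a b '' Set.Ioo 0 1

lemma oseg_symm (a b : ℝ × ℝ) : oseg a b = oseg b a := by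
  have key : ∀ x y : ℝ × ℝ, oseg x y ⊆ oseg y x := by
    rintro x y p ⟨t, ht, rfl⟩
    exact ⟨1 - t, ⟨by linarith [ht.2], by linarith [ht.1]⟩, by
      simp only [seg, Prod.ext_iff]; constructor <;> ring⟩
  exact le_antisymm (key a b) (key b a)

/-- separation certificate: affine functional nonneg on a,b and negative on c,d -/
lemma sep_disjoint {a b c d : ℝ × ℝ} (u v w : ℝ)
    (ha : 0 ≤ u*a.1+v*a.2+w) (hb : 0 ≤ u*b.1+v*b.2+w)
    (hc : u*c.1+v*c.2+w < 0) (hd : u*d.1+v*d.2+w < 0) :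
    Disjoint (oseg a b) (oseg c d) := by
  rw [Set.disjoint_left]
  rintro p ⟨t, ht, rfl⟩ ⟨s, hs, he⟩
  have e1 : u*((1-s)*c.1 + s*d.1) + v*((1-s)*c.2+s*d.2) + w
      = u*((1-t)*a.1 + t*b.1) + v*((1-t)*a.2+t*b.2) + w := by
    rw [show ((1-s)*c.1 + s*d.1 : ℝ) = (seg c d s).1 from rfl,
      show ((1-s)*c.2 + s*d.2 : ℝ) = (seg c d s).2 from rfl, he]; rfl
  nlinarith [ht.1, ht.2, hs.1, hs.2, mul_nonneg (le_of_lt ht.1) hb,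
    mul_nonneg (by linarith [ht.2] : (0:ℝ) ≤ 1 - t) ha,
    mul_pos hs.1 (neg_pos.2 hd), mul_pos (by linarith [hs.2] : (0:ℝ) < 1 - s) (neg_pos.2 hc)]

/-- segments sharing endpoint v with independent directions have disjoint interiors -/
lemma adj_disjoint {vv a b : ℝ × ℝ}
    (h : (a.1-vv.1)*(b.2-vv.2) - (a.2-vv.2)*(b.1-vv.1) ≠ 0) :
    Disjoint (oseg vv a) (oseg vv b) := by
  rw [Set.disjoint_left]
  rintro p ⟨t, ht, rfl⟩ ⟨s, hs, he⟩
  have h1 : (1-t)*vv.1 + t*a.1 = (1-s)*vv.1 + s*b.1 := congrArg Prod.fst he.symm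
  have h2 : (1-t)*vv.2 + t*a.2 = (1-s)*vv.2 + s*b.2 := congrArg Prod.snd he.symm
  have e1 : t*(a.1-vv.1) = s*(b.1-vv.1) := by linarith
  have e2 : t*(a.2-vv.2) = s*(b.2-vv.2) := by linarith
  have : t * ((a.1-vv.1)*(b.2-vv.2) - (a.2-vv.2)*(b.1-vv.1)) = 0 := by
    linear_combination (b.2-vv.2)*e1 - (b.1-vv.1)*e2
  rcases mul_eq_zero.1 this with h' | h'
  · exact absurd h' (ne_of_gt ht.1)
  · exact h h'

/-- two non-parallel lines meet in at most one point -/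
lemma cross_unique {a b c d p q : ℝ × ℝ}
    (hind : (b.1-a.1)*(d.2-c.2) - (b.2-a.2)*(d.1-c.1) ≠ 0)
    {t s t' s' : ℝ}
    (hp1 : p = seg a b t) (hp2 : p = seg c d s)
    (hq1 : q = seg a b t') (hq2 : q = seg c d s') : p = q := by
  have e1 : (t - t')*(b.1-a.1) = (s - s')*(d.1-c.1) := by
    have := congrArg Prod.fst (hp1.symm.trans hp2)
    have := congrArg Prod.fst (hq1.symm.trans hq2)
    simp only [seg] at *; linarith
  have e2 : (t - t')*(b.2-a.2) = (s - s')*(d.2-c.2) := by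
    have := congrArg Prod.snd (hp1.symm.trans hp2)
    have := congrArg Prod.snd (hq1.symm.trans hq2)
    simp only [seg] at *; linarith
  have : (t - t') * ((b.1-a.1)*(d.2-c.2) - (b.2-a.2)*(d.1-c.1)) = 0 := by
    linear_combination (d.2-c.2)*e1 - (d.1-c.1)*e2
  rcases mul_eq_zero.1 this with h' | h'
  · have ht : t = t' := by linarith
    rw [hp1, hq1, ht]
  · exact absurd h' hind


/-- base K6 points over ℤ -/
def PZ : Fin 6 → ℤ × ℤ := ![(0,0),(7,6),(6,-3),(5,-1),(7,-6),(6,1)]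

/-- integer cross product of (b-a) with (c-a) -/
def cz (a b c : Fin 6) : ℤ :=
  ((PZ b).1-(PZ a).1)*((PZ c).2-(PZ a).2) - ((PZ b).2-(PZ a).2)*((PZ c).1-(PZ a).1)

/-- direction cross product of edge (a,b) with edge (c,d) -/
def dz (a b c d : Fin 6) : ℤ :=
  ((PZ b).1-(PZ a).1)*((PZ d).2-(PZ c).2) - ((PZ b).2-(PZ a).2)*((PZ d).1-(PZ c).1)

def pe (a b x y : Fin 6) : Bool := (a = x && b = y) || (a = y && b = x)

/-- crossing-pair relation of the base drawing -/
def crossB (a b c d : Fin 6) : Bool :=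
  (pe a b 0 2 && pe c d 3 4) || (pe a b 3 4 && pe c d 0 2) ||
  (pe a b 0 5 && pe c d 1 3) || (pe a b 1 3 && pe c d 0 5) ||
  (pe a b 1 2 && pe c d 4 5) || (pe a b 4 5 && pe c d 1 2)

/-- canonical partner -/
def partnerF (a b : Fin 6) : Fin 6 × Fin 6 :=
  if pe a b 0 2 then (3,4) else if pe a b 3 4 then (0,2)
  else if pe a b 0 5 then (1,3) else if pe a b 1 3 then (0,5)
  else if pe a b 1 2 then (4,5) else if pe a b 4 5 then (1,2) else (0,0)

lemma Z1 : ∀ i j k : Fin 6, i ≠ j → j ≠ k → i ≠ k → cz i j k ≠ 0 := by decide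

lemma Z2 : ∀ a b c d : Fin 6, a ≠ b → c ≠ d → a ≠ c → a ≠ d → b ≠ c → b ≠ d →
    ¬ crossB a b c d → (0 < cz a b c * cz a b d ∨ 0 < cz c d a * cz c d b) := by decide

lemma Z3 : ∀ a b c d : Fin 6, crossB a b c d → dz a b c d ≠ 0 := by decide

lemma Z4 : ∀ a b c d : Fin 6, crossB a b c d →
    (c, d) = partnerF a b ∨ (d, c) = partnerF a b := by decide

lemma Z5 : ∀ r : Fin 6, r ≠ 0 → 0 < (PZ r).1 ∧ (PZ r).2 < (PZ r).1 ∧ -(PZ r).1 < (PZ r).2 := by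
  decide

lemma PZinj : ∀ r r' : Fin 6, PZ r = PZ r' → r = r' := by decide

lemma crossB_symm : ∀ a b c d : Fin 6, crossB a b c d = crossB c d a b := by decide


-- new material:
/-- base points in ℝ² -/
def P (i : Fin 6) : ℝ × ℝ := (((PZ i).1 : ℝ), ((PZ i).2 : ℝ))

/-- the line functional of segment a b -/
def lf (a b p : ℝ × ℝ) : ℝ := (b.1-a.1)*(p.2-a.2) - (b.2-a.2)*(p.1-a.1)

lemma lf_cast (a b c : Fin 6) : lf (P a) (P b) (P c) = (cz a b c : ℝ) := by
  simp only [lf, P, cz]; push_cast; ring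

lemma lf_seg (a b x y : ℝ × ℝ) (t : ℝ) :
    lf a b (seg x y t) = (1-t) * lf a b x + t * lf a b y := by
  simp only [lf, seg]; ring

lemma line_sep {a b c d : ℝ × ℝ} (h : 0 < lf a b c * lf a b d) :
    Disjoint (oseg a b) (oseg c d) := by
  rcases mul_pos_iff.1 h with ⟨hc, hd⟩ | ⟨hc, hd⟩
  · apply sep_disjoint (b.2-a.2) (-(b.1-a.1)) (-((b.2-a.2)*a.1 - (b.1-a.1)*a.2))
    · nlinarith [hc]
    · nlinarith [hc]
    · simp only [lf] at hc; nlinarith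
    · simp only [lf] at hd; nlinarith
  · apply sep_disjoint (-(b.2-a.2)) (b.1-a.1) ((b.2-a.2)*a.1 - (b.1-a.1)*a.2)
    · nlinarith [hc]
    · nlinarith [hc]
    · simp only [lf] at hc; nlinarith
    · simp only [lf] at hd; nlinarith

lemma oseg_on_line {a b : ℝ × ℝ} {p : ℝ × ℝ} (hp : p ∈ oseg a b) : lf a b p = 0 := by
  obtain ⟨t, _, rfl⟩ := hp
  rw [lf_seg]
  have h1 : lf a b a = 0 := by simp [lf]
  have h2 : lf a b b = 0 := by simp only [lf]; ring
  rw [h1, h2]; ring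

/-- vertex avoidance: a base point not an endpoint is not on the open segment -/
lemma base_avoid {a b v : Fin 6} (hab : a ≠ b) (hva : v ≠ a) (hvb : v ≠ b) :
    P v ∉ oseg (P a) (P b) := by
  intro hmem
  have h0 := oseg_on_line hmem
  rw [lf_cast] at h0
  exact Z1 a b v hab (Ne.symm hvb) (Ne.symm hva) (by exact_mod_cast h0)

/-- main base disjointness: distinct non-crossing base edges have disjoint interiors -/
lemma base_disj {a b c d : Fin 6} (hab : a ≠ b) (hcd : c ≠ d)
    (hne : pe a b c d = false) (hnc : crossB a b c d = false) :
    Disjoint (oseg (P a) (P b)) (oseg (P c) (P d)) := by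
  have hpe : ¬ ((a = c ∧ b = d) ∨ (a = d ∧ b = c)) := by
    intro h; rw [pe] at hne; rcases h with ⟨h1,h2⟩|⟨h1,h2⟩ <;> subst h1 <;> subst h2 <;>
      simp at hne
  by_cases hac : a = c
  · subst hac
    have hbd : b ≠ d := fun h => hpe (Or.inl ⟨rfl, h⟩)
    exact adj_disjoint (by
      have := Z1 a b d hab hbd (fun h => hcd h)
      intro h0; apply this
      have : lf (P a) (P b) (P d) = 0 := by simp only [lf] at h0 ⊢; linarith
      rw [lf_cast] at this; exact_mod_cast this)
  · by_cases had : a = d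
    · subst had
      have hbc : b ≠ c := fun h => hpe (Or.inr ⟨rfl, h⟩)
      rw [oseg_symm (P c) (P a)]
      exact adj_disjoint (by
        have := Z1 a b c hab hbc (Ne.symm hcd)
        intro h0; apply this
        have : lf (P a) (P b) (P c) = 0 := by simp only [lf] at h0 ⊢; linarith
        rw [lf_cast] at this; exact_mod_cast this)
    · by_cases hbc : b = c
      · subst hbc
        rw [oseg_symm (P a) (P b)]
        have hbd : b ≠ d := hcd
        have habd : a ≠ d := had
        exact adj_disjoint (by
          have := Z1 b a d (Ne.symm hab) habd hbd
          intro h0; apply this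
          have : lf (P b) (P a) (P d) = 0 := by simp only [lf] at h0 ⊢; linarith
          rw [lf_cast] at this; exact_mod_cast this)
      · by_cases hbd : b = d
        · subst hbd
          rw [oseg_symm (P a) (P b), oseg_symm (P c) (P b)]
          exact adj_disjoint (by
            have := Z1 b a c (Ne.symm hab) hac (Ne.symm hcd) -- b≠a, a≠c, b≠c
            intro h0; apply this
            have : lf (P b) (P a) (P c) = 0 := by simp only [lf] at h0 ⊢; linarith
            rw [lf_cast] at this; exact_mod_cast this)
        · -- vertex disjoint
          rcases Z2 a b c d hab hcd hac had hbc hbd (by simp [hnc]) with h | h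
          · apply line_sep
            rw [lf_cast, lf_cast]; exact_mod_cast h
          · exact (line_sep (by rw [lf_cast, lf_cast]; exact_mod_cast h)).symm

-- new
noncomputable def sR (i : ℕ) : ℝ := 1/((i:ℝ)+1)
noncomputable def dR (i : ℕ) : ℝ := 1/(4*((i:ℝ)+1)*((i:ℝ)+2))
noncomputable def T (i : ℕ) (p : ℝ × ℝ) : ℝ × ℝ := (p.1, sR i * p.1 + dR i * p.2)
noncomputable def mu (i : ℕ) : ℝ := (sR i - dR i + sR (i+1) + dR (i+1))/2

lemma dR_pos (i : ℕ) : 0 < dR i := by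
  have : (0:ℝ) < (i:ℝ) + 1 := by positivity
  unfold dR; positivity

lemma T_seg (i : ℕ) (a b : ℝ × ℝ) (t : ℝ) : T i (seg a b t) = seg (T i a) (T i b) t := by
  simp only [T, seg, Prod.ext_iff]; exact ⟨trivial, by ring⟩

lemma T_inj (i : ℕ) : Function.Injective (T i) := by
  intro p q h
  have h1 : (T i p).1 = (T i q).1 := congrArg Prod.fst h
  have h2 : (T i p).2 = (T i q).2 := congrArg Prod.snd h
  simp only [T] at h1 h2
  have h3 : p.2 = q.2 := by
    have : dR i * p.2 = dR i * q.2 := by rw [h1] at h2; linarith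
    exact mul_left_cancel₀ (ne_of_gt (dR_pos i)) this
  exact Prod.ext h1 h3

lemma T_oseg (i : ℕ) (a b : ℝ × ℝ) : oseg (T i a) (T i b) = T i '' oseg a b := by
  unfold oseg
  rw [← Set.image_comp]
  refine congrArg (· '' Set.Ioo 0 1) ?_
  funext t
  exact (T_seg i a b t).symm

lemma T_zero (i : ℕ) : T i ((0:ℝ), (0:ℝ)) = (0, 0) := by simp [T]

/-- base point coordinates: positive x, |slope| < 1 -/
lemma Ppos {r : Fin 6} (hr : r ≠ 0) :
    0 < (P r).1 ∧ (P r).2 < (P r).1 ∧ -(P r).1 < (P r).2 := by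
  obtain ⟨h1, h2, h3⟩ := Z5 r hr
  simp only [P]
  refine ⟨by exact_mod_cast h1, by exact_mod_cast h2, ?_⟩
  have : ((-(PZ r).1 : ℤ) : ℝ) < ((PZ r).2 : ℤ) := by exact_mod_cast h3
  push_cast at this; exact this

/-- block point bounds -/
lemma blockpt {i : ℕ} {r : Fin 6} (hr : r ≠ 0) :
    0 < (T i (P r)).1 ∧ (sR i - dR i) * (T i (P r)).1 < (T i (P r)).2 ∧
      (T i (P r)).2 < (sR i + dR i) * (T i (P r)).1 := by
  obtain ⟨h1, h2, h3⟩ := Ppos hr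
  have hd := dR_pos i
  refine ⟨h1, ?_, ?_⟩ <;> simp only [T] <;> nlinarith

lemma key_ineq (i : ℕ) : sR (i+1) + dR (i+1) < sR i - dR i := by
  have hx : (0:ℝ) ≤ (i:ℝ) := Nat.cast_nonneg i
  simp only [sR, dR]
  push_cast
  rw [div_add_div _ _ (by positivity) (by positivity), div_sub_div _ _ (by positivity) (by positivity),
    div_lt_div_iff₀ (by positivity) (by positivity)]
  nlinarith [hx, mul_nonneg hx hx, mul_nonneg (mul_nonneg hx hx) hx,
    mul_nonneg (mul_nonneg (mul_nonneg hx hx) hx) hx]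

lemma mono_ineq {i j : ℕ} (hij : i < j) : sR j + dR j ≤ sR (i+1) + dR (i+1) := by
  have hx : ((i:ℝ)+1) ≤ (j:ℝ) := by exact_mod_cast hij
  have h0 : (0:ℝ) ≤ (i:ℝ) := Nat.cast_nonneg i
  simp only [sR, dR]
  push_cast
  gcongr <;> nlinarith

lemma mu_lt {i : ℕ} : mu i < sR i - dR i := by
  have := key_ineq i; unfold mu; linarith

lemma lt_mu {i j : ℕ} (hij : i < j) : sR j + dR j < mu i := by
  have := key_ineq i; have := mono_ineq hij; unfold mu; linarith

/-- Lf sign facts: block i points above line mu i, block j (j>i) points below -/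
lemma Lf_own {i : ℕ} {r : Fin 6} (hr : r ≠ 0) :
    0 < -(mu i) * (T i (P r)).1 + (T i (P r)).2 := by
  obtain ⟨h1, h2, _⟩ := blockpt (i := i) hr
  nlinarith [mu_lt (i := i)]

lemma Lf_later {i j : ℕ} (hij : i < j) {r : Fin 6} (hr : r ≠ 0) :
    -(mu i) * (T j (P r)).1 + (T j (P r)).2 < 0 := by
  obtain ⟨h1, _, h3⟩ := blockpt (i := j) (r := r) hr
  nlinarith [lt_mu hij]



lemma Z6 : ∀ a b c d : Fin 6, crossB a b c d →
    crossB a b (partnerF a b).1 (partnerF a b).2 = true := by decide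

section Graph
variable (k : ℕ)

def myG : SimpleGraph (Fin (5*k+1)) where
  Adj u v := u ≠ v ∧ (u = 0 ∨ v = 0 ∨ (u.val - 1)/5 = (v.val - 1)/5)
  symm := ⟨by rintro u v ⟨h1, h2⟩; exact ⟨h1.symm, by tauto⟩⟩
  loopless := ⟨fun v h => h.1 rfl⟩

variable {k}

lemma myG_adj {u v : Fin (5*k+1)} :
    (myG k).Adj u v ↔ u ≠ v ∧ (u = 0 ∨ v = 0 ∨ (u.val - 1)/5 = (v.val - 1)/5) := Iff.rfl

def idx (v : Fin (5*k+1)) : ℕ := (v.val - 1)/5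

def pos6 (v : Fin (5*k+1)) : Fin 6 :=
  ⟨if v.val = 0 then 0 else (v.val - 1) % 5 + 1, by split <;> omega⟩

noncomputable def vertex (v : Fin (5*k+1)) : ℝ × ℝ := T (idx v) (P (pos6 v))

lemma pos6_eq_zero {v : Fin (5*k+1)} : pos6 v = 0 ↔ v = 0 := by
  simp only [pos6, Fin.ext_iff, Fin.val_zero]
  split <;> omega

lemma P_zero : P 0 = ((0:ℝ), (0:ℝ)) := by
  simp only [P, PZ]; norm_num

lemma TP_zero (i : ℕ) : T i (P 0) = ((0:ℝ), (0:ℝ)) := by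
  rw [P_zero]; simp [T]

lemma vertex_zero : vertex (0 : Fin (5*k+1)) = ((0:ℝ),(0:ℝ)) := by
  rw [vertex, (pos6_eq_zero (v := (0 : Fin (5*k+1)))).2 rfl, TP_zero]

lemma vertex_T {v : Fin (5*k+1)} {i : ℕ} (h : v = 0 ∨ idx v = i) :
    vertex v = T i (P (pos6 v)) := by
  rcases h with rfl | rfl
  · rw [vertex_zero, (pos6_eq_zero (v := (0:Fin (5*k+1)))).2 rfl, TP_zero]
  · rfl

lemma recon_inj {i : ℕ} {u u' : Fin (5*k+1)} (hu : u = 0 ∨ idx u = i)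
    (hu' : u' = 0 ∨ idx u' = i) (hp : pos6 u = pos6 u') : u = u' := by
  by_cases h0 : u = 0
  · subst h0
    have : pos6 u' = 0 := by rw [← hp, (pos6_eq_zero).2 rfl]
    exact ((pos6_eq_zero).1 this).symm
  · have h0' : u' ≠ 0 := by
      intro h; subst h
      exact h0 ((pos6_eq_zero).1 (by rw [hp, (pos6_eq_zero).2 rfl]))
    have hi : idx u = i := hu.resolve_left h0
    have hi' : idx u' = i := hu'.resolve_left h0'
    have hv0 : u.val ≠ 0 := fun h => h0 (Fin.ext h)
    have hv0' : u'.val ≠ 0 := fun h => h0' (Fin.ext h)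
    have hpv : (u.val - 1) % 5 = (u'.val - 1) % 5 := by
      have := congrArg Fin.val hp
      simp only [pos6] at this
      rw [if_neg hv0, if_neg hv0'] at this
      omega
    simp only [idx] at hi hi'
    exact Fin.ext (by omega)

/-- vertex injectivity -/
lemma vertex_inj : Function.Injective (vertex (k := k)) := by
  intro u v h
  by_cases hu : u = 0 <;> by_cases hv : v = 0
  · rw [hu, hv]
  · exfalso
    rw [hu, vertex_zero] at h
    have := (Ppos ((not_iff_not.2 pos6_eq_zero).2 hv : pos6 v ≠ 0)).1
    have hx : (vertex v).1 = (P (pos6 v)).1 := rfl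
    rw [← h] at hx
    simp at hx; linarith
  · exfalso
    rw [hv, vertex_zero] at h
    have := (Ppos ((not_iff_not.2 pos6_eq_zero).2 hu : pos6 u ≠ 0)).1
    have hx : (vertex u).1 = (P (pos6 u)).1 := rfl
    rw [h] at hx
    simp at hx; linarith
  · have hru : pos6 u ≠ 0 := (not_iff_not.2 pos6_eq_zero).2 hu
    have hrv : pos6 v ≠ 0 := (not_iff_not.2 pos6_eq_zero).2 hv
    rcases lt_trichotomy (idx u) (idx v) with hij | hij | hij
    · exfalso
      have h1 := Lf_own (i := idx u) hru
      have h2 := Lf_later hij hrv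
      rw [show T (idx u) (P (pos6 u)) = vertex u from rfl] at h1
      rw [show T (idx v) (P (pos6 v)) = vertex v from rfl] at h2
      rw [h] at h1; linarith
    · have := T_inj (idx u) (h.trans (by rw [vertex, hij]))
      have hpp : pos6 u = pos6 v := by
        apply PZinj
        have h1 := congrArg Prod.fst this
        have h2 := congrArg Prod.snd this
        simp only [P] at h1 h2
        exact Prod.ext (by exact_mod_cast h1) (by exact_mod_cast h2)
      exact recon_inj (Or.inr rfl) (Or.inr hij.symm) hpp
    · exfalso
      have h1 := Lf_own (i := idx v) hrv
      have h2 := Lf_later hij hru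
      rw [show T (idx v) (P (pos6 v)) = vertex v from rfl] at h1
      rw [show T (idx u) (P (pos6 u)) = vertex u from rfl] at h2
      rw [h] at h2; linarith

end Graph
section CrossBlock

lemma Tdir_cross (i : ℕ) (a b c d : ℝ × ℝ) :
    ((T i b).1-(T i a).1)*((T i d).2-(T i c).2) - ((T i b).2-(T i a).2)*((T i d).1-(T i c).1)
    = dR i * ((b.1-a.1)*(d.2-c.2) - (b.2-a.2)*(d.1-c.1)) := by
  simp only [T]; ring

lemma dR_pos' (i : ℕ) : 0 < dR i := by
  have : (0:ℝ) < (i:ℝ) + 1 := by positivity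
  unfold dR; positivity

/-- cross-block: second edge has no apex endpoint -/
lemma cbd1 {i j : ℕ} (hij : i < j) {a b c d : Fin 6} (hc : c ≠ 0) (hd : d ≠ 0) :
    Disjoint (oseg (T i (P a)) (T i (P b))) (oseg (T j (P c)) (T j (P d))) := by
  apply sep_disjoint (-(mu i)) 1 0
  · by_cases ha : a = 0
    · subst ha; rw [TP_zero]; norm_num
    · have := Lf_own (i := i) ha; linarith
  · by_cases hb : b = 0
    · subst hb; rw [TP_zero]; norm_num
    · have := Lf_own (i := i) hb; linarith
  · have := Lf_later hij hc; linarith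
  · have := Lf_later hij hd; linarith

/-- cross-block: first edge has no apex endpoint -/
lemma cbd2 {i j : ℕ} (hij : i < j) {a b : Fin 6} (ha : a ≠ 0) (hb : b ≠ 0) (c d : Fin 6) :
    Disjoint (oseg (T i (P a)) (T i (P b))) (oseg (T j (P c)) (T j (P d))) := by
  refine (sep_disjoint (mu i) (-1) 0 ?_ ?_ ?_ ?_).symm
  · by_cases hc : c = 0
    · subst hc; rw [TP_zero]; norm_num
    · have := Lf_later hij hc; linarith
  · by_cases hd : d = 0
    · subst hd; rw [TP_zero]; norm_num
    · have := Lf_later hij hd; linarith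
  · have := Lf_own (i := i) ha; linarith
  · have := Lf_own (i := i) hb; linarith

/-- cross-block: both edges from the apex -/
lemma cbd3 {i j : ℕ} (hij : i < j) {b d : Fin 6} (hb : b ≠ 0) (hd : d ≠ 0) :
    Disjoint (oseg (T i (P 0)) (T i (P b))) (oseg (T j (P 0)) (T j (P d))) := by
  rw [TP_zero i, TP_zero j]
  apply adj_disjoint
  simp only [show ((0:ℝ),(0:ℝ)).1 = 0 from rfl, show ((0:ℝ),(0:ℝ)).2 = 0 from rfl,
    sub_zero]
  intro hcontra
  have h1 := Lf_own (i := i) hb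
  have h2 := Lf_later hij hd
  have hb1 := (Ppos hb).1
  have hd1 := (Ppos hd).1
  have hxb : 0 < (T i (P b)).1 := by simpa [T] using hb1
  have hxd : 0 < (T j (P d)).1 := by simpa [T] using hd1
  nlinarith

lemma cross_block_lt {i j : ℕ} (hij : i < j) {a b c d : Fin 6} (hab : a ≠ b) (hcd : c ≠ d) :
    Disjoint (oseg (T i (P a)) (T i (P b))) (oseg (T j (P c)) (T j (P d))) := by
  by_cases hc : c = 0
  · subst hc
    have hd : d ≠ 0 := fun h => hcd h.symm
    by_cases ha : a = 0
    · subst ha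
      exact cbd3 hij (fun h => hab h.symm) hd
    · by_cases hb : b = 0
      · subst hb
        rw [oseg_symm (T i (P a)) (T i (P 0))]
        exact cbd3 hij ha hd
      · exact cbd2 hij ha hb _ _
  · by_cases hd : d = 0
    · subst hd
      by_cases ha : a = 0
      · subst ha
        rw [oseg_symm (T j (P c)) (T j (P 0))]
        exact cbd3 hij (fun h => hab h.symm) hc
      · by_cases hb : b = 0
        · subst hb
          rw [oseg_symm (T i (P a)) (T i (P 0)), oseg_symm (T j (P c)) (T j (P 0))]
          exact cbd3 hij ha hc
        · exact cbd2 hij ha hb _ _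
    · exact cbd1 hij hc hd

lemma cross_block {i j : ℕ} (hij : i ≠ j) {a b c d : Fin 6} (hab : a ≠ b) (hcd : c ≠ d) :
    Disjoint (oseg (T i (P a)) (T i (P b))) (oseg (T j (P c)) (T j (P d))) := by
  rcases hij.lt_or_gt with h | h
  · exact cross_block_lt h hab hcd
  · exact (cross_block_lt h hcd hab).symm

end CrossBlock

section Edges
variable {k : ℕ}

noncomputable def EP (e : (myG k).edgeSet) : Fin (5*k+1) × Fin (5*k+1) := Quot.out e.1

lemma edge_eq (e : (myG k).edgeSet) : e.1 = s((EP e).1, (EP e).2) := (Quot.out_eq e.1).symm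

lemma edge_adj (e : (myG k).edgeSet) : (myG k).Adj (EP e).1 (EP e).2 :=
  (SimpleGraph.mem_edgeSet _).1 (by rw [← edge_eq]; exact e.2)

noncomputable def blkE (e : (myG k).edgeSet) : ℕ := max (idx (EP e).1) (idx (EP e).2)

lemma idx_zero : idx (0 : Fin (5*k+1)) = 0 := by simp [idx]

lemma endpoint_or (e : (myG k).edgeSet) :
    ((EP e).1 = 0 ∨ idx (EP e).1 = blkE e) ∧ ((EP e).2 = 0 ∨ idx (EP e).2 = blkE e) := by
  obtain ⟨hne, h⟩ := edge_adj e
  rcases h with h | h | h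
  · refine ⟨Or.inl h, Or.inr ?_⟩
    rw [blkE, h, idx_zero]; omega
  · refine ⟨Or.inr ?_, Or.inl h⟩
    rw [blkE, h, idx_zero]; omega
  · have : idx (EP e).1 = idx (EP e).2 := h
    refine ⟨Or.inr ?_, Or.inr ?_⟩ <;> rw [blkE] <;> omega

lemma pos6_ne (e : (myG k).edgeSet) : pos6 (EP e).1 ≠ pos6 (EP e).2 := fun h =>
  (edge_adj e).1 (recon_inj (endpoint_or e).1 (endpoint_or e).2 h)

noncomputable def curveE (e : (myG k).edgeSet) : ℝ → ℝ × ℝ :=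
  seg (vertex (EP e).1) (vertex (EP e).2)

lemma curveE_eq (e : (myG k).edgeSet) :
    curveE e = seg (T (blkE e) (P (pos6 (EP e).1))) (T (blkE e) (P (pos6 (EP e).2))) := by
  rw [curveE, vertex_T (endpoint_or e).1, vertex_T (endpoint_or e).2]

lemma curveE_img (e : (myG k).edgeSet) :
    curveE e '' Set.Ioo 0 1 = oseg (T (blkE e) (P (pos6 (EP e).1))) (T (blkE e) (P (pos6 (EP e).2))) := by
  rw [curveE_eq]; rfl

/-- distinct edges of the same block have distinct base pairs -/
lemma pe_false {e f : (myG k).edgeSet} (hef : f ≠ e) (hblk : blkE f = blkE e) :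
    pe (pos6 (EP e).1) (pos6 (EP e).2) (pos6 (EP f).1) (pos6 (EP f).2) = false := by
  by_contra hpe
  have hpe' : pe (pos6 (EP e).1) (pos6 (EP e).2) (pos6 (EP f).1) (pos6 (EP f).2) = true := by
    revert hpe; cases pe (pos6 (EP e).1) (pos6 (EP e).2) (pos6 (EP f).1) (pos6 (EP f).2) <;> simp
  apply hef
  have hf1 := (endpoint_or f).1
  have hf2 := (endpoint_or f).2
  rw [hblk] at hf1 hf2
  simp only [pe, Bool.or_eq_true, Bool.and_eq_true, decide_eq_true_eq] at hpe'
  apply Subtype.ext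
  rw [edge_eq e, edge_eq f]
  rcases hpe' with ⟨h1, h2⟩ | ⟨h1, h2⟩
  · rw [recon_inj hf1 (endpoint_or e).1 h1.symm, recon_inj hf2 (endpoint_or e).2 h2.symm]
  · rw [recon_inj hf1 (endpoint_or e).2 h2.symm, recon_inj hf2 (endpoint_or e).1 h1.symm,
      Sym2.eq_swap]

/-- main classification of interior intersections -/
lemma classify {e f : (myG k).edgeSet} (hef : f ≠ e) {p : ℝ × ℝ}
    (hp1 : p ∈ curveE e '' Set.Ioo 0 1) (hp2 : p ∈ curveE f '' Set.Ioo 0 1) :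
    blkE f = blkE e ∧
      crossB (pos6 (EP e).1) (pos6 (EP e).2) (pos6 (EP f).1) (pos6 (EP f).2) = true := by
  rw [curveE_img] at hp1 hp2
  have hab : pos6 (EP e).1 ≠ pos6 (EP e).2 := pos6_ne e
  have hcd : pos6 (EP f).1 ≠ pos6 (EP f).2 := pos6_ne f
  have hblk : blkE f = blkE e := by
    by_contra hne
    exact (Set.disjoint_left.1 (cross_block (fun h => hne h.symm) hab hcd)) hp1 hp2
  refine ⟨hblk, ?_⟩
  by_contra hcr
  have hcr' : crossB (pos6 (EP e).1) (pos6 (EP e).2) (pos6 (EP f).1) (pos6 (EP f).2) = false := by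
    revert hcr; cases crossB (pos6 (EP e).1) (pos6 (EP e).2) (pos6 (EP f).1) (pos6 (EP f).2) <;> simp
  have hbd := base_disj hab hcd (pe_false hef hblk) hcr'
  rw [hblk] at hp2
  rw [T_oseg] at hp1 hp2
  obtain ⟨x, hx, hxe⟩ := hp1
  obtain ⟨y, hy, hye⟩ := hp2
  have : x = y := T_inj _ (hxe.trans hye.symm)
  subst this
  exact (Set.disjoint_left.1 hbd) hx hy

end Edges
section Drawing
variable {k : ℕ}

lemma seg_flip (a b : ℝ × ℝ) (t : ℝ) : seg a b t = seg b a (1-t) := by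
  simp only [seg, Prod.ext_iff]; constructor <;> ring

lemma dz_cast (a b c d : Fin 6) :
    ((P b).1-(P a).1)*((P d).2-(P c).2) - ((P b).2-(P a).2)*((P d).1-(P c).1)
      = (dz a b c d : ℝ) := by
  simp only [P, dz]; push_cast; ring

lemma partner_param {e f : (myG k).edgeSet} (hef : f ≠ e) {p : ℝ × ℝ}
    (hp1 : p ∈ curveE e '' Set.Ioo 0 1) (hp2 : p ∈ curveE f '' Set.Ioo 0 1) :
    ∃ s : ℝ, p = seg (T (blkE e) (P (partnerF (pos6 (EP e).1) (pos6 (EP e).2)).1))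
                    (T (blkE e) (P (partnerF (pos6 (EP e).1) (pos6 (EP e).2)).2)) s := by
  obtain ⟨hbf, hcf⟩ := classify hef hp1 hp2
  rw [curveE_img, hbf] at hp2
  obtain ⟨s, _, hs⟩ := hp2
  rcases Z4 _ _ _ _ hcf with h | h
  · exact ⟨s, by rw [← h]; exact hs.symm⟩
  · exact ⟨1 - s, by rw [← h]; rw [← seg_flip]; exact hs.symm⟩

lemma one_cross_aux (e : (myG k).edgeSet) :
    Set.Subsingleton {p : ℝ × ℝ | ∃ f : (myG k).edgeSet, f ≠ e ∧
      p ∈ curveE e '' Set.Ioo 0 1 ∧ p ∈ curveE f '' Set.Ioo 0 1} := by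
  rintro p ⟨f, hfe, hpe, hpf⟩ q ⟨f', hf'e, hqe, hqf⟩
  obtain ⟨sp, hp⟩ := partner_param hfe hpe hpf
  obtain ⟨sq, hq⟩ := partner_param hf'e hqe hqf
  obtain ⟨_, hcf⟩ := classify hfe hpe hpf
  rw [curveE_img] at hpe hqe
  obtain ⟨tp, _, hp1⟩ := hpe
  obtain ⟨tq, _, hq1⟩ := hqe
  have hcB := Z6 _ _ _ _ hcf
  refine cross_unique (a := T (blkE e) (P (pos6 (EP e).1))) (b := T (blkE e) (P (pos6 (EP e).2)))
    ?_ hp1.symm hp hq1.symm hq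
  rw [Tdir_cross, dz_cast]
  exact mul_ne_zero (dR_pos' _).ne' (Int.cast_ne_zero.2 (Z3 _ _ _ _ hcB))

lemma vertex_x_pos {v : Fin (5*k+1)} (hv : v ≠ 0) : 0 < (vertex v).1 := by
  have := (Ppos ((not_iff_not.2 pos6_eq_zero).2 hv : pos6 v ≠ 0)).1
  simpa [vertex, T] using this

lemma avoid (e : (myG k).edgeSet) :
    ∀ t ∈ Set.Ioo (0:ℝ) 1, ∀ v : Fin (5*k+1), curveE e t ≠ vertex v := by
  intro t ht v heq
  have hne : vertex (EP e).1 ≠ vertex (EP e).2 := fun h => (edge_adj e).1 (vertex_inj h)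
  by_cases hv1 : v = (EP e).1
  · subst hv1
    have h0 : curveE e t = curveE e 0 := by rw [heq, curveE, seg_zero]
    exact (ne_of_gt ht.1) (seg_inj hne h0)
  by_cases hv2 : v = (EP e).2
  · subst hv2
    have h0 : curveE e t = curveE e 1 := by rw [heq, curveE, seg_one]
    exact (ne_of_lt ht.2) (seg_inj hne h0)
  by_cases hv0 : v = 0
  · subst hv0
    have h1 : (EP e).1 ≠ 0 := fun h => hv1 (by rw [h])
    have h2 : (EP e).2 ≠ 0 := fun h => hv2 (by rw [h])
    have hx1 := vertex_x_pos h1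
    have hx2 := vertex_x_pos h2
    have hcc : (curveE e t).1 = (1-t)*(vertex (EP e).1).1 + t*(vertex (EP e).2).1 := rfl
    have hpos : 0 < (curveE e t).1 := by rw [hcc]; nlinarith [ht.1, ht.2]
    rw [heq, vertex_zero] at hpos
    simp at hpos
  · have hr : pos6 v ≠ 0 := (not_iff_not.2 pos6_eq_zero).2 hv0
    by_cases hiv : idx v = blkE e
    · have hra : pos6 v ≠ pos6 (EP e).1 := fun h =>
        hv1 (recon_inj (Or.inr hiv) (endpoint_or e).1 h)
      have hrb : pos6 v ≠ pos6 (EP e).2 := fun h =>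
        hv2 (recon_inj (Or.inr hiv) (endpoint_or e).2 h)
      rw [curveE_eq] at heq
      rw [vertex_T (Or.inr hiv)] at heq
      rw [← T_seg] at heq
      have := T_inj _ heq
      exact base_avoid (pos6_ne e) hra hrb ⟨t, ht, this⟩
    · set i := blkE e with hi
      set j := idx v with hj
      have hvT : vertex v = T j (P (pos6 v)) := rfl
      set A := T i (P (pos6 (EP e).1)) with hAA
      set B := T i (P (pos6 (EP e).2)) with hBB
      have hpc1 : (curveE e t).1 = (1-t)*A.1 + t*B.1 := by rw [curveE_eq]; rfl
      have hpc2 : (curveE e t).2 = (1-t)*A.2 + t*B.2 := by rw [curveE_eq]; rfl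
      rcases Nat.lt_or_ge i j with hij | hij
      · have hA1 : 0 ≤ -(mu i) * A.1 + A.2 := by
          by_cases h0 : (EP e).1 = 0
          · rw [hAA, h0, (pos6_eq_zero (v := (0:Fin (5*k+1)))).2 rfl, TP_zero]; norm_num
          · exact le_of_lt (Lf_own ((not_iff_not.2 pos6_eq_zero).2 h0))
        have hB1 : 0 ≤ -(mu i) * B.1 + B.2 := by
          by_cases h0 : (EP e).2 = 0
          · rw [hBB, h0, (pos6_eq_zero (v := (0:Fin (5*k+1)))).2 rfl, TP_zero]; norm_num
          · exact le_of_lt (Lf_own ((not_iff_not.2 pos6_eq_zero).2 h0))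
        have hP : 0 ≤ -(mu i) * (curveE e t).1 + (curveE e t).2 := by
          rw [hpc1, hpc2]
          nlinarith [ht.1, ht.2]
        have hV : -(mu i) * (vertex v).1 + (vertex v).2 < 0 := by
          rw [hvT]; exact Lf_later hij hr
        rw [heq] at hP; linarith
      · have hij' : j < i := lt_of_le_of_ne hij (fun h => hiv h)
        have hA1 : -(mu j) * A.1 + A.2 ≤ 0 := by
          by_cases h0 : (EP e).1 = 0
          · rw [hAA, h0, (pos6_eq_zero (v := (0:Fin (5*k+1)))).2 rfl, TP_zero]; norm_num
          · exact le_of_lt (Lf_later hij' ((not_iff_not.2 pos6_eq_zero).2 h0))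
        have hB1 : -(mu j) * B.1 + B.2 ≤ 0 := by
          by_cases h0 : (EP e).2 = 0
          · rw [hBB, h0, (pos6_eq_zero (v := (0:Fin (5*k+1)))).2 rfl, TP_zero]; norm_num
          · exact le_of_lt (Lf_later hij' ((not_iff_not.2 pos6_eq_zero).2 h0))
        have hP : -(mu j) * (curveE e t).1 + (curveE e t).2 ≤ 0 := by
          rw [hpc1, hpc2]
          nlinarith [ht.1, ht.2]
        have hV : 0 < -(mu j) * (vertex v).1 + (vertex v).2 := by
          rw [hvT]; exact Lf_own hr
        rw [heq] at hP; linarith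

end Drawing


-- degree of apex
lemma nbhd_zero : (myG k).neighborSet 0 = {u : Fin (5*k+1) | u ≠ 0} := by
  ext u
  simp only [SimpleGraph.mem_neighborSet, myG_adj, Set.mem_setOf_eq]
  constructor
  · rintro ⟨h1, _⟩; exact fun h => h1 h.symm
  · intro h; exact ⟨fun h' => h h'.symm, by tauto⟩

lemma card_nbhd_zero : Nat.card ((myG k).neighborSet 0) = 5*k := by
  rw [nbhd_zero]
  rw [Nat.card_eq_fintype_card]
  have : Fintype.card {u : Fin (5*k+1) | u ≠ 0} = Fintype.card {u : Fin (5*k+1) // u ≠ 0} := rfl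
  rw [this, Fintype.card_subtype_compl]
  simp

-- degree of non-apex vertex v
lemma card_nbhd_ne {v : Fin (5*k+1)} (hv : v ≠ 0) : Nat.card ((myG k).neighborSet v) = 5 := by
  have hv1 : 1 ≤ v.val := by
    rcases Nat.eq_zero_or_pos v.val with h | h
    · exact absurd (Fin.ext h) hv
    · exact h
  have hvk : v.val ≤ 5*k := by omega
  have hik : idx v ≤ k - 1 ∧ 1 ≤ k := by unfold idx; omega
  set i := idx v with hidef
  have hb : ∀ j : ℕ, 1 ≤ j → j ≤ 5 → 5*i + j < 5*k+1 := by omega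
  set m1 : Fin (5*k+1) := ⟨5*i+1, hb 1 le_rfl (by norm_num)⟩ with hm1
  set m2 : Fin (5*k+1) := ⟨5*i+2, hb 2 (by norm_num) (by norm_num)⟩ with hm2
  set m3 : Fin (5*k+1) := ⟨5*i+3, hb 3 (by norm_num) (by norm_num)⟩ with hm3
  set m4 : Fin (5*k+1) := ⟨5*i+4, hb 4 (by norm_num) (by norm_num)⟩ with hm4
  set m5 : Fin (5*k+1) := ⟨5*i+5, hb 5 (by norm_num) le_rfl⟩ with hm5
  set F : Finset (Fin (5*k+1)) := ({0, m1, m2, m3, m4, m5} : Finset _).erase v with hF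
  have hmem : ∀ u : Fin (5*k+1), u ∈ ({0, m1, m2, m3, m4, m5} : Finset _) ↔
      (u = 0 ∨ idx u = i) := by
    intro u
    simp only [Finset.mem_insert, Finset.mem_singleton]
    constructor
    · rintro (rfl | rfl | rfl | rfl | rfl | rfl)
      · exact Or.inl rfl
      all_goals (right; simp only [idx, hm1, hm2, hm3, hm4, hm5]; omega)
    · rintro (rfl | h)
      · exact Or.inl rfl
      · by_cases h0 : u = 0
        · exact Or.inl h0
        · have h1 : 1 ≤ u.val := by
            rcases Nat.eq_zero_or_pos u.val with h' | h'
            · exact absurd (Fin.ext h') h0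
            · exact h'
          simp only [idx] at h
          right
          have : u.val = 5*i + ((u.val - 1) % 5 + 1) := by omega
          have hr : (u.val - 1) % 5 + 1 = 1 ∨ (u.val - 1) % 5 + 1 = 2 ∨ (u.val - 1) % 5 + 1 = 3
              ∨ (u.val - 1) % 5 + 1 = 4 ∨ (u.val - 1) % 5 + 1 = 5 := by omega
          rcases hr with h' | h' | h' | h' | h' <;>
            [left; (right;left); (right;right;left); (right;right;right;left);
             (right;right;right;right)] <;>
            (apply Fin.ext; simp only [hm1, hm2, hm3, hm4, hm5]; omega)
  have hset : (myG k).neighborSet v = ↑F := by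
    ext u
    simp only [SimpleGraph.mem_neighborSet, myG_adj, hF, Finset.coe_erase, Set.mem_diff,
      Finset.mem_coe, Set.mem_singleton_iff]
    constructor
    · rintro ⟨h1, h2⟩
      refine ⟨(hmem u).2 ?_, fun h => h1 (by rw [h])⟩
      rcases h2 with h | h | h
      · exact absurd h hv
      · exact Or.inl h
      · refine Or.inr ?_
        show idx u = i
        rw [hidef]; exact h.symm
    · rintro ⟨h1, h2⟩
      have := (hmem u).1 h1
      refine ⟨fun h => h2 (by rw [h]), ?_⟩
      rcases this with h | h
      · exact Or.inr (Or.inl h)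
      · refine Or.inr (Or.inr ?_)
        show (v.val - 1)/5 = (u.val - 1)/5
        have : idx u = idx v := by rw [h, hidef]
        exact this.symm
  rw [hset]
  rw [Nat.card_coe_set_eq, Set.ncard_coe_finset]
  have hvmem : v ∈ ({0, m1, m2, m3, m4, m5} : Finset (Fin (5*k+1))) := by
    rw [hmem]; exact Or.inr rfl
  rw [hF, Finset.card_erase_of_mem hvmem]
  have h45 : m4 ∉ ({m5} : Finset (Fin (5*k+1))) := by
    simp only [Finset.mem_singleton, hm4, hm5, Fin.ext_iff]; omega
  have h34 : m3 ∉ ({m4, m5} : Finset (Fin (5*k+1))) := by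
    simp only [Finset.mem_insert, Finset.mem_singleton, hm3, hm4, hm5, Fin.ext_iff]; omega
  have h23 : m2 ∉ ({m3, m4, m5} : Finset (Fin (5*k+1))) := by
    simp only [Finset.mem_insert, Finset.mem_singleton, hm2, hm3, hm4, hm5, Fin.ext_iff]; omega
  have h12 : m1 ∉ ({m2, m3, m4, m5} : Finset (Fin (5*k+1))) := by
    simp only [Finset.mem_insert, Finset.mem_singleton, hm1, hm2, hm3, hm4, hm5, Fin.ext_iff]
    omega
  have h01 : (0 : Fin (5*k+1)) ∉ ({m1, m2, m3, m4, m5} : Finset (Fin (5*k+1))) := by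
    simp only [Finset.mem_insert, Finset.mem_singleton, hm1, hm2, hm3, hm4, hm5, Fin.ext_iff,
      Fin.val_zero]
    omega
  rw [Finset.card_insert_of_notMem h01, Finset.card_insert_of_notMem h12,
    Finset.card_insert_of_notMem h23, Finset.card_insert_of_notMem h34,
    Finset.card_insert_of_notMem h45, Finset.card_singleton]


section Matching
variable {k : ℕ}

lemma matching_unique_edge {M : (myG k).Subgraph} (hM : M.IsMatching) {e f : Sym2 (Fin (5*k+1))}
    (he : e ∈ M.edgeSet) (hf : f ∈ M.edgeSet) {x : Fin (5*k+1)}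
    (hxe : x ∈ e) (hxf : x ∈ f) : e = f := by
  obtain ⟨y, rfl⟩ := Sym2.mem_iff_exists.1 hxe
  obtain ⟨y', rfl⟩ := Sym2.mem_iff_exists.1 hxf
  have h1 : M.Adj x y := (SimpleGraph.Subgraph.mem_edgeSet).1 he
  have h2 : M.Adj x y' := (SimpleGraph.Subgraph.mem_edgeSet).1 hf
  obtain ⟨w, hw, hun⟩ := hM (M.edge_vert h1)
  rw [hun y h1, hun y' h2]

open Classical in
noncomputable def clE (e : Sym2 (Fin (5*k+1))) : ℕ :=
  if (0 : Fin (5*k+1)) ∈ e then k else max (idx (Quot.out e).1) (idx (Quot.out e).2)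

lemma out_adj {e : Sym2 (Fin (5*k+1))} (he : e ∈ (myG k).edgeSet) :
    (myG k).Adj (Quot.out e).1 (Quot.out e).2 := by
  have hee : e = s((Quot.out e).1, (Quot.out e).2) := (Quot.out_eq e).symm
  rw [hee] at he
  exact (SimpleGraph.mem_edgeSet _).1 he

lemma matching_bound (M : (myG k).Subgraph) (hM : M.IsMatching) :
    M.edgeSet.ncard ≤ 2*k + 1 := by
  classical
  by_cases hk : k = 0
  · subst hk
    have hemp : M.edgeSet = ∅ := by
      ext e
      simp only [Set.mem_empty_iff_false, iff_false]
      intro he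
      have hadj := out_adj (M.edgeSet_subset he)
      have h1 := (Quot.out e).1.isLt
      have h2 := (Quot.out e).2.isLt
      exact hadj.1 (Fin.ext (by omega))
    rw [hemp]; simp
  have hk1 : 1 ≤ k := Nat.one_le_iff_ne_zero.2 hk
  have hfin : M.edgeSet.Finite := Set.toFinite _
  rw [Set.ncard_eq_toFinset_card _ hfin]
  set Es := hfin.toFinset with hEsdef
  have hmemEs : ∀ e, e ∈ Es ↔ e ∈ M.edgeSet := fun e => hfin.mem_toFinset
  -- endpoints of non-apex edges lie in their block
  have hblk : ∀ e ∈ Es, (0 : Fin (5*k+1)) ∉ e →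
      max (idx (Quot.out e).1) (idx (Quot.out e).2) < k := by
    intro e he h0
    have hadj := out_adj (M.edgeSet_subset ((hmemEs e).1 he))
    have h1 : (Quot.out e).1 ≠ 0 := fun h => h0 (h ▸ Sym2.out_fst_mem e)
    have h2 : (Quot.out e).2 ≠ 0 := fun h => h0 (h ▸ Sym2.out_snd_mem e)
    have hv1 : 1 ≤ (Quot.out e).1.val := by
      rcases Nat.eq_zero_or_pos (Quot.out e).1.val with h | h
      · exact absurd (Fin.ext h) h1
      · exact h
    have hv2 : 1 ≤ (Quot.out e).2.val := by
      rcases Nat.eq_zero_or_pos (Quot.out e).2.val with h | h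
      · exact absurd (Fin.ext h) h2
      · exact h
    have hb1 : (Quot.out e).1.val ≤ 5*k := by omega
    have hb2 : (Quot.out e).2.val ≤ 5*k := by
      have := (Quot.out e).2.isLt; omega
    have hb1' : (Quot.out e).1.val ≤ 5*k := by
      have := (Quot.out e).1.isLt; omega
    simp only [idx]
    omega
  have hmap : ∀ e ∈ Es, clE e ∈ Finset.range (k+1) := by
    intro e he
    rw [Finset.mem_range]
    by_cases h0 : (0 : Fin (5*k+1)) ∈ e
    · simp [clE, h0]
    · rw [clE, if_neg h0]
      exact Nat.lt_succ_of_lt (hblk e he h0)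
  have key := Finset.card_eq_sum_card_fiberwise hmap
  -- apex fiber
  have hfibk : (Es.filter (fun e => clE e = k)).card ≤ 1 := by
    rw [Finset.card_le_one]
    intro e he f hf
    simp only [Finset.mem_filter] at he hf
    have h0e : (0 : Fin (5*k+1)) ∈ e := by
      by_contra h0
      rw [clE, if_neg h0] at he
      exact absurd he.2 (Nat.ne_of_lt (hblk e he.1 h0))
    have h0f : (0 : Fin (5*k+1)) ∈ f := by
      by_contra h0
      rw [clE, if_neg h0] at hf
      exact absurd hf.2 (Nat.ne_of_lt (hblk f hf.1 h0))
    exact matching_unique_edge hM ((hmemEs e).1 he.1) ((hmemEs f).1 hf.1) h0e h0f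
  -- block fibers
  have hfibj : ∀ j, j < k → (Es.filter (fun e => clE e = j)).card ≤ 2 := by
    intro j hj
    set Fj := Es.filter (fun e => clE e = j) with hFj
    have hb : ∀ i : ℕ, 1 ≤ i → i ≤ 5 → 5*j + i < 5*k+1 := by omega
    set b1 : Fin (5*k+1) := ⟨5*j+1, hb 1 le_rfl (by norm_num)⟩ with hb1
    set b2 : Fin (5*k+1) := ⟨5*j+2, hb 2 (by norm_num) (by norm_num)⟩ with hb2
    set b3 : Fin (5*k+1) := ⟨5*j+3, hb 3 (by norm_num) (by norm_num)⟩ with hb3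
    set b4 : Fin (5*k+1) := ⟨5*j+4, hb 4 (by norm_num) (by norm_num)⟩ with hb4
    set b5 : Fin (5*k+1) := ⟨5*j+5, hb 5 (by norm_num) le_rfl⟩ with hb5
    set Bj : Finset (Fin (5*k+1)) := {b1, b2, b3, b4, b5} with hBj
    have hBcard : Bj.card ≤ 5 := by
      apply le_trans (Finset.card_insert_le _ _)
      apply Nat.succ_le_succ
      apply le_trans (Finset.card_insert_le _ _)
      apply Nat.succ_le_succ
      apply le_trans (Finset.card_insert_le _ _)
      apply Nat.succ_le_succ
      apply le_trans (Finset.card_insert_le _ _)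
      apply Nat.succ_le_succ
      simp
    set efin : Sym2 (Fin (5*k+1)) → Finset (Fin (5*k+1)) :=
      fun e => {(Quot.out e).1, (Quot.out e).2} with hefin
    have hout0 : ∀ e ∈ Fj, (0 : Fin (5*k+1)) ∉ e := by
      intro e he h0
      rw [hFj, Finset.mem_filter] at he
      rw [clE, if_pos h0] at he
      omega
    have hidxe : ∀ e ∈ Fj, idx (Quot.out e).1 = j ∧ idx (Quot.out e).2 = j := by
      intro e he
      have he' := he
      rw [hFj, Finset.mem_filter] at he'
      have h0 := hout0 e he
      have hadj := out_adj (M.edgeSet_subset ((hmemEs e).1 he'.1))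
      have hcl := he'.2
      rw [clE, if_neg h0] at hcl
      have h1 : (Quot.out e).1 ≠ 0 := fun h => h0 (h ▸ Sym2.out_fst_mem e)
      have h2 : (Quot.out e).2 ≠ 0 := fun h => h0 (h ▸ Sym2.out_snd_mem e)
      obtain ⟨hne, hor⟩ := hadj
      rcases hor with h | h | h
      · exact absurd h h1
      · exact absurd h h2
      · have : idx (Quot.out e).1 = idx (Quot.out e).2 := h
        constructor <;> omega
    have hsub : ∀ e ∈ Fj, efin e ⊆ Bj := by
      intro e he x hx
      obtain ⟨hi1, hi2⟩ := hidxe e he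
      have h0 := hout0 e he
      have hx' : x = (Quot.out e).1 ∨ x = (Quot.out e).2 := by
        rw [hefin] at hx
        simpa using hx
      have hxi : idx x = j ∧ x ≠ 0 := by
        rcases hx' with rfl | rfl
        · exact ⟨hi1, fun h => h0 (h ▸ Sym2.out_fst_mem e)⟩
        · exact ⟨hi2, fun h => h0 (h ▸ Sym2.out_snd_mem e)⟩
      have hxv : 1 ≤ x.val := by
        rcases Nat.eq_zero_or_pos x.val with h | h
        · exact absurd (Fin.ext h) hxi.2
        · exact h
      have : 5*j + 1 ≤ x.val ∧ x.val ≤ 5*j + 5 := by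
        have := hxi.1
        simp only [idx] at this
        have := x.isLt
        omega
      rw [hBj]
      simp only [Finset.mem_insert, Finset.mem_singleton, hb1, hb2, hb3, hb4, hb5,
        Fin.ext_iff]
      omega
    have hcard2 : ∀ e ∈ Fj, (efin e).card = 2 := by
      intro e he
      have he' := he
      rw [hFj, Finset.mem_filter] at he'
      have hadj := out_adj (M.edgeSet_subset ((hmemEs e).1 he'.1))
      rw [hefin]
      rw [Finset.card_insert_of_notMem (by simpa using hadj.1), Finset.card_singleton]
    have hdisj : ∀ e ∈ Fj, ∀ f ∈ Fj, e ≠ f → Disjoint (efin e) (efin f) := by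
      intro e he f hf hef
      rw [Finset.disjoint_left]
      intro x hxe hxf
      apply hef
      have hxe' : x ∈ e := by
        rcases (by simpa [hefin] using hxe : x = (Quot.out e).1 ∨ x = (Quot.out e).2) with
          rfl | rfl
        · exact Sym2.out_fst_mem e
        · exact Sym2.out_snd_mem e
      have hxf' : x ∈ f := by
        rcases (by simpa [hefin] using hxf : x = (Quot.out f).1 ∨ x = (Quot.out f).2) with
          rfl | rfl
        · exact Sym2.out_fst_mem f
        · exact Sym2.out_snd_mem f
      have he'' := he; have hf'' := hf
      rw [hFj, Finset.mem_filter] at he'' hf''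
      exact matching_unique_edge hM ((hmemEs e).1 he''.1) ((hmemEs f).1 hf''.1) hxe' hxf'
    have hbig : (Fj.biUnion efin).card = ∑ e ∈ Fj, (efin e).card :=
      Finset.card_biUnion hdisj
    have hsum : ∑ e ∈ Fj, (efin e).card = 2 * Fj.card := by
      rw [Finset.sum_congr rfl hcard2]
      simp [Finset.sum_const, mul_comm]
    have hle : (Fj.biUnion efin).card ≤ Bj.card :=
      Finset.card_le_card (Finset.biUnion_subset.2 hsub)
    omega
  rw [key, Finset.sum_range_succ]
  have hsum1 : ∑ j ∈ Finset.range k, (Es.filter (fun e => clE e = j)).card ≤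
      ∑ _j ∈ Finset.range k, 2 :=
    Finset.sum_le_sum (fun j hj => hfibj j (Finset.mem_range.1 hj))
  rw [Finset.sum_const, Finset.card_range, smul_eq_mul] at hsum1
  omega

end Matching
end OP

noncomputable def OP.drawing (k : ℕ) : OnePlanarDrawing (OP.myG k) where
  vert := OP.vertex
  vert_inj := OP.vertex_inj
  curve := OP.curveE
  curve_cont e := OP.seg_cont _ _
  curve_inj e := by
    have hne : OP.vertex (OP.EP e).1 ≠ OP.vertex (OP.EP e).2 :=
      fun h => (OP.edge_adj e).1 (OP.vertex_inj h)
    exact (OP.seg_inj hne).injOn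
  curve_ends e u v h := by
    have h2 : s((OP.EP e).1, (OP.EP e).2) = s(u, v) := by rw [← OP.edge_eq]; exact h
    rw [Sym2.eq_iff] at h2
    have c0 : OP.curveE e 0 = OP.vertex (OP.EP e).1 := OP.seg_zero _ _
    have c1 : OP.curveE e 1 = OP.vertex (OP.EP e).2 := OP.seg_one _ _
    rcases h2 with ⟨h3, h4⟩ | ⟨h3, h4⟩
    · rw [c0, c1, h3, h4]
    · rw [c0, c1, h3, h4]; exact Set.pair_comm _ _
  interior_avoid e t ht v := OP.avoid e t ht v
  one_cross := OP.one_cross_aux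

theorem stmt7 (N : ℕ) :
    ∃ (n : ℕ) (G : SimpleGraph (Fin n)),
      OnePlanar G ∧
      (∀ v, 5 ≤ Nat.card (G.neighborSet v)) ∧
      (∃ v, Nat.card (G.neighborSet v) = 5) ∧
      N ≤ n ∧
      ∀ M : G.Subgraph, M.IsMatching → (M.edgeSet.ncard : ℚ) ≤ (2 * (n : ℚ) + 3) / 5 := by
  set k := max N 1 with hkdef
  have hk1 : 1 ≤ k := le_max_right _ _
  have hkN : N ≤ k := le_max_left _ _
  refine ⟨5*k+1, OP.myG k, ⟨OP.drawing k⟩, ?_, ?_, by omega, ?_⟩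
  · intro v
    by_cases hv : v = 0
    · subst hv; rw [OP.card_nbhd_zero]; omega
    · rw [OP.card_nbhd_ne hv]
  · refine ⟨⟨1, by omega⟩, ?_⟩
    rw [OP.card_nbhd_ne (by simp [Fin.ext_iff])]
  · intro M hM
    have hb := OP.matching_bound M hM
    have hQ : (M.edgeSet.ncard : ℚ) ≤ ((2*k+1 : ℕ) : ℚ) := by exact_mod_cast hb
    apply le_trans hQ
    push_cast
    rw [le_div_iff₀ (by norm_num : (0:ℚ) < 5)]
    ring_nf
    nlinarith [Nat.cast_nonneg (α := ℚ) k]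
end

section
/- Let G be the graph with vertex set {v_s} ∪ (V_1 ∪ ... ∪ V_k) where each V_i has 5 vertices and {v_s} ∪ V_i induces a complete graph K6, with no other edges. Then G has n = 5k + 1 vertices, minimum degree 5, and every matching of G has size at most (2n + 3)/5. -/
open SimpleGraph

/-- One apex vertex joined to `k` disjoint groups of five vertices, where the apex
together with each group induces a `K₆`; vertices in different groups are non-adjacent. -/
def apexK6 (k : ℕ) : SimpleGraph (Unit ⊕ Fin k × Fin 5) :=
  SimpleGraph.fromRel (fun a b => ∀ i j x y, a = Sum.inr (i, x) → b = Sum.inr (j, y) → i = j)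

section helpers

lemma edge_exists_adj {V : Type*} {G : SimpleGraph V} {M : G.Subgraph} {e : Sym2 V}
    (he : e ∈ M.edgeSet) {v : V} (hv : v ∈ e) : ∃ w, M.Adj v w ∧ e = s(v, w) := by
  induction e with
  | _ a b =>
    rw [SimpleGraph.Subgraph.mem_edgeSet] at he
    rcases Sym2.mem_iff.mp hv with rfl | rfl
    · exact ⟨b, he, rfl⟩
    · exact ⟨a, he.symm, Sym2.eq_swap⟩

lemma matching_edge_unique {V : Type*} {G : SimpleGraph V} {M : G.Subgraph}
    (hM : M.IsMatching) {e f : Sym2 V} (he : e ∈ M.edgeSet) (hf : f ∈ M.edgeSet)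
    {v : V} (hv : v ∈ e) (hv' : v ∈ f) : e = f := by
  obtain ⟨w1, hw1, rfl⟩ := edge_exists_adj he hv
  obtain ⟨w2, hw2, rfl⟩ := edge_exists_adj hf hv'
  have hvm : v ∈ M.verts := M.edge_vert hw1
  obtain ⟨w, -, huniq⟩ := hM hvm
  rw [huniq w1 hw1, huniq w2 hw2]

lemma apexK6_adj_inr_inr {k : ℕ} (i j : Fin k) (x y : Fin 5) :
    (apexK6 k).Adj (Sum.inr (i, x)) (Sum.inr (j, y)) ↔ i = j ∧ x ≠ y := by
  simp only [apexK6, SimpleGraph.fromRel_adj, ne_eq, Sum.inr.injEq, Prod.mk.injEq]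
  constructor
  · rintro ⟨hne, h | h⟩
    · have := h i j x y ⟨rfl, rfl⟩ ⟨rfl, rfl⟩
      exact ⟨this, fun hxy => hne ⟨this, hxy⟩⟩
    · have := (h j i y x ⟨rfl, rfl⟩ ⟨rfl, rfl⟩).symm
      exact ⟨this, fun hxy => hne ⟨this, hxy⟩⟩
  · rintro ⟨rfl, hxy⟩
    refine ⟨fun h => hxy h.2, Or.inl ?_⟩
    rintro i' j' x' y' ⟨rfl, rfl⟩ ⟨rfl, rfl⟩
    rfl

lemma apexK6_adj_inl_inr {k : ℕ} (p : Fin k × Fin 5) :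
    (apexK6 k).Adj (Sum.inl ()) (Sum.inr p) := by
  simp [apexK6, SimpleGraph.fromRel_adj]

lemma apexK6_not_adj_inl_inl {k : ℕ} :
    ¬ (apexK6 k).Adj (Sum.inl ()) (Sum.inl ()) := by
  simp [apexK6]

lemma neighborSet_inl (k : ℕ) :
    (apexK6 k).neighborSet (Sum.inl ()) = Set.range (Sum.inr : Fin k × Fin 5 → _) := by
  ext b
  cases b with
  | inl u => cases u; simp [SimpleGraph.mem_neighborSet, apexK6_not_adj_inl_inl]
  | inr p => simp [SimpleGraph.mem_neighborSet, apexK6_adj_inl_inr]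

lemma neighborSet_inr {k : ℕ} (i : Fin k) (x : Fin 5) :
    (apexK6 k).neighborSet (Sum.inr (i, x)) =
      insert (Sum.inl ()) ((fun y => (Sum.inr (i, y) : Unit ⊕ Fin k × Fin 5)) '' {x}ᶜ) := by
  ext b
  cases b with
  | inl u =>
    cases u
    have : (apexK6 k).Adj (Sum.inr (i, x)) (Sum.inl ()) := (apexK6_adj_inl_inr (i, x)).symm
    simp [SimpleGraph.mem_neighborSet, this]
  | inr p =>
    obtain ⟨j, y⟩ := p
    simp only [SimpleGraph.mem_neighborSet, apexK6_adj_inr_inr, Set.mem_insert_iff,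
      Set.mem_image, Set.mem_compl_iff, Set.mem_singleton_iff, Sum.inr.injEq, Prod.mk.injEq]
    constructor
    · rintro ⟨rfl, hxy⟩
      exact Or.inr ⟨y, fun h => hxy h.symm, rfl, rfl⟩
    · rintro (h | ⟨y', hy', rfl, rfl⟩)
      · exact absurd h (by simp)
      · exact ⟨rfl, fun h => hy' h.symm⟩

lemma card_neighborSet_inr {k : ℕ} (i : Fin k) (x : Fin 5) :
    Nat.card ((apexK6 k).neighborSet (Sum.inr (i, x))) = 5 := by
  rw [Nat.card_coe_set_eq, neighborSet_inr]
  have hinj : Function.Injective (fun y => (Sum.inr (i, y) : Unit ⊕ Fin k × Fin 5)) := by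
    intro a b h; simpa using h
  rw [Set.ncard_insert_of_notMem (by simp), Set.ncard_image_of_injective _ hinj]
  have : ({x}ᶜ : Set (Fin 5)).ncard = 4 := by
    have := Set.ncard_add_ncard_compl ({x} : Set (Fin 5))
    simp only [Set.ncard_singleton, Set.ncard_univ, Nat.card_eq_fintype_card,
      Fintype.card_fin] at this
    omega
  omega

noncomputable def grp {k : ℕ} (e : Sym2 (Unit ⊕ Fin k × Fin 5)) : Fin k ⊕ Unit :=
  match Quot.out e with
  | (Sum.inr (i, _), Sum.inr _) => Sum.inl i
  | _ => Sum.inr ()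

lemma grp_spec {k : ℕ} (e : Sym2 (Unit ⊕ Fin k × Fin 5)) :
    (∃ i x j y, e = s(Sum.inr (i, x), Sum.inr (j, y)) ∧ grp e = Sum.inl i) ∨
      (Sum.inl () ∈ e ∧ grp e = Sum.inr ()) := by
  rcases h1 : Quot.out e with ⟨a, b⟩
  have heq : e = s(a, b) := by
    conv_lhs => rw [← Quot.out_eq e]
    rw [h1]
  cases a with
  | inl u =>
    right
    cases u
    refine ⟨heq ▸ by simp, ?_⟩
    unfold grp
    rw [h1]
  | inr p =>
    obtain ⟨i, x⟩ := p
    cases b with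
    | inl u =>
      right
      cases u
      refine ⟨heq ▸ by simp, ?_⟩
      unfold grp
      rw [h1]
    | inr q =>
      obtain ⟨j, y⟩ := q
      left
      refine ⟨i, x, j, y, heq, ?_⟩
      unfold grp
      rw [h1]

lemma matching_card_le {k : ℕ} (M : (apexK6 k).Subgraph) (hM : M.IsMatching) :
    M.edgeSet.ncard ≤ 2 * k + 1 := by
  classical
  have hfin : M.edgeSet.Finite := Set.toFinite _
  set T : Finset (Sym2 (Unit ⊕ Fin k × Fin 5)) := hfin.toFinset with hT
  have hmemT : ∀ e, e ∈ T ↔ e ∈ M.edgeSet := fun e => hfin.mem_toFinset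
  -- if grp e = inr () then apex ∈ e
  have hapex : ∀ e : Sym2 (Unit ⊕ Fin k × Fin 5), grp e = Sum.inr () → Sum.inl () ∈ e := by
    intro e he
    rcases grp_spec e with ⟨i, x, j, y, heq, hg⟩ | ⟨hmem, -⟩
    · rw [hg] at he; exact absurd he (by simp)
    · exact hmem
  -- if grp e = inl i and e ∈ M.edgeSet then e has both endpoints in group i
  have hgrp : ∀ e ∈ M.edgeSet, ∀ i, grp e = Sum.inl i →
      ∃ x y : Fin 5, x ≠ y ∧ e = s(Sum.inr (i, x), Sum.inr (i, y)) := by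
    intro e he i hfe
    rcases grp_spec e with ⟨i', x, j, y, heq, hg⟩ | ⟨-, hg⟩
    · rw [hg] at hfe
      have hii : i' = i := by simpa using hfe
      subst hii
      have hadj : (apexK6 k).Adj (Sum.inr (i', x)) (Sum.inr (j, y)) := by
        have h2 := M.edgeSet_subset (heq ▸ he)
        rwa [SimpleGraph.mem_edgeSet] at h2
      rw [apexK6_adj_inr_inr] at hadj
      obtain ⟨rfl, hxy⟩ := hadj
      exact ⟨x, y, hxy, heq⟩
    · rw [hg] at hfe; exact absurd hfe (by simp)
  -- fiberwise counting
  have hcount : T.card = ∑ b : Fin k ⊕ Unit, (T.filter (fun e => grp e = b)).card :=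
    Finset.card_eq_sum_card_fiberwise (fun e _ => Finset.mem_univ (grp e))
  have hapexfiber : (T.filter (fun e => grp e = Sum.inr ())).card ≤ 1 := by
    rw [Finset.card_le_one]
    intro e he e' he'
    simp only [Finset.mem_filter] at he he'
    exact matching_edge_unique hM ((hmemT e).mp he.1) ((hmemT e').mp he'.1)
      (hapex e he.2) (hapex e' he'.2)
  have hgrpfiber : ∀ i : Fin k, (T.filter (fun e => grp e = Sum.inl i)).card ≤ 2 := by
    intro i
    set Ti := T.filter (fun e => grp e = Sum.inl i) with hTi
    set El : Sym2 (Unit ⊕ Fin k × Fin 5) → Finset (Fin 5) := fun e =>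
      Finset.univ.filter (fun y => (Sum.inr (i, y) : Unit ⊕ Fin k × Fin 5) ∈ e) with hEl
    have hcard2 : ∀ e ∈ Ti, 2 ≤ (El e).card := by
      intro e he
      rw [hTi, Finset.mem_filter] at he
      obtain ⟨x, y, hxy, rfl⟩ := hgrp e ((hmemT e).mp he.1) i he.2
      have hsub : ({x, y} : Finset (Fin 5)) ⊆ El s(Sum.inr (i, x), Sum.inr (i, y)) := by
        intro z hz
        simp only [Finset.mem_insert, Finset.mem_singleton] at hz
        rcases hz with rfl | rfl <;> simp [hEl]
      calc 2 = ({x, y} : Finset (Fin 5)).card := by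
            rw [Finset.card_insert_of_notMem (by simpa), Finset.card_singleton]
        _ ≤ _ := Finset.card_le_card hsub
    have hdisj : ∀ e ∈ Ti, ∀ e' ∈ Ti, e ≠ e' → Disjoint (El e) (El e') := by
      intro e he e' he' hne
      rw [Finset.disjoint_left]
      intro y hy hy'
      simp only [hEl, Finset.mem_filter] at hy hy'
      rw [hTi, Finset.mem_filter] at he he'
      exact hne (matching_edge_unique hM ((hmemT e).mp he.1) ((hmemT e').mp he'.1) hy.2 hy'.2)
    have hbiu : (Ti.biUnion El).card = ∑ e ∈ Ti, (El e).card :=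
      Finset.card_biUnion hdisj
    have h5 : (Ti.biUnion El).card ≤ 5 := by
      calc (Ti.biUnion El).card ≤ (Finset.univ : Finset (Fin 5)).card :=
            Finset.card_le_card (Finset.subset_univ _)
        _ = 5 := by simp
    have h2T : 2 * Ti.card ≤ ∑ e ∈ Ti, (El e).card := by
      calc 2 * Ti.card = ∑ _e ∈ Ti, 2 := by rw [Finset.sum_const, smul_eq_mul, mul_comm]
        _ ≤ _ := Finset.sum_le_sum hcard2
    omega
  have hfinal : T.card ≤ 2 * k + 1 := by
    rw [hcount, Fintype.sum_sum_type]
    have h1 : ∑ i : Fin k, (T.filter (fun e => grp e = Sum.inl i)).card ≤ ∑ _i : Fin k, 2 :=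
      Finset.sum_le_sum (fun i _ => hgrpfiber i)
    have h2 : ∑ u : Unit, (T.filter (fun e => grp e = Sum.inr u)).card ≤ 1 := by
      simpa using hapexfiber
    simp only [Finset.sum_const, Finset.card_univ, Fintype.card_fin, smul_eq_mul] at h1
    omega
  rwa [Set.ncard_eq_toFinset_card _ hfin]

end helpers

theorem stmt8 (k : ℕ) (hk : 1 ≤ k) :
    Fintype.card (Unit ⊕ Fin k × Fin 5) = 5 * k + 1 ∧
    (∀ v, 5 ≤ Nat.card ((apexK6 k).neighborSet v)) ∧
    (∃ v, Nat.card ((apexK6 k).neighborSet v) = 5) ∧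
    ∀ M : (apexK6 k).Subgraph, M.IsMatching →
      (M.edgeSet.ncard : ℚ) ≤ (2 * ((5 * k + 1 : ℕ) : ℚ) + 3) / 5 := by
  refine ⟨by simp; omega, ?_, ?_, ?_⟩
  · intro v
    cases v with
    | inl u =>
      cases u
      rw [Nat.card_coe_set_eq, neighborSet_inl, ← Nat.card_coe_set_eq,
        Nat.card_range_of_injective Sum.inr_injective]
      simp only [Nat.card_eq_fintype_card, Fintype.card_prod, Fintype.card_fin]
      omega
    | inr p =>
      obtain ⟨i, x⟩ := p
      rw [card_neighborSet_inr]
  · have : 0 < k := hk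
    exact ⟨Sum.inr (⟨0, this⟩, 0), card_neighborSet_inr _ _⟩
  · intro M hM
    have h := matching_card_le M hM
    have : (M.edgeSet.ncard : ℚ) ≤ (2 * k + 1 : ℕ) := by exact_mod_cast h
    calc (M.edgeSet.ncard : ℚ) ≤ (2 * k + 1 : ℕ) := this
      _ = (2 * ((5 * k + 1 : ℕ) : ℚ) + 3) / 5 := by push_cast; ring
end

section
/- For every N there exists a simple 1-planar graph G with minimum degree 7 and n ≥ N vertices such that every matching of G has size at most (11n + 12)/23. -/
open SimpleGraph

namespace OP19

def ptX : Fin 24 → ℤ := ![0,13816,15845,13832,21054,30021,18339,30024,17949,21015,17945,18342,22059,25119,20437,25122,19689,22098,19704,20433,21623,23420,20623,21670]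

def ptY : Fin 24 → ℤ := ![0,6232,7933,7610,8629,10005,8292,19977,8751,12451,9207,9978,9972,11371,9627,13786,9674,12046,10021,10847,10371,11656,10337,11186]

def edgeL : List (Fin 24 × Fin 24) := [(1,0),(1,2),(1,4),(1,6),(0,3),(0,5),(0,7),(2,3),(2,8),(2,10),(3,9),(3,11),(4,5),(4,6),(4,12),(5,7),(5,13),(6,8),(6,14),(7,9),(7,15),(8,10),(8,16),(9,11),(9,17),(10,11),(10,18),(11,19),(12,13),(12,14),(12,20),(13,15),(13,21),(14,16),(14,20),(15,17),(15,21),(16,18),(16,22),(17,19),(17,23),(18,19),(18,22),(19,23),(20,21),(20,22),(21,23),(22,23),(16,20),(14,22),(12,5),(4,13),(13,7),(5,15),(20,13),(12,21),(17,21),(23,15),(4,14),(12,6),(10,3),(2,11),(1,5),(0,4),(8,14),(16,6),(18,11),(10,19),(20,23),(21,22),(8,18),(16,10),(1,8),(2,6),(18,23),(19,22),(19,9),(17,11),(1,3),(0,2),(0,9),(3,7),(9,15),(17,7)]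

def mateL : List ((Fin 24 × Fin 24) × (Fin 24 × Fin 24)) := [((16,20),(14,22)),((14,22),(16,20)),((12,5),(4,13)),((4,13),(12,5)),((13,7),(5,15)),((5,15),(13,7)),((20,13),(12,21)),((12,21),(20,13)),((17,21),(23,15)),((23,15),(17,21)),((4,14),(12,6)),((12,6),(4,14)),((10,3),(2,11)),((2,11),(10,3)),((1,5),(0,4)),((0,4),(1,5)),((8,14),(16,6)),((16,6),(8,14)),((18,11),(10,19)),((10,19),(18,11)),((20,23),(21,22)),((21,22),(20,23)),((8,18),(16,10)),((16,10),(8,18)),((1,8),(2,6)),((2,6),(1,8)),((18,23),(19,22)),((19,22),(18,23)),((19,9),(17,11)),((17,11),(19,9)),((1,3),(0,2)),((0,2),(1,3)),((0,9),(3,7)),((3,7),(0,9)),((9,15),(17,7)),((17,7),(9,15))]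

def Amat : Fin 24 → Fin 24 → Bool := ![![false,true,true,true,true,true,false,true,false,true,false,false,false,false,false,false,false,false,false,false,false,false,false,false],![true,false,true,true,true,true,true,false,true,false,false,false,false,false,false,false,false,false,false,false,false,false,false,false],![true,true,false,true,false,false,true,false,true,false,true,true,false,false,false,false,false,false,false,false,false,false,false,false],![true,true,true,false,false,false,false,true,false,true,true,true,false,false,false,false,false,false,false,false,false,false,false,false],![true,true,false,false,false,true,true,false,false,false,false,false,true,true,true,false,false,false,false,false,false,false,false,false],![true,true,false,false,true,false,false,true,false,false,false,false,true,true,false,true,false,false,false,false,false,false,false,false],![false,true,true,false,true,false,false,false,true,false,false,false,true,false,true,false,true,false,false,false,false,false,false,false],![true,false,false,true,false,true,false,false,false,true,false,false,false,true,false,true,false,true,false,false,false,false,false,false],![false,true,true,false,false,false,true,false,false,false,true,false,false,false,true,false,true,false,true,false,false,false,false,false],![true,false,false,true,false,false,false,true,false,false,false,true,false,false,false,true,false,true,false,true,false,false,false,false],![false,false,true,true,false,false,false,false,true,false,false,true,false,false,false,false,true,false,true,true,false,false,false,false],![false,false,true,true,false,false,false,false,false,true,true,false,false,false,false,false,false,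true,true,true,false,false,false,false],![false,false,false,false,true,true,true,false,false,false,false,false,false,true,true,false,false,false,false,false,true,true,false,false],![false,false,false,false,true,true,false,true,false,false,false,false,true,false,false,true,false,false,false,false,true,true,false,false],![false,false,false,false,true,false,true,false,true,false,false,false,true,false,false,false,true,false,false,false,true,false,true,false],![false,false,false,false,false,true,false,true,false,true,false,false,false,true,false,false,false,true,false,false,false,true,false,true],![false,false,false,false,false,false,true,false,true,false,true,false,false,false,true,false,false,false,true,false,true,false,true,false],![false,false,false,false,false,false,false,true,false,true,false,true,false,false,false,true,false,false,false,true,false,true,false,true],![false,false,false,false,false,false,false,false,true,false,true,true,false,false,false,false,true,false,false,true,false,false,true,true],![false,false,false,false,false,false,false,false,false,true,true,true,false,false,false,false,false,true,true,false,false,false,true,true],![false,false,false,false,false,false,false,false,false,false,false,false,true,true,true,false,true,false,false,false,false,true,true,true],![false,false,false,false,false,false,false,false,false,false,false,false,true,true,false,true,false,true,false,false,true,false,true,true],![false,false,false,false,false,false,false,false,false,false,false,false,false,false,true,false,true,false,true,true,true,true,false,true],![false,false,false,false,false,false,false,false,false,false,false,false,false,false,false,true,false,true,true,true,true,true,tr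ue,false]]

def pt (j : Fin 24) : ℤ × ℤ := (ptX j, ptY j)
def czI (u v : ℤ × ℤ) : ℤ := u.1*v.2 - u.2*v.1
def subI (u v : ℤ × ℤ) : ℤ × ℤ := (u.1-v.1, u.2-v.2)
def sideOK (s1 s2 : ℤ) : Bool := (0 < s1*s2) || ((s1 == 0) != (s2 == 0))
def sepB (p q : Fin 24 × Fin 24) : Bool :=
  sideOK (czI (subI (pt p.2) (pt p.1)) (subI (pt q.1) (pt p.1)))
         (czI (subI (pt p.2) (pt p.1)) (subI (pt q.2) (pt p.1)))
  || sideOK (czI (subI (pt q.2) (pt q.1)) (subI (pt p.1) (pt q.1)))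
            (czI (subI (pt q.2) (pt q.1)) (subI (pt p.2) (pt q.1)))
def mateF (p : Fin 24 × Fin 24) : Fin 24 × Fin 24 :=
  ((mateL.find? (fun r => r.1 == p)).map Prod.snd).getD p
def pairOK (p q : Fin 24 × Fin 24) : Bool :=
  sepB p q || (q == mateF p && p == mateF q &&
    (czI (subI (pt p.2) (pt p.1)) (subI (pt q.2) (pt q.1)) != 0))

set_option maxRecDepth 100000

-- decide facts
lemma fact_symm : ∀ a b : Fin 24, Amat a b = Amat b a := by decide
lemma fact_irrefl : ∀ a : Fin 24, Amat a a = false := by decide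
lemma fact_mem : ∀ a b : Fin 24, Amat a b = true → ((a,b) ∈ edgeL ∨ (b,a) ∈ edgeL) := by decide
lemma fact_edge : edgeL.all (fun p => Amat p.1 p.2) = true := by decide
lemma fact_pairs : edgeL.all (fun p => edgeL.all (fun q => p == q || pairOK p q)) = true := by decide
lemma fact_avoid : edgeL.all (fun p => (List.finRange 24).all (fun j =>
    j == p.1 || j == p.2 || (czI (subI (pt p.2) (pt p.1)) (subI (pt j) (pt p.1)) != 0))) = true := by
  decide
lemma fact_cone : ∀ j : Fin 24, j ≠ 0 → 0 < (pt j).2 ∧ (pt j).2 < (pt j).1 := by decide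
lemma fact_inj : ∀ i j : Fin 24, pt i = pt j → i = j := by decide
lemma fact_deg : ∀ j : Fin 24, ((List.finRange 24).countP (fun i => Amat j i)) = 7 := by decide
lemma fact_zero : pt 0 = (0,0) := by decide


section Geom

abbrev Pt := ℝ × ℝ

def cz (u v : Pt) : ℝ := u.1 * v.2 - u.2 * v.1
def dif (u v : Pt) : Pt := (u.1 - v.1, u.2 - v.2)
def seg (a b : Pt) (t : ℝ) : Pt := (a.1 + t*(b.1-a.1), a.2 + t*(b.2-a.2))
def oseg (a b : Pt) : Set Pt := seg a b '' Set.Ioo 0 1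
def lineS (a b : Pt) : Set Pt := {p | cz (dif b a) (dif p a) = 0}

lemma seg_zero (a b : Pt) : seg a b 0 = a := by simp [seg]
lemma seg_one (a b : Pt) : seg a b 1 = b := by simp [seg]

lemma mem_oseg {a b p : Pt} : p ∈ oseg a b ↔ ∃ t : ℝ, 0 < t ∧ t < 1 ∧ p = seg a b t := by
  constructor
  · rintro ⟨t, ⟨h1, h2⟩, rfl⟩; exact ⟨t, h1, h2, rfl⟩
  · rintro ⟨t, h1, h2, rfl⟩; exact ⟨t, ⟨h1, h2⟩, rfl⟩

lemma oseg_symm (a b : Pt) : oseg a b = oseg b a := by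
  ext p
  simp only [mem_oseg]
  constructor
  · rintro ⟨t, h1, h2, rfl⟩
    exact ⟨1 - t, by linarith, by linarith, by simp [seg]; constructor <;> ring⟩
  · rintro ⟨t, h1, h2, rfl⟩
    exact ⟨1 - t, by linarith, by linarith, by simp [seg]; constructor <;> ring⟩

lemma oseg_subset_line (a b : Pt) : oseg a b ⊆ lineS a b := by
  rintro p hp
  rw [mem_oseg] at hp
  obtain ⟨t, _, _, rfl⟩ := hp
  show cz _ _ = 0
  simp [cz, dif, seg]; ring

lemma line_symm (a b : Pt) : lineS a b = lineS b a := by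
  ext p
  simp only [lineS, Set.mem_setOf_eq, cz, dif]
  constructor <;> intro h <;> nlinarith [h]

lemma disj_sideOK {a b c d : Pt}
    (h : (cz (dif b a) (dif c a)) * (cz (dif b a) (dif d a)) > 0
       ∨ (cz (dif b a) (dif c a) = 0 ∧ cz (dif b a) (dif d a) ≠ 0)
       ∨ (cz (dif b a) (dif d a) = 0 ∧ cz (dif b a) (dif c a) ≠ 0)) :
    oseg a b ∩ oseg c d = ∅ := by
  rw [Set.eq_empty_iff_forall_notMem]
  rintro p ⟨hp1, hp2⟩
  have h1 : cz (dif b a) (dif p a) = 0 := oseg_subset_line a b hp1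
  rw [mem_oseg] at hp2
  obtain ⟨u, hu0, hu1, rfl⟩ := hp2
  set s1 := cz (dif b a) (dif c a) with hs1
  set s2 := cz (dif b a) (dif d a) with hs2
  have key : (1-u) * s1 + u * s2 = 0 := by
    rw [hs1, hs2]
    simp only [cz, dif, seg] at h1 ⊢
    nlinarith [h1]
  rcases h with h | ⟨h0, hne⟩ | ⟨h0, hne⟩
  · by_cases hs : s2 = 0
    · rw [hs, mul_zero] at h; exact lt_irrefl 0 h
    · have k2 : (1-u)*(s1*s2) = -(u*(s2*s2)) := by linear_combination s2 * key
      have hu2 : (0:ℝ) < 1 - u := by linarith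
      linarith [mul_pos hu2 h, mul_pos hu0 (mul_self_pos.mpr hs), k2]
  · rw [h0] at key; apply hne; nlinarith [key]
  · rw [h0] at key; apply hne; nlinarith [key]

lemma not_mem_oseg {a b v : Pt} (h : cz (dif b a) (dif v a) ≠ 0) : v ∉ oseg a b :=
  fun hv => h (oseg_subset_line a b hv)

lemma endpoint_not_mem_left {a b : Pt} (h : a ≠ b) : a ∉ oseg a b := by
  rw [mem_oseg]
  rintro ⟨t, ht0, ht1, he⟩
  apply h
  have h1 : a.1 + t*(b.1-a.1) = a.1 := congrArg Prod.fst he.symm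
  have h2 : a.2 + t*(b.2-a.2) = a.2 := congrArg Prod.snd he.symm
  have : b.1 = a.1 := by
    rcases mul_eq_zero.mp (by linarith : t*(b.1-a.1) = 0) with h | h
    · linarith
    · linarith
  have : b.2 = a.2 := by
    rcases mul_eq_zero.mp (by linarith : t*(b.2-a.2) = 0) with h | h
    · linarith
    · linarith
  exact Prod.ext (by linarith) (by linarith)

lemma endpoint_not_mem_right {a b : Pt} (h : a ≠ b) : b ∉ oseg a b := by
  rw [oseg_symm]
  exact endpoint_not_mem_left h.symm

lemma line_line_subsingleton {a b c d : Pt} (h : cz (dif b a) (dif d c) ≠ 0) :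
    Set.Subsingleton (lineS a b ∩ lineS c d) := by
  rintro p ⟨hp1, hp2⟩ q ⟨hq1, hq2⟩
  simp only [lineS, Set.mem_setOf_eq, cz, dif] at hp1 hp2 hq1 hq2
  simp only [cz, dif] at h
  have e1 : (b.1-a.1) * (p.2-q.2) - (b.2-a.2)*(p.1-q.1) = 0 := by linarith
  have e2 : (d.1-c.1) * (p.2-q.2) - (d.2-c.2)*(p.1-q.1) = 0 := by linarith
  have r1 : (p.1-q.1) * ((b.1-a.1)*(d.2-c.2) - (b.2-a.2)*(d.1-c.1)) = 0 := by linear_combination (d.1-c.1) * e1 - (b.1-a.1) * e2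
  have r2 : (p.2-q.2) * ((b.1-a.1)*(d.2-c.2) - (b.2-a.2)*(d.1-c.1)) = 0 := by linear_combination (d.2-c.2) * e1 - (b.2-a.2) * e2
  have h1 : p.1 = q.1 := by
    rcases mul_eq_zero.mp r1 with h' | h'
    · linarith
    · exact absurd h' h
  have h2 : p.2 = q.2 := by
    rcases mul_eq_zero.mp r2 with h' | h'
    · linarith
    · exact absurd h' h
  exact Prod.ext h1 h2

def cone (i : ℕ) : Set Pt := {p | 0 < p.1 ∧ (i:ℝ)*p.1 < p.2 ∧ p.2 < ((i:ℝ)+1)*p.1}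

lemma zero_not_cone (i : ℕ) : ((0,0) : Pt) ∉ cone i := by
  rintro ⟨h, -, -⟩; exact lt_irrefl 0 h

lemma cone_disj {i j : ℕ} (h : i ≠ j) {p : Pt} (hi : p ∈ cone i) (hj : p ∈ cone j) : False := by
  obtain ⟨hx, h1, h2⟩ := hi
  obtain ⟨-, h3, h4⟩ := hj
  rcases Nat.lt_or_ge i j with hlt | hge
  · have : (i:ℝ) + 1 ≤ (j:ℝ) := by exact_mod_cast Nat.succ_le_of_lt hlt
    nlinarith
  · have hlt : j < i := lt_of_le_of_ne hge (Ne.symm h)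
    have : (j:ℝ) + 1 ≤ (i:ℝ) := by exact_mod_cast Nat.succ_le_of_lt hlt
    nlinarith

lemma oseg_sub_cone_both {i : ℕ} {a b : Pt} (ha : a ∈ cone i) (hb : b ∈ cone i) :
    oseg a b ⊆ cone i := by
  rintro p hp
  rw [mem_oseg] at hp
  obtain ⟨t, ht0, ht1, rfl⟩ := hp
  obtain ⟨ha1, ha2, ha3⟩ := ha
  obtain ⟨hb1, hb2, hb3⟩ := hb
  refine ⟨?_, ?_, ?_⟩ <;> simp only [seg] <;> nlinarith

lemma oseg_sub_cone_zero_left {i : ℕ} {b : Pt} (hb : b ∈ cone i) :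
    oseg ((0,0) : Pt) b ⊆ cone i := by
  rintro p hp
  rw [mem_oseg] at hp
  obtain ⟨t, ht0, ht1, rfl⟩ := hp
  obtain ⟨hb1, hb2, hb3⟩ := hb
  refine ⟨?_, ?_, ?_⟩ <;> simp only [seg] <;> nlinarith

lemma oseg_sub_cone_zero_right {i : ℕ} {a : Pt} (ha : a ∈ cone i) :
    oseg a ((0,0) : Pt) ⊆ cone i := by
  rw [oseg_symm]; exact oseg_sub_cone_zero_left ha

end Geom

-- bridging + big graph
def Phi (i : ℕ) (p : Pt) : Pt := (p.1, (i:ℝ)*p.1 + p.2)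
def iPt (j : Fin 24) : Pt := (((pt j).1 : ℝ), ((pt j).2 : ℝ))
def vpos (i : ℕ) (j : Fin 24) : Pt := Phi i (iPt j)

lemma cz_phi (i : ℕ) (p q r s : Pt) :
    cz (dif (Phi i p) (Phi i q)) (dif (Phi i r) (Phi i s)) = cz (dif p q) (dif r s) := by
  simp only [cz, dif, Phi]; ring

lemma cz_cast (a b c d : Fin 24) :
    cz (dif (iPt a) (iPt b)) (dif (iPt c) (iPt d))
      = ((czI (subI (pt a) (pt b)) (subI (pt c) (pt d)) : ℤ) : ℝ) := by
  simp only [cz, dif, iPt, czI, subI]; push_cast; ring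

lemma cz_vpos (i : ℕ) (a b c d : Fin 24) :
    cz (dif (vpos i a) (vpos i b)) (dif (vpos i c) (vpos i d))
      = ((czI (subI (pt a) (pt b)) (subI (pt c) (pt d)) : ℤ) : ℝ) := by
  rw [vpos, vpos, vpos, vpos, cz_phi, cz_cast]

lemma vpos_zero (i : ℕ) : vpos i 0 = ((0,0) : Pt) := by
  simp [vpos, iPt, fact_zero, Phi]

lemma vpos_mem_cone (i : ℕ) {j : Fin 24} (hj : j ≠ 0) : vpos i j ∈ cone i := by
  obtain ⟨h1, h2⟩ := fact_cone j hj
  have hx : (0:ℝ) < ((pt j).1 : ℝ) := by exact_mod_cast h1.trans h2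
  have hy : (0:ℝ) < ((pt j).2 : ℝ) := by exact_mod_cast h1
  have hxy : ((pt j).2 : ℝ) < ((pt j).1 : ℝ) := by exact_mod_cast h2
  refine ⟨hx, ?_, ?_⟩ <;> simp only [vpos, Phi, iPt] <;> nlinarith

lemma vpos_inj {i : ℕ} {j1 j2 : Fin 24} (h : vpos i j1 = vpos i j2) : j1 = j2 := by
  apply fact_inj
  have h1 : ((pt j1).1 : ℝ) = ((pt j2).1 : ℝ) := congrArg Prod.fst h
  have h2 : (i:ℝ)*((pt j1).1:ℝ) + ((pt j1).2:ℝ) = (i:ℝ)*((pt j2).1:ℝ) + ((pt j2).2:ℝ) :=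
    congrArg Prod.snd h
  have e1 : (pt j1).1 = (pt j2).1 := by exact_mod_cast h1
  have e2 : (pt j1).2 = (pt j2).2 := by
    have : ((pt j1).2 : ℝ) = ((pt j2).2 : ℝ) := by rw [e1] at h2; linarith
    exact_mod_cast this
  exact Prod.ext e1 e2

-- the big graph
def nv (k : ℕ) : ℕ := 23*k+1

def fIdx {k : ℕ} (v : Fin (nv k)) : Fin 24 :=
  if v.val = 0 then 0 else ⟨(v.val - 1) % 23 + 1, by
    have := Nat.mod_lt (v.val - 1) (show 0 < 23 by norm_num); omega⟩

def cpIdx {k : ℕ} (v : Fin (nv k)) : ℕ := (v.val - 1)/23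

lemma fIdx_apex {k : ℕ} {v : Fin (nv k)} (h : v.val = 0) : fIdx v = 0 := by
  simp [fIdx, h]

lemma fIdx_ne {k : ℕ} {v : Fin (nv k)} (h : v.val ≠ 0) : fIdx v ≠ 0 := by
  simp only [fIdx, h, if_false]
  intro hc
  have := congrArg Fin.val hc
  simp at this

lemma cpIdx_apex {k : ℕ} {v : Fin (nv k)} (h : v.val = 0) : cpIdx v = 0 := by
  simp [cpIdx, h]

lemma cpIdx_lt {k : ℕ} {v : Fin (nv k)} (h : v.val ≠ 0) : cpIdx v < k := by
  have := v.isLt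
  simp only [nv] at this
  simp only [cpIdx]
  omega

lemma decode {k : ℕ} {v : Fin (nv k)} (h : v.val ≠ 0) :
    v.val = 23 * cpIdx v + (fIdx v).val := by
  simp only [cpIdx, fIdx, h, if_false]
  omega

lemma vertex_ext {k : ℕ} {u v : Fin (nv k)} (h1 : fIdx u = fIdx v) (h2 : cpIdx u = cpIdx v) :
    u = v := by
  by_cases hu : u.val = 0
  · by_cases hv : v.val = 0
    · exact Fin.ext (by omega)
    · exact absurd (fIdx_apex hu ▸ h1.symm) (fIdx_ne hv)
  · by_cases hv : v.val = 0
    · exact absurd (fIdx_apex hv ▸ h1) (fIdx_ne hu)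
    · have d1 := decode hu
      have d2 := decode hv
      apply Fin.ext
      rw [d1, d2, h1, h2]

def adjB {k : ℕ} (u v : Fin (nv k)) : Bool :=
  if u.val = 0 then (v.val != 0) && Amat 0 (fIdx v)
  else if v.val = 0 then Amat 0 (fIdx u)
  else (cpIdx u == cpIdx v) && Amat (fIdx u) (fIdx v)

lemma adjB_iff {k : ℕ} {u v : Fin (nv k)} :
    adjB u v = true ↔
      (u.val = 0 ∧ v.val ≠ 0 ∧ Amat 0 (fIdx v) = true) ∨
      (v.val = 0 ∧ u.val ≠ 0 ∧ Amat 0 (fIdx u) = true) ∨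
      (u.val ≠ 0 ∧ v.val ≠ 0 ∧ cpIdx u = cpIdx v ∧ Amat (fIdx u) (fIdx v) = true) := by
  simp only [adjB]
  by_cases hu : u.val = 0 <;> by_cases hv : v.val = 0 <;> simp [hu, hv]

def BG (k : ℕ) : SimpleGraph (Fin (nv k)) where
  Adj u v := adjB u v = true
  symm := by
    constructor
    intro u v h
    have h' := adjB_iff.mp h
    apply adjB_iff.mpr
    rcases h' with ⟨h1,h2,h3⟩|⟨h1,h2,h3⟩|⟨h1,h2,h3,h4⟩
    · exact Or.inr (Or.inl ⟨h1,h2,h3⟩)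
    · exact Or.inl ⟨h1,h2,h3⟩
    · exact Or.inr (Or.inr ⟨h2,h1,h3.symm, by rw [fact_symm]; exact h4⟩)
  loopless := by
    constructor
    intro v
    simp only [adjB]
    by_cases hv : v.val = 0 <;> simp [hv, fact_irrefl]

instance bgDec (k : ℕ) : DecidableRel (BG k).Adj :=
  fun u v => inferInstanceAs (Decidable (adjB u v = true))

lemma bg_adj_iff {k : ℕ} {u v : Fin (nv k)} :
    (BG k).Adj u v ↔
      (u.val = 0 ∧ v.val ≠ 0 ∧ Amat 0 (fIdx v) = true) ∨
      (v.val = 0 ∧ u.val ≠ 0 ∧ Amat 0 (fIdx u) = true) ∨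
      (u.val ≠ 0 ∧ v.val ≠ 0 ∧ cpIdx u = cpIdx v ∧ Amat (fIdx u) (fIdx v) = true) := by
  exact adjB_iff

-- vertex positions
def vt {k : ℕ} (v : Fin (nv k)) : Pt := vpos (cpIdx v) (fIdx v)

lemma vt_apex {k : ℕ} {v : Fin (nv k)} (h : v.val = 0) : vt v = ((0,0) : Pt) := by
  rw [vt, fIdx_apex h, vpos_zero]

lemma vt_mem_cone {k : ℕ} {v : Fin (nv k)} (h : v.val ≠ 0) : vt v ∈ cone (cpIdx v) :=
  vpos_mem_cone _ (fIdx_ne h)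

lemma vt_inj {k : ℕ} : Function.Injective (vt (k := k)) := by
  intro u v h
  by_cases hu : u.val = 0 <;> by_cases hv : v.val = 0
  · exact Fin.ext (by omega)
  · have hm := vt_mem_cone hv
    rw [← h, vt_apex hu] at hm
    exact absurd hm (zero_not_cone _)
  · have hm := vt_mem_cone hu
    rw [h, vt_apex hv] at hm
    exact absurd hm (zero_not_cone _)
  · by_cases hc : cpIdx u = cpIdx v
    · have h' : vpos (cpIdx u) (fIdx u) = vpos (cpIdx u) (fIdx v) := by
        rw [vt, vt, ← hc] at h; exact h
      exact vertex_ext (vpos_inj h') hc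
    · exact absurd (h ▸ vt_mem_cone hu) (fun hm => cone_disj hc hm (h ▸ vt_mem_cone hv))

-- edge helpers
noncomputable def epA {k : ℕ} (e : (BG k).edgeSet) : Fin (nv k) := (Quot.out (e : Sym2 (Fin (nv k)))).1
noncomputable def epB {k : ℕ} (e : (BG k).edgeSet) : Fin (nv k) := (Quot.out (e : Sym2 (Fin (nv k)))).2

lemma ep_mk {k : ℕ} (e : (BG k).edgeSet) : s(epA e, epB e) = (e : Sym2 (Fin (nv k))) := by
  rw [epA, epB]; exact Quot.out_eq _

lemma ep_adj {k : ℕ} (e : (BG k).edgeSet) : (BG k).Adj (epA e) (epB e) := by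
  have h := e.2
  rw [← ep_mk e] at h
  exact h

noncomputable def copyOf {k : ℕ} (e : (BG k).edgeSet) : ℕ := max (cpIdx (epA e)) (cpIdx (epB e))
def eInt {k : ℕ} (e : (BG k).edgeSet) : Set Pt := oseg (vt (epA e)) (vt (epB e))

lemma adj_A {k : ℕ} {u v : Fin (nv k)} (h : (BG k).Adj u v) :
    Amat (fIdx u) (fIdx v) = true := by
  rcases bg_adj_iff.mp h with ⟨h1,h2,h3⟩|⟨h1,h2,h3⟩|⟨h1,h2,h3,h4⟩
  · rw [fIdx_apex h1]; exact h3
  · rw [fIdx_apex h1, fact_symm]; exact h3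
  · exact h4

lemma edge_vpos {k : ℕ} (e : (BG k).edgeSet) :
    vt (epA e) = vpos (copyOf e) (fIdx (epA e)) ∧
    vt (epB e) = vpos (copyOf e) (fIdx (epB e)) := by
  rcases bg_adj_iff.mp (ep_adj e) with ⟨h1,h2,h3⟩|⟨h1,h2,h3⟩|⟨h1,h2,h3,h4⟩
  · constructor
    · rw [vt_apex h1, fIdx_apex h1, vpos_zero]
    · rw [vt]; congr 1
      rw [copyOf, cpIdx_apex h1]
      exact (max_eq_right (Nat.zero_le _)).symm
  · constructor
    · rw [vt]; congr 1
      rw [copyOf, cpIdx_apex h1]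
      exact (max_eq_left (Nat.zero_le _)).symm
    · rw [vt_apex h1, fIdx_apex h1, vpos_zero]
  · have hc : copyOf e = cpIdx (epA e) := by rw [copyOf, h3, max_self]
    constructor
    · rw [vt, hc]
    · rw [vt, hc, h3]

lemma base_rep {k : ℕ} (e : (BG k).edgeSet) :
    ∃ p ∈ edgeL, eInt e = oseg (vpos (copyOf e) p.1) (vpos (copyOf e) p.2) ∧
      s(fIdx (epA e), fIdx (epB e)) = s(p.1, p.2) := by
  have hA := adj_A (ep_adj e)
  obtain ⟨h1, h2⟩ := edge_vpos e
  rcases fact_mem _ _ hA with hm | hm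
  · exact ⟨(fIdx (epA e), fIdx (epB e)), hm, by rw [eInt, h1, h2], rfl⟩
  · exact ⟨(fIdx (epB e), fIdx (epA e)), hm,
      by rw [eInt, h1, h2]; exact oseg_symm _ _, Sym2.eq_swap⟩

lemma eInt_cone {k : ℕ} (e : (BG k).edgeSet) : eInt e ⊆ cone (copyOf e) := by
  rcases bg_adj_iff.mp (ep_adj e) with ⟨h1,h2,h3⟩|⟨h1,h2,h3⟩|⟨h1,h2,h3,h4⟩
  · have hc : copyOf e = cpIdx (epB e) := by
      rw [copyOf, cpIdx_apex h1]; exact max_eq_right (Nat.zero_le _)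
    rw [eInt, vt_apex h1, hc]
    exact oseg_sub_cone_zero_left (vt_mem_cone h2)
  · have hc : copyOf e = cpIdx (epA e) := by
      rw [copyOf, cpIdx_apex h1]; exact max_eq_left (Nat.zero_le _)
    rw [eInt, vt_apex h1, hc]
    exact oseg_sub_cone_zero_right (vt_mem_cone h2)
  · have hc : copyOf e = cpIdx (epA e) := by rw [copyOf, h3, max_self]
    rw [eInt, hc]
    exact oseg_sub_cone_both (vt_mem_cone h1) (h3 ▸ vt_mem_cone h2)

lemma cp_eq_copyOf {k : ℕ} (e : (BG k).edgeSet) {u : Fin (nv k)}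
    (hu : u = epA e ∨ u = epB e) (h : u.val ≠ 0) : cpIdx u = copyOf e := by
  rcases bg_adj_iff.mp (ep_adj e) with ⟨h1,h2,h3⟩|⟨h1,h2,h3⟩|⟨h1,h2,h3,h4⟩
  · rcases hu with rfl | rfl
    · exact absurd h1 h
    · rw [copyOf, cpIdx_apex h1]; exact (max_eq_right (Nat.zero_le _)).symm
  · rcases hu with rfl | rfl
    · rw [copyOf, cpIdx_apex h1]; exact (max_eq_left (Nat.zero_le _)).symm
    · exact absurd h1 h
  · rcases hu with rfl | rfl
    · rw [copyOf, h3, max_self]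
    · rw [copyOf, h3, max_self]

lemma edge_eq_of_sym {k : ℕ} (e f : (BG k).edgeSet) (hc : copyOf e = copyOf f)
    (hs : s(fIdx (epA e), fIdx (epB e)) = s(fIdx (epA f), fIdx (epB f))) : e = f := by
  have key : ∀ u x : Fin (nv k), (u = epA e ∨ u = epB e) → (x = epA f ∨ x = epB f) →
      fIdx u = fIdx x → u = x := by
    intro u x hu hx hf
    by_cases h0 : u.val = 0
    · have hx0 : x.val = 0 := by
        by_contra hx0
        exact fIdx_ne hx0 (by rw [← hf, fIdx_apex h0])
      exact Fin.ext (by omega)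
    · have hx0 : x.val ≠ 0 := by
        intro hx0
        exact fIdx_ne h0 (hf.trans (fIdx_apex hx0))
      exact vertex_ext hf ((cp_eq_copyOf e hu h0).trans (hc.trans (cp_eq_copyOf f hx hx0).symm))
  rcases Sym2.eq_iff.mp hs with ⟨ha, hb⟩ | ⟨ha, hb⟩
  · have e1 := key (epA e) (epA f) (Or.inl rfl) (Or.inl rfl) ha
    have e2 := key (epB e) (epB f) (Or.inr rfl) (Or.inr rfl) hb
    apply Subtype.ext
    rw [← ep_mk e, ← ep_mk f, e1, e2]
  · have e1 := key (epA e) (epB f) (Or.inl rfl) (Or.inr rfl) ha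
    have e2 := key (epB e) (epA f) (Or.inr rfl) (Or.inl rfl) hb
    apply Subtype.ext
    rw [← ep_mk e, ← ep_mk f, e1, e2, Sym2.eq_swap]

lemma pairs' : ∀ p ∈ edgeL, ∀ q ∈ edgeL, p = q ∨ pairOK p q = true := by
  have h := fact_pairs
  simp only [List.all_eq_true, Bool.or_eq_true, beq_iff_eq] at h
  exact h

lemma edgeL_A : ∀ p ∈ edgeL, Amat p.1 p.2 = true := by
  have h := fact_edge
  simpa only [List.all_eq_true] using h

lemma edgeL_ne : ∀ p ∈ edgeL, p.1 ≠ p.2 := by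
  intro p hp hc
  have h := edgeL_A p hp
  rw [hc, fact_irrefl] at h
  exact Bool.false_ne_true h

lemma avoid' : ∀ p ∈ edgeL, ∀ j : Fin 24, j ≠ p.1 → j ≠ p.2 →
    czI (subI (pt p.2) (pt p.1)) (subI (pt j) (pt p.1)) ≠ 0 := by
  have h := fact_avoid
  simp only [List.all_eq_true, Bool.or_eq_true, beq_iff_eq, bne_iff_ne, ne_eq] at h
  intro p hp j h1 h2
  rcases h p hp j (List.mem_finRange j) with (h' | h') | h'
  · exact absurd h' h1
  · exact absurd h' h2
  · exact h'

lemma sideOK_real {s1 s2 : ℤ} (h : sideOK s1 s2 = true) :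
    ((s1:ℝ) * (s2:ℝ) > 0 ∨ ((s1:ℝ) = 0 ∧ (s2:ℝ) ≠ 0) ∨ ((s2:ℝ) = 0 ∧ (s1:ℝ) ≠ 0)) := by
  rw [sideOK, Bool.or_eq_true, decide_eq_true_eq] at h
  have hint : 0 < s1*s2 ∨ (s1 = 0 ∧ s2 ≠ 0) ∨ (s2 = 0 ∧ s1 ≠ 0) := by
    rcases h with h | h
    · exact Or.inl h
    · by_cases h1 : s1 = 0
      · by_cases h2 : s2 = 0
        · rw [h1, h2] at h; simp at h
        · exact Or.inr (Or.inl ⟨h1, h2⟩)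
      · by_cases h2 : s2 = 0
        · exact Or.inr (Or.inr ⟨h2, h1⟩)
        · exfalso
          have e1 : (s1 == 0) = false := beq_eq_false_iff_ne.mpr h1
          have e2 : (s2 == 0) = false := beq_eq_false_iff_ne.mpr h2
          rw [e1, e2] at h
          simp at h
  rcases hint with h' | ⟨ha, hb⟩ | ⟨ha, hb⟩
  · left; exact_mod_cast h'
  · right; left
    exact ⟨by exact_mod_cast ha, by exact_mod_cast Int.cast_ne_zero.mpr hb⟩
  · right; right
    exact ⟨by exact_mod_cast ha, by exact_mod_cast Int.cast_ne_zero.mpr hb⟩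

lemma sepB_real {i : ℕ} {p q : Fin 24 × Fin 24} (h : sepB p q = true) :
    oseg (vpos i p.1) (vpos i p.2) ∩ oseg (vpos i q.1) (vpos i q.2) = ∅ := by
  rw [sepB, Bool.or_eq_true] at h
  rcases h with h | h
  · apply disj_sideOK
    rw [cz_vpos, cz_vpos]
    exact sideOK_real h
  · rw [Set.inter_comm]
    apply disj_sideOK
    rw [cz_vpos, cz_vpos]
    exact sideOK_real h

lemma witness {k : ℕ} (e f : (BG k).edgeSet) (hne : f ≠ e)
    {p : Fin 24 × Fin 24} (hp : p ∈ edgeL)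
    (hrep : eInt e = oseg (vpos (copyOf e) p.1) (vpos (copyOf e) p.2))
    (hsym : s(fIdx (epA e), fIdx (epB e)) = s(p.1, p.2)) :
    eInt e ∩ eInt f = ∅ ∨
      (eInt f ⊆ lineS (vpos (copyOf e) (mateF p).1) (vpos (copyOf e) (mateF p).2) ∧
       cz (dif (vpos (copyOf e) p.2) (vpos (copyOf e) p.1))
          (dif (vpos (copyOf e) (mateF p).2) (vpos (copyOf e) (mateF p).1)) ≠ 0) := by
  by_cases hc : copyOf f = copyOf e
  · obtain ⟨q, hq, hqrep, hqsym⟩ := base_rep f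
    rcases pairs' p hp q hq with rfl | hOK
    · exact absurd (edge_eq_of_sym f e hc (hqsym.trans hsym.symm)) hne
    · rw [pairOK, Bool.or_eq_true] at hOK
      rcases hOK with hsep | hmate
      · left
        rw [hrep, hqrep, hc]
        exact sepB_real hsep
      · simp only [Bool.and_eq_true, beq_iff_eq, bne_iff_ne, ne_eq, decide_eq_true_eq] at hmate
        obtain ⟨⟨hq1, hq2⟩, hq3⟩ := hmate
        right
        constructor
        · rw [hqrep, hc, ← hq1]
          exact oseg_subset_line _ _
        · rw [cz_vpos]
          rw [← hq1]
          exact_mod_cast hq3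
  · left
    apply Set.eq_empty_iff_forall_notMem.mpr
    rintro x ⟨hx1, hx2⟩
    exact cone_disj (fun hcc => hc hcc.symm) (eInt_cone e hx1) (eInt_cone f hx2)

noncomputable def curveF {k : ℕ} (e : (BG k).edgeSet) (t : ℝ) : Pt := seg (vt (epA e)) (vt (epB e)) t

noncomputable def drawing (k : ℕ) : OnePlanarDrawing (BG k) where
  vert := vt
  vert_inj := vt_inj
  curve := curveF
  curve_cont e := by
    apply Continuous.continuousOn
    unfold curveF seg
    fun_prop
  curve_inj e := by
    intro t1 _ t2 _ h
    have hne : vt (epA e) ≠ vt (epB e) :=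
      fun hcc => (BG k).ne_of_adj (ep_adj e) (vt_inj hcc)
    have h1 := congrArg Prod.fst h
    have h2 := congrArg Prod.snd h
    simp only [curveF, seg] at h1 h2
    by_cases hx : (vt (epB e)).1 = (vt (epA e)).1
    · have hy : (vt (epB e)).2 ≠ (vt (epA e)).2 :=
        fun hcc => hne (Prod.ext hx.symm hcc.symm)
      have hd : (vt (epB e)).2 - (vt (epA e)).2 ≠ 0 := sub_ne_zero.mpr hy
      exact mul_right_cancel₀ hd (by linarith)
    · have hd : (vt (epB e)).1 - (vt (epA e)).1 ≠ 0 := sub_ne_zero.mpr hx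
      exact mul_right_cancel₀ hd (by linarith)
  curve_ends e u v he := by
    have h0 : curveF e 0 = vt (epA e) := seg_zero _ _
    have h1 : curveF e 1 = vt (epB e) := seg_one _ _
    rw [h0, h1]
    have hs := ep_mk e
    rw [he] at hs
    rcases Sym2.eq_iff.mp hs with ⟨ha, hb⟩ | ⟨ha, hb⟩
    · rw [ha, hb]
    · rw [ha, hb]; exact Set.pair_comm _ _
  interior_avoid e t ht v := by
    intro hcurve
    have hmem : vt v ∈ eInt e := ⟨t, ht, hcurve⟩
    by_cases hv : v.val = 0
    · rw [vt_apex hv] at hmem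
      exact zero_not_cone _ (eInt_cone e hmem)
    · by_cases hcp : cpIdx v = copyOf e
      · obtain ⟨p, hp, hrep, hsym⟩ := base_rep e
        have hvpos : vt v = vpos (copyOf e) (fIdx v) := by rw [vt, hcp]
        have hab : vpos (copyOf e) p.1 ≠ vpos (copyOf e) p.2 :=
          fun hcc => edgeL_ne p hp (vpos_inj hcc)
        rw [hrep] at hmem
        by_cases h1 : fIdx v = p.1
        · rw [hvpos, h1] at hmem
          exact endpoint_not_mem_left hab hmem
        · by_cases h2 : fIdx v = p.2
          · rw [hvpos, h2] at hmem
            exact endpoint_not_mem_right hab hmem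
          · have hcz := avoid' p hp (fIdx v) h1 h2
            have : vt v ∉ oseg (vpos (copyOf e) p.1) (vpos (copyOf e) p.2) := by
              apply not_mem_oseg
              rw [hvpos, cz_vpos]
              exact_mod_cast hcz
            exact this hmem
      · exact cone_disj hcp (vt_mem_cone hv) (eInt_cone e hmem)
  one_cross e := by
    obtain ⟨p, hp, hrep, hsym⟩ := base_rep e
    intro x hx y hy
    obtain ⟨f, hfe, hxe, hxf⟩ := hx
    obtain ⟨g, hge, hye, hyg⟩ := hy
    have hxe' : x ∈ eInt e := hxe
    have hxf' : x ∈ eInt f := hxf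
    have hye' : y ∈ eInt e := hye
    have hyg' : y ∈ eInt g := hyg
    rcases witness e f hfe hp hrep hsym with hdisj | ⟨hlinef, hczf⟩
    · exact absurd (Set.mem_inter hxe' hxf') (hdisj ▸ Set.notMem_empty x)
    · rcases witness e g hge hp hrep hsym with hdisj | ⟨hlineg, hczg⟩
      · exact absurd (Set.mem_inter hye' hyg') (hdisj ▸ Set.notMem_empty y)
      · have hsubline : eInt e ⊆ lineS (vpos (copyOf e) p.1) (vpos (copyOf e) p.2) := by
          rw [hrep]; exact oseg_subset_line _ _
        exact line_line_subsingleton hczf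
          ⟨hsubline hxe', hlinef hxf'⟩ ⟨hsubline hye', hlineg hyg'⟩

-- degrees
lemma card_filter_Amat (x : Fin 24) :
    (Finset.univ.filter (fun j => Amat x j = true)).card = 7 := by
  rw [show Finset.univ.filter (fun j => Amat x j = true)
      = ((List.finRange 24).filter (Amat x)).toFinset from by rw [List.toFinset_filter]; simp,
    List.toFinset_card_of_nodup (List.nodup_finRange 24 |>.filter (Amat x)),
    ← List.countP_eq_length_filter]
  exact fact_deg x

def enc (k i : ℕ) (hi : i < k) (j : Fin 24) (hj : j ≠ 0) : Fin (nv k) :=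
  ⟨1 + 23*i + (j.val - 1), by
    have h24 := j.isLt
    simp only [nv]
    omega⟩

lemma enc_val_ne (k i : ℕ) (hi : i < k) (j : Fin 24) (hj : j ≠ 0) :
    (enc k i hi j hj).val ≠ 0 := by
  simp only [enc]
  omega

lemma fIdx_enc (k i : ℕ) (hi : i < k) (j : Fin 24) (hj : j ≠ 0) :
    fIdx (enc k i hi j hj) = j := by
  have hv : j.val ≠ 0 := fun h => hj (Fin.ext h)
  have h24 := j.isLt
  apply Fin.ext
  rw [fIdx, if_neg (enc_val_ne k i hi j hj)]
  show (1 + 23*i + (j.val - 1) - 1) % 23 + 1 = j.val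
  omega

lemma cpIdx_enc (k i : ℕ) (hi : i < k) (j : Fin 24) (hj : j ≠ 0) :
    cpIdx (enc k i hi j hj) = i := by
  have hv : j.val ≠ 0 := fun h => hj (Fin.ext h)
  have h24 := j.isLt
  simp only [cpIdx, enc]
  omega

lemma card_nbhd_nonapex {k : ℕ} (v : Fin (nv k)) (hv : v.val ≠ 0) :
    Nat.card ((BG k).neighborSet v) = 7 := by
  have hvk : cpIdx v < k := cpIdx_lt hv
  let F : {j : Fin 24 // Amat (fIdx v) j = true} → (BG k).neighborSet v := fun j =>
    if h : (j : Fin 24) = 0 then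
      ⟨⟨0, by simp only [nv]; omega⟩, by
        apply bg_adj_iff.mpr
        refine Or.inr (Or.inl ⟨rfl, hv, ?_⟩)
        rw [fact_symm]
        have := j.2
        rwa [h] at this⟩
    else
      ⟨enc k (cpIdx v) hvk j h, by
        apply bg_adj_iff.mpr
        refine Or.inr (Or.inr ⟨hv, enc_val_ne _ _ _ _ _, (cpIdx_enc _ _ _ _ _).symm, ?_⟩)
        rw [fIdx_enc]
        exact j.2⟩
  have hbij : Function.Bijective F := by
    constructor
    · intro j1 j2 heq
      by_cases h1 : (j1 : Fin 24) = 0 <;> by_cases h2 : (j2 : Fin 24) = 0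
      · exact Subtype.ext (h1.trans h2.symm)
      · exfalso
        have := congrArg (fun x : (BG k).neighborSet v => x.1.val) heq
        simp only [F, dif_pos h1, dif_neg h2] at this
        exact enc_val_ne k (cpIdx v) hvk j2 h2 this.symm
      · exfalso
        have := congrArg (fun x : (BG k).neighborSet v => x.1.val) heq
        simp only [F, dif_neg h1, dif_pos h2] at this
        exact enc_val_ne k (cpIdx v) hvk j1 h1 this
      · have := congrArg (fun x : (BG k).neighborSet v => x.1) heq
        simp only [F, dif_neg h1, dif_neg h2] at this
        apply Subtype.ext
        rw [← fIdx_enc k (cpIdx v) hvk j1 h1, ← fIdx_enc k (cpIdx v) hvk j2 h2, this]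
    · rintro ⟨w, hw⟩
      rcases bg_adj_iff.mp hw with ⟨h1,h2,h3⟩|⟨h1,h2,h3⟩|⟨h1,h2,h3,h4⟩
      · exact absurd h1 hv
      · refine ⟨⟨0, by rw [fact_symm]; exact h3⟩, ?_⟩
        simp only [F, dif_pos]
        exact Subtype.ext (Fin.ext (by simp only []; omega))
      · have hfw : fIdx w ≠ 0 := fIdx_ne h2
        refine ⟨⟨fIdx w, h4⟩, ?_⟩
        simp only [F, dif_neg hfw]
        apply Subtype.ext
        apply Fin.ext
        show 1 + 23*(cpIdx v) + ((fIdx w).val - 1) = w.val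
        have hd := decode h2
        have hfv : (fIdx w).val ≠ 0 := fun h => hfw (Fin.ext h)
        rw [← h3] at hd
        omega
  calc Nat.card ((BG k).neighborSet v)
      = Nat.card {j : Fin 24 // Amat (fIdx v) j = true} := (Nat.card_eq_of_bijective F hbij).symm
    _ = 7 := by
        rw [Nat.card_eq_fintype_card, Fintype.card_subtype, card_filter_Amat]

lemma card_nbhd_apex {k : ℕ} (hk : 0 < k) (v : Fin (nv k)) (hv : v.val = 0) :
    7 ≤ Nat.card ((BG k).neighborSet v) := by
  let F : {j : Fin 24 // Amat 0 j = true} → (BG k).neighborSet v := fun j =>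
    ⟨enc k 0 hk j (fun h => by
        have := j.2
        rw [h, fact_irrefl] at this
        exact Bool.false_ne_true this), by
      apply bg_adj_iff.mpr
      refine Or.inl ⟨hv, enc_val_ne _ _ _ _ _, ?_⟩
      rw [fIdx_enc]
      exact j.2⟩
  have hinj : Function.Injective F := by
    intro j1 j2 heq
    have := congrArg (fun x : (BG k).neighborSet v => fIdx x.1) heq
    simp only [F, fIdx_enc] at this
    exact Subtype.ext this
  have := Nat.card_le_card_of_injective F hinj
  rwa [Nat.card_eq_fintype_card, Fintype.card_subtype, card_filter_Amat] at this

-- matching bound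
lemma match_unique {k : ℕ} {M : (BG k).Subgraph} (hM : M.IsMatching)
    {e f : Sym2 (Fin (nv k))} (he : e ∈ M.edgeSet) (hf : f ∈ M.edgeSet)
    {x : Fin (nv k)} (hxe : x ∈ e) (hxf : x ∈ f) : e = f := by
  have hespec := Sym2.other_spec hxe
  have hfspec := Sym2.other_spec hxf
  have hadje : M.Adj x (Sym2.Mem.other hxe) := by
    rw [← SimpleGraph.Subgraph.mem_edgeSet, hespec]; exact he
  have hadjf : M.Adj x (Sym2.Mem.other hxf) := by
    rw [← SimpleGraph.Subgraph.mem_edgeSet, hfspec]; exact hf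
  obtain ⟨w, _, hu⟩ := hM (M.edge_vert hadje)
  rw [← hespec, ← hfspec, hu _ hadje, hu _ hadjf]

lemma matching_count {k : ℕ} (M : (BG k).Subgraph) (hM : M.IsMatching) :
    M.edgeSet.ncard ≤ 11*k + 1 := by
  classical
  have hfin : M.edgeSet.Finite := Set.toFinite _
  set T := hfin.toFinset with hT
  have hTmem : ∀ e, e ∈ T ↔ e ∈ M.edgeSet := fun e => hfin.mem_toFinset
  set z : Fin (nv k) := ⟨0, by simp only [nv]; omega⟩ with hz
  set κ : Sym2 (Fin (nv k)) → ℕ := fun e =>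
    if z ∈ e then k else max (cpIdx (Quot.out e).1) (cpIdx (Quot.out e).2) with hκ
  -- endpoints facts
  have hout : ∀ e : Sym2 (Fin (nv k)), s((Quot.out e).1, (Quot.out e).2) = e := by
    intro e; exact Quot.out_eq e
  have hadj : ∀ e ∈ T, (BG k).Adj (Quot.out e).1 (Quot.out e).2 := by
    intro e he
    have : e ∈ (BG k).edgeSet := M.edgeSet_subset ((hTmem e).mp he)
    rw [← hout e] at this
    exact this
  have hnonapex : ∀ e ∈ T, ¬ z ∈ e →
      (Quot.out e).1.val ≠ 0 ∧ (Quot.out e).2.val ≠ 0 ∧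
      cpIdx (Quot.out e).1 = cpIdx (Quot.out e).2 := by
    intro e he hze
    have h1 : (Quot.out e).1.val ≠ 0 := by
      intro h0
      apply hze
      rw [← hout e]
      exact Sym2.mem_iff.mpr (Or.inl (Fin.ext h0).symm)
    have h2 : (Quot.out e).2.val ≠ 0 := by
      intro h0
      apply hze
      rw [← hout e]
      exact Sym2.mem_iff.mpr (Or.inr (Fin.ext h0).symm)
    refine ⟨h1, h2, ?_⟩
    rcases bg_adj_iff.mp (hadj e he) with ⟨hh,_,_⟩|⟨hh,_,_⟩|⟨_,_,hh,_⟩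
    · exact absurd hh h1
    · exact absurd hh h2
    · exact hh
  have hκlt : ∀ e ∈ T, κ e ∈ Finset.range (k+1) := by
    intro e he
    rw [Finset.mem_range]
    by_cases hze : z ∈ e
    · simp only [hκ, if_pos hze]; omega
    · simp only [hκ, if_neg hze]
      obtain ⟨h1, h2, _⟩ := hnonapex e he hze
      have := cpIdx_lt h1
      have := cpIdx_lt h2
      omega
  rw [Set.ncard_eq_toFinset_card _ hfin, ← hT,
    Finset.card_eq_sum_card_fiberwise hκlt, Finset.sum_range_succ]
  -- apex fiber ≤ 1
  have hapex : (T.filter (fun e => κ e = k)).card ≤ 1 := by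
    apply Finset.card_le_one.mpr
    intro e he f hf
    rw [Finset.mem_filter] at he hf
    have hze : z ∈ e := by
      by_contra hze
      obtain ⟨h1, h2, _⟩ := hnonapex e he.1 hze
      have l1 := cpIdx_lt h1
      have l2 := cpIdx_lt h2
      have := he.2
      simp only [hκ, if_neg hze] at this
      omega
    have hzf : z ∈ f := by
      by_contra hzf
      obtain ⟨h1, h2, _⟩ := hnonapex f hf.1 hzf
      have l1 := cpIdx_lt h1
      have l2 := cpIdx_lt h2
      have := hf.2
      simp only [hκ, if_neg hzf] at this
      omega
    exact match_unique hM ((hTmem e).mp he.1) ((hTmem f).mp hf.1) hze hzf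
  -- copy fibers ≤ 11
  have hcopy : ∀ i ∈ Finset.range k, (T.filter (fun e => κ e = i)).card ≤ 11 := by
    intro i hi
    rw [Finset.mem_range] at hi
    set S := T.filter (fun e => κ e = i) with hS
    have hSz : ∀ e ∈ S, ¬ z ∈ e := by
      intro e he hze
      rw [hS, Finset.mem_filter] at he
      have := he.2
      simp only [hκ, if_pos hze] at this
      omega
    have hScp : ∀ e ∈ S, ∀ x, x ∈ e → x.val ≠ 0 ∧ cpIdx x = i := by
      intro e he x hx
      have heT : e ∈ T := (Finset.mem_filter.mp he).1
      obtain ⟨h1, h2, h3⟩ := hnonapex e heT (hSz e he)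
      have hκe := (Finset.mem_filter.mp he).2
      simp only [hκ, if_neg (hSz e he)] at hκe
      rw [← hout e] at hx
      rcases Sym2.mem_iff.mp hx with rfl | rfl
      · exact ⟨h1, by omega⟩
      · exact ⟨h2, by omega⟩
    set B := S.biUnion (fun e => Finset.univ.filter (· ∈ e)) with hB
    have hdisj : ∀ e ∈ S, ∀ f ∈ S, e ≠ f →
        Disjoint (Finset.univ.filter (· ∈ e)) (Finset.univ.filter (· ∈ f)) := by
      intro e he f hf hne
      rw [Finset.disjoint_left]
      intro x hxe hxf
      rw [Finset.mem_filter] at hxe hxf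
      exact hne (match_unique hM ((hTmem e).mp (Finset.mem_filter.mp he).1)
        ((hTmem f).mp (Finset.mem_filter.mp hf).1) hxe.2 hxf.2)
    have hcard2 : ∀ e ∈ S, (Finset.univ.filter (· ∈ e)).card = 2 := by
      intro e he
      have heT : e ∈ T := (Finset.mem_filter.mp he).1
      have hne := (BG k).ne_of_adj (hadj e heT)
      have hmem : ∀ x, x ∈ e ↔ (x = (Quot.out e).1 ∨ x = (Quot.out e).2) := by
        intro x
        conv_lhs => rw [← hout e]
        exact Sym2.mem_iff
      have : Finset.univ.filter (· ∈ e) = {(Quot.out e).1, (Quot.out e).2} := by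
        ext x
        simp only [Finset.mem_filter, Finset.mem_univ, true_and, Finset.mem_insert,
          Finset.mem_singleton]
        exact hmem x
      rw [this, Finset.card_insert_of_notMem (by simpa using hne), Finset.card_singleton]
    have hBcard : B.card = 2 * S.card := by
      rw [hB, Finset.card_biUnion hdisj]
      rw [Finset.sum_congr rfl hcard2, Finset.sum_const, smul_eq_mul, mul_comm]
    have hBsub : B ⊆ Finset.univ.filter (fun x : Fin (nv k) => x.val ≠ 0 ∧ cpIdx x = i) := by
      intro x hx
      rw [hB, Finset.mem_biUnion] at hx
      obtain ⟨e, he, hxe⟩ := hx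
      rw [Finset.mem_filter] at hxe
      rw [Finset.mem_filter]
      exact ⟨Finset.mem_univ x, hScp e he x hxe.2⟩
    have hfin23 : (Finset.univ.filter (fun x : Fin (nv k) => x.val ≠ 0 ∧ cpIdx x = i)).card ≤ 23 := by
      have := Finset.card_le_card_of_injOn
        (f := fun v : Fin (nv k) => (⟨(v.val - 1) % 23, Nat.mod_lt _ (by norm_num)⟩ : Fin 23))
        (s := Finset.univ.filter (fun x : Fin (nv k) => x.val ≠ 0 ∧ cpIdx x = i))
        (t := Finset.univ) (fun a _ => Finset.mem_univ _) ?_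
      · simpa using this
      · intro v1 h1 v2 h2 heq
        rw [Finset.coe_filter] at h1 h2
        simp only [Set.mem_setOf_eq] at h1 h2
        have e1 : (v1.val - 1) % 23 = (v2.val - 1) % 23 := by
          have := congrArg Fin.val heq
          simpa using this
        obtain ⟨hv1, hc1⟩ := h1.2
        obtain ⟨hv2, hc2⟩ := h2.2
        apply Fin.ext
        simp only [cpIdx] at hc1 hc2
        omega
    have : 2 * S.card ≤ 23 := by
      rw [← hBcard]
      exact le_trans (Finset.card_le_card hBsub) hfin23
    omega
  calc (∑ i ∈ Finset.range k, (T.filter (fun e => κ e = i)).card)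
        + (T.filter (fun e => κ e = k)).card
      ≤ (∑ _i ∈ Finset.range k, 11) + 1 :=
        Nat.add_le_add (Finset.sum_le_sum hcopy) hapex
    _ = 11*k + 1 := by rw [Finset.sum_const, smul_eq_mul, Finset.card_range, mul_comm]

end OP19

theorem stmt19 (N : ℕ) :
    ∃ (n : ℕ) (G : SimpleGraph (Fin n)),
      OnePlanar G ∧
      (∀ v, 7 ≤ Nat.card (G.neighborSet v)) ∧
      (∃ v, Nat.card (G.neighborSet v) = 7) ∧
      N ≤ n ∧
      ∀ M : G.Subgraph, M.IsMatching → (M.edgeSet.ncard : ℚ) ≤ (11 * (n : ℚ) + 12) / 23 := by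
  refine ⟨OP19.nv (N+1), OP19.BG (N+1), ⟨OP19.drawing (N+1)⟩, ?_, ?_, ?_, ?_⟩
  · intro v
    by_cases hv : v.val = 0
    · exact OP19.card_nbhd_apex (Nat.succ_pos N) v hv
    · exact le_of_eq (OP19.card_nbhd_nonapex v hv).symm
  · refine ⟨⟨1, ?_⟩, OP19.card_nbhd_nonapex _ ?_⟩
    · show 1 < OP19.nv (N+1)
      unfold OP19.nv
      omega
    · show (1:ℕ) ≠ 0
      omega
  · show N ≤ OP19.nv (N+1)
    unfold OP19.nv
    omega
  · intro M hM
    have hb := OP19.matching_count M hM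
    have h1 : (M.edgeSet.ncard : ℚ) ≤ ((11*(N+1)+1 : ℕ) : ℚ) := by exact_mod_cast hb
    refine h1.trans ?_
    have hnv : (OP19.nv (N+1) : ℚ) = 23*(N+1)+1 := by
      unfold OP19.nv
      push_cast
      ring
    rw [hnv, le_div_iff₀ (by norm_num : (0:ℚ) < 23)]
    push_cast
    ring_nf
    linarith
end
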